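/- arXiv:2603.28202 — 6 statements merged into one kernel-verified Lean document; each statement's English description precedes it below -/
import Mathlib

section
/- For every integer n > 4, there exists a 3-uniform hypergraph H on n vertices with minimum codegree δ₂(H) = ⌊3n/4⌋ − 2 that does not contain the square of a tight Hamilton cycle. -/
open Finset

section defs
def cnt3 (n c : ℕ) (e : Finset (Fin n)) : ℕ := (e.filter (fun v => v.val % 4 = c)).card

def IL (a d : ℕ) : ℕ := if a = d then 1 else 0

def BadT (n : ℕ) (e : Finset (Fin n)) : Prop :=
  ((∃ v ∈ e, v.val % 4 = 3) ∧ (2 ≤ cnt3 n 0 e ∨ 2 ≤ cnt3 n 1 e ∨ 2 ≤ cnt3 n 2 e)) ∨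
  (1 ≤ cnt3 n 0 e ∧ 1 ≤ cnt3 n 1 e ∧ 1 ≤ cnt3 n 2 e)

instance (n : ℕ) (e : Finset (Fin n)) : Decidable (BadT n e) := by
  unfold BadT; infer_instance

def EC (n : ℕ) : Finset (Finset (Fin n)) :=
  (Finset.univ.powersetCard 3).filter (fun e => ¬ BadT n e)

def BadL (a b c : ℕ) : Prop :=
  ((a = 3 ∨ b = 3 ∨ c = 3) ∧
    (2 ≤ IL a 0 + IL b 0 + IL c 0 ∨ 2 ≤ IL a 1 + IL b 1 + IL c 1 ∨
      2 ≤ IL a 2 + IL b 2 + IL c 2)) ∨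
  (1 ≤ IL a 0 + IL b 0 + IL c 0 ∧ 1 ≤ IL a 1 + IL b 1 + IL c 1 ∧
    1 ≤ IL a 2 + IL b 2 + IL c 2)

instance (a b c : ℕ) : Decidable (BadL a b c) := by unfold BadL; infer_instance

def kf (a b : ℕ) : ℕ :=
  if a = 3 then (if b = 3 then 0 else b) else if b = 3 then a else if a = b then 3 else 3 - a - b
end defs

lemma badL_arith (a b c : ℕ) (ha : a < 4) (hb : b < 4) (hc : c < 4) (h : c ≠ kf a b) :
    ¬ BadL a b c := by
  interval_cases a <;> interval_cases b <;> interval_cases c <;> revert h <;> decide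

lemma filter_triple {n : ℕ} (p : Fin n → Prop) [DecidablePred p] (x y z : Fin n)
    (hxy : x ≠ y) (hxz : x ≠ z) (hyz : y ≠ z) :
    (({x, y, z} : Finset (Fin n)).filter p).card =
      (if p x then 1 else 0) + (if p y then 1 else 0) + (if p z then 1 else 0) := by
  rw [Finset.card_filter]
  rw [show ({x, y, z} : Finset (Fin n)) = insert x (insert y {z}) from rfl]
  rw [Finset.sum_insert (by simp [hxy, hxz]), Finset.sum_insert (by simp [hyz]),
    Finset.sum_singleton, Nat.add_assoc]

lemma cnt3_triple {n : ℕ} (d : ℕ) (x y z : Fin n)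
    (hxy : x ≠ y) (hxz : x ≠ z) (hyz : y ≠ z) :
    cnt3 n d {x, y, z} = IL (x.val % 4) d + IL (y.val % 4) d + IL (z.val % 4) d := by
  unfold cnt3 IL
  rw [filter_triple _ x y z hxy hxz hyz]

lemma badT_iff_badL {n : ℕ} (x y z : Fin n)
    (hxy : x ≠ y) (hxz : x ≠ z) (hyz : y ≠ z) :
    BadT n {x, y, z} ↔ BadL (x.val % 4) (y.val % 4) (z.val % 4) := by
  unfold BadT BadL
  rw [cnt3_triple 0 x y z hxy hxz hyz, cnt3_triple 1 x y z hxy hxz hyz,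
    cnt3_triple 2 x y z hxy hxz hyz]
  simp only [Finset.mem_insert, Finset.mem_singleton, exists_eq_or_imp, exists_eq_left]

lemma mem_EC_iff {n : ℕ} {e : Finset (Fin n)} : e ∈ EC n ↔ e.card = 3 ∧ ¬ BadT n e := by
  simp [EC, Finset.mem_powersetCard]

lemma triple_mem_EC {n : ℕ} (u v w : Fin n) (huv : u ≠ v) (huw : u ≠ w) (hvw : v ≠ w)
    (h : ¬ BadL (u.val % 4) (v.val % 4) (w.val % 4)) : ({u, v, w} : Finset (Fin n)) ∈ EC n := by
  rw [mem_EC_iff]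
  refine ⟨Finset.card_eq_three.mpr ⟨u, v, w, huv, huw, hvw, rfl⟩, ?_⟩
  rw [badT_iff_badL u v w huv huw hvw]; exact h

lemma class_card_le (n k : ℕ) :
    ((Finset.univ : Finset (Fin n)).filter fun v => v.val % 4 = k).card ≤ (n + 3) / 4 := by
  rw [← Finset.card_range ((n + 3) / 4)]
  apply Finset.card_le_card_of_injOn (fun v => v.val / 4) (t := Finset.range ((n + 3) / 4))
  · intro v hv
    simp only [Finset.mem_coe, Finset.mem_filter] at hv
    have := v.isLt
    simp only [Finset.mem_coe, Finset.mem_range]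
    omega
  · intro v hv w hw h
    simp only [Finset.mem_coe, Finset.mem_filter] at hv hw
    have h' : v.val / 4 = w.val / 4 := h
    have : v.val = w.val := by omega
    exact Fin.val_injective this

open Fin.NatCast in
lemma class0_card_ge (n : ℕ) (hn : 4 < n) :
    (n + 3) / 4 ≤ ((Finset.univ : Finset (Fin n)).filter fun v => v.val % 4 = 0).card := by
  haveI : NeZero n := ⟨by omega⟩
  rw [← Finset.card_range ((n + 3) / 4)]
  refine Finset.card_le_card_of_injOn (fun m => ((4 * m : ℕ) : Fin n)) ?_ ?_
  · intro m hm
    simp only [Finset.mem_coe, Finset.mem_range] at hm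
    have h4 : 4 * m < n := by omega
    simp only [Finset.mem_coe, Finset.mem_filter, Finset.mem_univ, true_and, Fin.val_cast_of_lt h4]
    omega
  · intro a ha b hb h
    simp only [Finset.mem_coe, Finset.mem_range] at ha hb
    have h4a : 4 * a < n := by omega
    have h4b : 4 * b < n := by omega
    have := congrArg Fin.val h
    rw [Fin.val_cast_of_lt h4a, Fin.val_cast_of_lt h4b] at this
    omega

lemma codeg_lower {n : ℕ} (hn : 4 < n) (u v : Fin n) (huv : u ≠ v) :
    3 * n / 4 - 2 ≤ (Finset.univ.filter fun w => ({u, v, w} : Finset (Fin n)) ∈ EC n).card := by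
  set k := kf (u.val % 4) (v.val % 4) with hk
  set S : Finset (Fin n) :=
    insert u (insert v (Finset.univ.filter fun w : Fin n => w.val % 4 = k)) with hS
  have hsub : Finset.univ \ S ⊆
      (Finset.univ.filter fun w => ({u, v, w} : Finset (Fin n)) ∈ EC n) := by
    intro w hw
    simp only [hS, Finset.mem_sdiff, Finset.mem_insert, Finset.mem_filter, Finset.mem_univ,
      true_and, not_or] at hw
    obtain ⟨hwu, hwv, hwk⟩ := hw
    simp only [Finset.mem_filter, Finset.mem_univ, true_and]
    exact triple_mem_EC u v w huv (Ne.symm hwu) (Ne.symm hwv)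
      (badL_arith _ _ _ (Nat.mod_lt _ (by omega)) (Nat.mod_lt _ (by omega))
        (Nat.mod_lt _ (by omega)) hwk)
  have h1 : (Finset.univ \ S).card = n - S.card := by
    rw [Finset.card_sdiff_of_subset (Finset.subset_univ S), Finset.card_univ, Fintype.card_fin]
  have h2 : S.card ≤ (n + 3) / 4 + 2 := by
    calc S.card ≤ (insert v (Finset.univ.filter fun w : Fin n => w.val % 4 = k)).card + 1 :=
          Finset.card_insert_le _ _
      _ ≤ ((Finset.univ.filter fun w : Fin n => w.val % 4 = k).card + 1) + 1 := by
          have := Finset.card_insert_le v (Finset.univ.filter fun w : Fin n => w.val % 4 = k)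
          omega
      _ ≤ (n + 3) / 4 + 2 := by have := class_card_le n k; omega
  have h3 := Finset.card_le_card hsub
  omega

lemma codeg_exact {n : ℕ} (hn : 4 < n) (u v : Fin n) (h1 : u.val % 4 = 1) (h2 : v.val % 4 = 2) :
    (Finset.univ.filter fun w =>
      ({u, v, w} : Finset (Fin n)) ∈ EC n).card = 3 * n / 4 - 2 := by
  have huv : u ≠ v := by intro h; rw [h, h2] at h1; omega
  have hC0 : ((Finset.univ : Finset (Fin n)).filter fun w => w.val % 4 = 0).card = (n + 3) / 4 :=
    le_antisymm (class_card_le n 0) (class0_card_ge n hn)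
  set S : Finset (Fin n) :=
    insert u (insert v (Finset.univ.filter fun w : Fin n => w.val % 4 = 0)) with hS
  have hfilter : (Finset.univ.filter fun w => ({u, v, w} : Finset (Fin n)) ∈ EC n) =
      Finset.univ \ S := by
    ext w
    simp only [Finset.mem_filter, Finset.mem_univ, true_and, hS, Finset.mem_sdiff,
      Finset.mem_insert, not_or]
    constructor
    · intro hw
      rw [mem_EC_iff] at hw
      obtain ⟨hcard, hbad⟩ := hw
      have hwu : ¬ (w = u) := by
        intro h
        rw [h] at hcard
        have he : ({u, v, u} : Finset (Fin n)) = {u, v} := by ext x; simp; tauto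
        rw [he, Finset.card_pair huv] at hcard
        omega
      have hwv : ¬ (w = v) := by
        intro h
        rw [h] at hcard
        have he : ({u, v, v} : Finset (Fin n)) = {u, v} := by ext x; simp only [Finset.mem_insert, Finset.mem_singleton]; tauto
        rw [he, Finset.card_pair huv] at hcard
        omega
      refine ⟨hwu, hwv, ?_⟩
      intro hw0
      apply hbad
      have huw : u ≠ w := fun h => hwu h.symm
      have hvw : v ≠ w := fun h => hwv h.symm
      rw [badT_iff_badL u v w huv huw hvw, h1, h2, hw0]
      decide
    · rintro ⟨hwu, hwv, hw0⟩
      have huw : u ≠ w := fun h => hwu h.symm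
      have hvw : v ≠ w := fun h => hwv h.symm
      apply triple_mem_EC u v w huv huw hvw
      apply badL_arith _ _ _ (Nat.mod_lt _ (by omega)) (Nat.mod_lt _ (by omega))
        (Nat.mod_lt _ (by omega))
      rw [h1, h2]
      simpa [kf] using hw0
  rw [hfilter]
  have hvnot : v ∉ (Finset.univ.filter fun w : Fin n => w.val % 4 = 0) := by
    simp only [Finset.mem_filter, Finset.mem_univ, true_and]
    omega
  have hunot : u ∉ insert v (Finset.univ.filter fun w : Fin n => w.val % 4 = 0) := by
    simp only [Finset.mem_insert, Finset.mem_filter, Finset.mem_univ, true_and]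
    push_neg
    exact ⟨huv, by omega⟩
  have hScard : S.card = (n + 3) / 4 + 2 := by
    rw [hS, Finset.card_insert_of_notMem hunot, Finset.card_insert_of_notMem hvnot, hC0]
  rw [Finset.card_sdiff_of_subset (Finset.subset_univ S), Finset.card_univ, Fintype.card_fin, hScard]
  omega

lemma badL_two (a : ℕ) (ha : a < 3) : BadL a a 3 := by
  interval_cases a <;> decide

lemma badL_rainbow (a b c : ℕ) (ha : a < 3) (hb : b < 3) (hc : c < 3)
    (hab : a ≠ b) (hac : a ≠ c) (hbc : b ≠ c) : BadL a b c := by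
  interval_cases a <;> interval_cases b <;> interval_cases c <;> first | decide | omega

lemma bad_window {n : ℕ} (W : Finset (Fin n)) (hE : ∀ t ∈ Finset.powersetCard 3 W, t ∈ EC n)
    (p q r s : Fin n) (hp : p ∈ W) (hq : q ∈ W) (hr : r ∈ W) (hs : s ∈ W)
    (hpq : p ≠ q) (hpr : p ≠ r) (hps : p ≠ s) (hqr : q ≠ r) (hqs : q ≠ s) (hrs : r ≠ s)
    (lp : p.val % 4 = 3) (lq : q.val % 4 ≠ 3) (lr : r.val % 4 ≠ 3) (ls : s.val % 4 ≠ 3) :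
    False := by
  have haq : q.val % 4 < 3 := by have := Nat.mod_lt q.val (show 0 < 4 by omega); omega
  have har : r.val % 4 < 3 := by have := Nat.mod_lt r.val (show 0 < 4 by omega); omega
  have has : s.val % 4 < 3 := by have := Nat.mod_lt s.val (show 0 < 4 by omega); omega
  have key : ∀ x y : Fin n, x ∈ W → y ∈ W → x ≠ y → x ≠ p → y ≠ p →
      x.val % 4 < 3 → x.val % 4 = y.val % 4 → False := by
    intro x y hx hy hxy hxp hyp hx3 heq
    have ht : ({x, y, p} : Finset (Fin n)) ∈ Finset.powersetCard 3 W := by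
      rw [Finset.mem_powersetCard]
      refine ⟨?_, Finset.card_eq_three.mpr ⟨x, y, p, hxy, hxp, hyp, rfl⟩⟩
      exact Finset.insert_subset_iff.mpr ⟨hx, Finset.insert_subset_iff.mpr
        ⟨hy, Finset.singleton_subset_iff.mpr hp⟩⟩
    have hbad := (mem_EC_iff.mp (hE _ ht)).2
    apply hbad
    rw [badT_iff_badL x y p hxy hxp hyp, lp, ← heq]
    exact badL_two _ hx3
  by_cases h1 : q.val % 4 = r.val % 4
  · exact key q r hq hr hqr (Ne.symm hpq) (Ne.symm hpr) haq h1
  by_cases h2 : q.val % 4 = s.val % 4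
  · exact key q s hq hs hqs (Ne.symm hpq) (Ne.symm hps) haq h2
  by_cases h3 : r.val % 4 = s.val % 4
  · exact key r s hr hs hrs (Ne.symm hpr) (Ne.symm hps) har h3
  have ht : ({q, r, s} : Finset (Fin n)) ∈ Finset.powersetCard 3 W := by
    rw [Finset.mem_powersetCard]
    refine ⟨?_, Finset.card_eq_three.mpr ⟨q, r, s, hqr, hqs, hrs, rfl⟩⟩
    exact Finset.insert_subset_iff.mpr ⟨hq, Finset.insert_subset_iff.mpr
      ⟨hr, Finset.singleton_subset_iff.mpr hs⟩⟩
  have hbad := (mem_EC_iff.mp (hE _ ht)).2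
  apply hbad
  rw [badT_iff_badL q r s hqr hqs hrs]
  exact badL_rainbow _ _ _ haq har has h1 h2 h3

lemma no_square {n : ℕ} (hn : 4 < n) :
    ¬ ∃ f : ZMod n ≃ Fin n, ∀ i : ZMod n,
        ∀ t ∈ Finset.powersetCard 3
          ({f i, f (i + 1), f (i + 2), f (i + 3)} : Finset (Fin n)), t ∈ EC n := by
  haveI : NeZero n := ⟨by omega⟩
  rintro ⟨f, hf⟩
  set D : ZMod n → ℕ := fun j => if (f j).val % 4 = 3 then 1 else 0 with hD
  have hD1 : ∀ j, D j ≤ 1 := by intro j; rw [hD]; dsimp only; split <;> omega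
  have hDcases : ∀ j, ((f j).val % 4 = 3 ∧ D j = 1) ∨ ((f j).val % 4 ≠ 3 ∧ D j = 0) := by
    intro j; by_cases h : (f j).val % 4 = 3
    · left; exact ⟨h, by rw [hD]; simp [h]⟩
    · right; exact ⟨h, by rw [hD]; simp [h]⟩
  -- numerals 0,1,2,3 in ZMod n are pairwise distinct
  have hcast : ∀ a b : ℕ, a < 4 → b < 4 → ((a : ZMod n) = (b : ZMod n)) → a = b := by
    intro a b ha hb h
    have := congrArg ZMod.val h
    rwa [ZMod.val_natCast_of_lt (by omega), ZMod.val_natCast_of_lt (by omega)] at this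
  have hadd : ∀ (i : ZMod n) (a b : ℕ), a < 4 → b < 4 → a ≠ b →
      f (i + (a : ZMod n)) ≠ f (i + (b : ZMod n)) := by
    intro i a b ha hb hab h
    exact hab (hcast a b ha hb (add_left_cancel (f.injective h)))
  -- step: window count is never 1
  have hstep : ∀ i : ZMod n, D i + D (i + 1) + D (i + 2) + D (i + 3) ≠ 1 := by
    intro i hci
    have e0 : i = i + ((0 : ℕ) : ZMod n) := by push_cast; ring
    have e1 : i + 1 = i + ((1 : ℕ) : ZMod n) := by push_cast; ring
    have e2 : i + 2 = i + ((2 : ℕ) : ZMod n) := by push_cast; ring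
    have e3 : i + 3 = i + ((3 : ℕ) : ZMod n) := by push_cast; ring
    have m01 := hadd i 0 1 (by omega) (by omega) (by omega)
    rw [← e0, ← e1] at m01
    have m02 := hadd i 0 2 (by omega) (by omega) (by omega)
    rw [← e0, ← e2] at m02
    have m03 := hadd i 0 3 (by omega) (by omega) (by omega)
    rw [← e0, ← e3] at m03
    have m12 := hadd i 1 2 (by omega) (by omega) (by omega)
    rw [← e1, ← e2] at m12
    have m13 := hadd i 1 3 (by omega) (by omega) (by omega)
    rw [← e1, ← e3] at m13
    have m23 := hadd i 2 3 (by omega) (by omega) (by omega)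
    rw [← e2, ← e3] at m23
    have w0 : f i ∈ ({f i, f (i + 1), f (i + 2), f (i + 3)} : Finset (Fin n)) := by simp
    have w1 : f (i + 1) ∈ ({f i, f (i + 1), f (i + 2), f (i + 3)} : Finset (Fin n)) := by simp
    have w2 : f (i + 2) ∈ ({f i, f (i + 1), f (i + 2), f (i + 3)} : Finset (Fin n)) := by simp
    have w3 : f (i + 3) ∈ ({f i, f (i + 1), f (i + 2), f (i + 3)} : Finset (Fin n)) := by simp
    rcases hDcases i with ⟨l0, d0⟩ | ⟨l0, d0⟩ <;>
      rcases hDcases (i + 1) with ⟨l1, d1⟩ | ⟨l1, d1⟩ <;>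
      rcases hDcases (i + 2) with ⟨l2, d2⟩ | ⟨l2, d2⟩ <;>
      rcases hDcases (i + 3) with ⟨l3, d3⟩ | ⟨l3, d3⟩
    · omega
    · omega
    · omega
    · omega
    · omega
    · omega
    · omega
    · exact bad_window _ (hf i) (f i) (f (i + 1)) (f (i + 2)) (f (i + 3))
        w0 w1 w2 w3 m01 m02 m03 m12 m13 m23 l0 l1 l2 l3
    · omega
    · omega
    · omega
    · exact bad_window _ (hf i) (f (i + 1)) (f i) (f (i + 2)) (f (i + 3))
        w1 w0 w2 w3 (Ne.symm m01) m12 m13 m02 m03 m23 l1 l0 l2 l3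
    · omega
    · exact bad_window _ (hf i) (f (i + 2)) (f i) (f (i + 1)) (f (i + 3))
        w2 w0 w1 w3 (Ne.symm m02) (Ne.symm m12) m23 m01 m03 m13 l2 l0 l1 l3
    · exact bad_window _ (hf i) (f (i + 3)) (f i) (f (i + 1)) (f (i + 2))
        w3 w0 w1 w2 (Ne.symm m03) (Ne.symm m13) (Ne.symm m23) m01 m02 m12 l3 l0 l1 l2
    · omega
  -- continuity of the window count
  have hmono : ∀ i : ZMod n, D i + D (i + 1) + D (i + 2) + D (i + 3) = 0 →
      D (i + 1) + D (i + 1 + 1) + D (i + 1 + 2) + D (i + 1 + 3) = 0 := by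
    intro i h0
    have e1 : i + 1 + 1 = i + 2 := by ring
    have e2 : i + 1 + 2 = i + 3 := by ring
    rw [e1, e2]
    have := hstep (i + 1)
    rw [e1, e2] at this
    have h4 := hD1 (i + 1 + 3)
    omega
  -- if some window count is 0, all are 0
  have hall : (∃ i : ZMod n, D i + D (i + 1) + D (i + 2) + D (i + 3) = 0) →
      ∀ j : ZMod n, D j + D (j + 1) + D (j + 2) + D (j + 3) = 0 := by
    rintro ⟨i0, h0⟩ j
    have key : ∀ m : ℕ, D (i0 + (m : ZMod n)) + D (i0 + (m : ZMod n) + 1) +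
        D (i0 + (m : ZMod n) + 2) + D (i0 + (m : ZMod n) + 3) = 0 := by
      intro m
      induction m with
      | zero => simpa using h0
      | succ k ih =>
        have e : ((k + 1 : ℕ) : ZMod n) = ((k : ℕ) : ZMod n) + 1 := by push_cast; ring
        rw [e, ← add_assoc]
        exact hmono _ ih
    obtain ⟨m, hm⟩ : ∃ m : ℕ, (m : ZMod n) = j - i0 :=
      ⟨(j - i0).val, ZMod.natCast_rightInverse (j - i0)⟩
    have := key m
    rw [hm] at this
    rwa [show i0 + (j - i0) = j by ring] at this
  by_cases hex : ∃ i : ZMod n, D i + D (i + 1) + D (i + 2) + D (i + 3) = 0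
  · -- impossible: the vertex with value 3 is in some window
    set v3 : Fin n := ⟨3, by omega⟩ with hv3
    have hD3 : D (f.symm v3) = 1 := by
      rw [hD]
      simp only [Equiv.apply_symm_apply]
      norm_num [hv3]
    have := hall hex (f.symm v3)
    omega
  · push_neg at hex
    have h2 : ∀ i : ZMod n, 2 ≤ D i + D (i + 1) + D (i + 2) + D (i + 3) := by
      intro i
      have := hex i
      have := hstep i
      omega
    have hsum : 2 * n ≤ ∑ i : ZMod n, (D i + D (i + 1) + D (i + 2) + D (i + 3)) := by
      calc 2 * n = ∑ _i : ZMod n, 2 := by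
            rw [Finset.sum_const, Finset.card_univ, ZMod.card n, smul_eq_mul]; ring
        _ ≤ _ := Finset.sum_le_sum (fun i _ => h2 i)
    have hshift : ∀ t : ZMod n, ∑ i : ZMod n, D (i + t) = ∑ i : ZMod n, D i := by
      intro t
      exact Fintype.sum_equiv (Equiv.addRight t) _ _ (fun i => rfl)
    have hsplit : ∑ i : ZMod n, (D i + D (i + 1) + D (i + 2) + D (i + 3)) =
        4 * ∑ i : ZMod n, D i := by
      rw [Finset.sum_add_distrib, Finset.sum_add_distrib, Finset.sum_add_distrib,
        hshift 1, hshift 2, hshift 3]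
      ring
    have hcard : ∑ i : ZMod n, D i =
        (Finset.univ.filter fun i : ZMod n => (f i).val % 4 = 3).card := by
      rw [Finset.card_filter, hD]
    have hle : (Finset.univ.filter fun i : ZMod n => (f i).val % 4 = 3).card ≤ n / 4 := by
      rw [← Finset.card_range (n / 4)]
      apply Finset.card_le_card_of_injOn (fun i => (f i).val / 4)
      · intro i hi
        simp only [Finset.mem_coe, Finset.mem_filter] at hi
        have := (f i).isLt
        simp only [Finset.mem_coe, Finset.mem_range]
        omega
      · intro i hi j hj h
        simp only [Finset.mem_coe, Finset.mem_filter] at hi hj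
        have h' : (f i).val / 4 = (f j).val / 4 := h
        have : (f i).val = (f j).val := by omega
        exact f.injective (Fin.val_injective this)
    omega

/-- For every `n > 4` there is a 3-graph on `n` vertices with minimum codegree
`⌊3n/4⌋ - 2` containing no square of a tight Hamilton cycle. -/
theorem extremal_construction (n : ℕ) (hn : 4 < n) :
    ∃ E : Finset (Finset (Fin n)),
      (∀ e ∈ E, e.card = 3) ∧
      (∀ u v : Fin n, u ≠ v →
        3 * n / 4 - 2 ≤ (Finset.univ.filter fun w => ({u, v, w} : Finset (Fin n)) ∈ E).card) ∧
      (∃ u v : Fin n, u ≠ v ∧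
        (Finset.univ.filter fun w => ({u, v, w} : Finset (Fin n)) ∈ E).card = 3 * n / 4 - 2) ∧
      ¬ ∃ f : ZMod n ≃ Fin n, ∀ i : ZMod n,
          ∀ t ∈ Finset.powersetCard 3
            ({f i, f (i + 1), f (i + 2), f (i + 3)} : Finset (Fin n)), t ∈ E := by
  refine ⟨EC n, ?_, ?_, ?_, ?_⟩
  · intro e he
    exact (mem_EC_iff.mp he).1
  · intro u v huv
    exact codeg_lower hn u v huv
  · refine ⟨⟨1, by omega⟩, ⟨2, by omega⟩, by simp [Fin.ext_iff], ?_⟩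
    exact codeg_exact hn _ _ (by norm_num) (by norm_num)
  · exact no_square hn
end

section
/- Let H be a 3-graph on n vertices with δ₂(H) > 7n/9. Then for every vertex v of H, there is no properly coloured copy of C₄ in the link graph L(v), where each edge {u,w} of L(v) is coloured by the tight component of 𝒯(H) containing the copies of K₄³ extending the edge {u,v,w}. (Properly coloured means consecutive edges of the 4-cycle have distinct colours.) -/
set_option maxHeartbeats 1000000
set_option linter.unusedSectionVars false


open Finset

/-- The tetrahedral 4-graph of a 3-graph `E`: all 4-sets of vertices all of whose
3-element subsets are edges of `E`. -/
def tet {V : Type*} [Fintype V] [DecidableEq V] (E : Finset (Finset V)) :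
    Finset (Finset V) :=
  (Finset.powersetCard 4 Finset.univ).filter fun K =>
    ∀ t ∈ Finset.powersetCard 3 K, t ∈ E

/-- There is a tight walk in the 4-graph `T` from the edge `e` to the edge `f`:
a vertex sequence starting with the vertices of `e`, ending with the vertices of
`f`, in which every 4 consecutive vertices form an edge of `T`. -/
def TightConn {V : Type*} [DecidableEq V] (T : Finset (Finset V))
    (e f : Finset V) : Prop :=
  ∃ l : List V, 4 ≤ l.length ∧ (l.take 4).toFinset = e ∧
    (l.drop (l.length - 4)).toFinset = f ∧
    ∀ i, i + 4 ≤ l.length → ((l.drop i).take 4).toFinset ∈ T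

/-- The edges `e` and `f` of the 3-graph `E` lie in the same tight component of
the tetrahedral graph `tet E`: some tetrahedron containing `e` is tightly
connected to some tetrahedron containing `f`. -/
def EdgeConn {V : Type*} [Fintype V] [DecidableEq V] (E : Finset (Finset V))
    (e f : Finset V) : Prop :=
  ∃ K K', K ∈ tet E ∧ K' ∈ tet E ∧ e ⊆ K ∧ f ⊆ K' ∧ TightConn (tet E) K K'

/-- The edge `e` of the 3-graph `E` lies in the tight component of the
tetrahedron `K`. -/
def EdgeInComp {V : Type*} [Fintype V] [DecidableEq V] (E : Finset (Finset V))
    (e K : Finset V) : Prop :=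
  ∃ K', K' ∈ tet E ∧ e ⊆ K' ∧ TightConn (tet E) K' K

section Aux

variable {V : Type*} [Fintype V] [DecidableEq V]

lemma memE_of_eq {E : Finset (Finset V)} {s t : Finset V} (h : s ∈ E) (e : t = s) :
    t ∈ E := by rw [e]; exact h

lemma distinct3 {x y z : V} (h : ({x, y, z} : Finset V).card = 3) :
    x ≠ y ∧ x ≠ z ∧ y ≠ z := by
  refine ⟨?_, ?_, ?_⟩ <;> rintro rfl
  · rw [show ({x, x, z} : Finset V) = {x, z} by
      ext u; simp only [Finset.mem_insert, Finset.mem_singleton]; tauto] at h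
    have := Finset.card_insert_le x ({z} : Finset V)
    rw [Finset.card_singleton] at this
    omega
  · rw [show ({x, y, x} : Finset V) = {x, y} by
      ext u; simp only [Finset.mem_insert, Finset.mem_singleton]; tauto] at h
    have := Finset.card_insert_le x ({y} : Finset V)
    rw [Finset.card_singleton] at this
    omega
  · rw [show ({x, y, y} : Finset V) = {x, y} by
      ext u; simp only [Finset.mem_insert, Finset.mem_singleton]; tauto] at h
    have := Finset.card_insert_le x ({y} : Finset V)
    rw [Finset.card_singleton] at this
    omega

lemma tet_builder (E : Finset (Finset V)) (h3 : ∀ e ∈ E, e.card = 3) {p q r s : V}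
    (h1 : ({p, q, r} : Finset V) ∈ E) (h2 : ({p, q, s} : Finset V) ∈ E)
    (h3' : ({p, r, s} : Finset V) ∈ E) (h4 : ({q, r, s} : Finset V) ∈ E) :
    ({p, q, r, s} : Finset V) ∈ tet E := by
  obtain ⟨hpq, hpr, hqr⟩ := distinct3 (h3 _ h1)
  obtain ⟨-, hps, hqs⟩ := distinct3 (h3 _ h2)
  obtain ⟨-, -, hrs⟩ := distinct3 (h3 _ h3')
  have hcard : ({p, q, r, s} : Finset V).card = 4 := by
    have hqrs : ({q, r, s} : Finset V).card = 3 := h3 _ h4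
    rw [Finset.card_insert_of_notMem (by simp [hpq, hpr, hps]), hqrs]
  rw [tet, Finset.mem_filter, Finset.mem_powersetCard]
  refine ⟨⟨Finset.subset_univ _, hcard⟩, ?_⟩
  intro t ht
  rw [Finset.mem_powersetCard] at ht
  obtain ⟨hsub, ht3⟩ := ht
  have hne : ¬ (p ∈ t ∧ q ∈ t ∧ r ∈ t ∧ s ∈ t) := by
    rintro ⟨hp, hq, hr, hs⟩
    have hKt : ({p, q, r, s} : Finset V) ⊆ t := by
      intro u hu
      simp only [Finset.mem_insert, Finset.mem_singleton] at hu
      rcases hu with rfl | rfl | rfl | rfl <;> assumption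
    have := Finset.card_le_card hKt
    omega
  have hcard3 : ∀ (u₁ u₂ u₃ : V), t ⊆ {u₁, u₂, u₃} → t = {u₁, u₂, u₃} := by
    intro u₁ u₂ u₃ hsub'
    refine Finset.eq_of_subset_of_card_le hsub' ?_
    have h1' := Finset.card_insert_le u₁ ({u₂, u₃} : Finset V)
    have h2' := Finset.card_insert_le u₂ ({u₃} : Finset V)
    have h3'' := Finset.card_singleton u₃
    omega
  by_cases hp : p ∈ t
  · by_cases hq : q ∈ t
    · by_cases hr : r ∈ t
      · have hs : s ∉ t := fun hs => hne ⟨hp, hq, hr, hs⟩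
        rw [hcard3 p q r (fun u hu => by
          have hu' := hsub hu
          simp only [Finset.mem_insert, Finset.mem_singleton] at hu' ⊢
          rcases hu' with rfl | rfl | rfl | rfl
          · tauto
          · tauto
          · tauto
          · exact absurd hu hs)]
        exact h1
      · rw [hcard3 p q s (fun u hu => by
          have hu' := hsub hu
          simp only [Finset.mem_insert, Finset.mem_singleton] at hu' ⊢
          rcases hu' with rfl | rfl | rfl | rfl
          · tauto
          · tauto
          · exact absurd hu hr
          · tauto)]
        exact h2
    · rw [hcard3 p r s (fun u hu => by
        have hu' := hsub hu
        simp only [Finset.mem_insert, Finset.mem_singleton] at hu' ⊢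
        rcases hu' with rfl | rfl | rfl | rfl
        · tauto
        · exact absurd hu hq
        · tauto
        · tauto)]
      exact h3'
  · rw [hcard3 q r s (fun u hu => by
      have hu' := hsub hu
      simp only [Finset.mem_insert, Finset.mem_singleton] at hu' ⊢
      rcases hu' with rfl | rfl | rfl | rfl
      · exact absurd hu hp
      · tauto
      · tauto
      · tauto)]
    exact h4

lemma tight_step (T : Finset (Finset V)) (p q r s w : V)
    (h1 : ({p, q, r, s} : Finset V) ∈ T) (h2 : ({q, r, s, w} : Finset V) ∈ T) :
    TightConn T {p, q, r, s} {q, r, s, w} := by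
  refine ⟨[p, q, r, s, w], by simp, by simp, by simp, ?_⟩
  intro i hi
  have hi' : i ≤ 1 := by simp only [List.length_cons, List.length_nil] at hi; omega
  interval_cases i
  · simpa using h1
  · simpa using h2

lemma edge_conn_step (E : Finset (Finset V)) {p q r s w : V} {e f : Finset V}
    (t1 : ({p, q, r, s} : Finset V) ∈ tet E) (t2 : ({q, r, s, w} : Finset V) ∈ tet E)
    (he : e ⊆ {p, q, r, s}) (hf : f ⊆ {q, r, s, w}) : EdgeConn E e f :=
  ⟨_, _, t1, t2, he, hf, tight_step _ p q r s w t1 t2⟩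

lemma four_cover_card {A B1 B2 B3 B4 : Finset V}
    (h : (univ : Finset V) ⊆ A ∪ B1 ∪ B2 ∪ B3 ∪ B4) :
    Fintype.card V ≤ A.card + B1.card + B2.card + B3.card + B4.card := by
  have h0 := Finset.card_le_card h
  rw [Finset.card_univ] at h0
  have u1 := Finset.card_union_le A B1
  have u2 := Finset.card_union_le (A ∪ B1) B2
  have u3 := Finset.card_union_le (A ∪ B1 ∪ B2) B3
  have u4 := Finset.card_union_le (A ∪ B1 ∪ B2 ∪ B3) B4
  omega

end Aux

/-- If `δ₂(H) > 7n/9`, then for every vertex `v` there is no properly coloured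
copy of `C₄` in the link graph `L(v)`, with edges of `L(v)` coloured by the
tight component of `𝒯(H)` containing the extensions of the corresponding edge. -/
theorem no_properly_coloured_C4 {V : Type*} [Fintype V] [DecidableEq V]
    (E : Finset (Finset V)) (h3 : ∀ e ∈ E, e.card = 3)
    (hδ : ∀ u v : V, u ≠ v →
      (7 : ℝ) * Fintype.card V / 9 <
        ((Finset.univ.filter fun w => ({u, v, w} : Finset V) ∈ E).card : ℝ)) :
    ¬ ∃ v a b c d : V, ({a, b, c, d} : Finset V).card = 4 ∧ v ∉ ({a, b, c, d} : Finset V) ∧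
      ({a, v, b} : Finset V) ∈ E ∧ ({b, v, c} : Finset V) ∈ E ∧
      ({c, v, d} : Finset V) ∈ E ∧ ({d, v, a} : Finset V) ∈ E ∧
      ¬ EdgeConn E {a, v, b} {b, v, c} ∧ ¬ EdgeConn E {b, v, c} {c, v, d} ∧
      ¬ EdgeConn E {c, v, d} {d, v, a} ∧ ¬ EdgeConn E {d, v, a} {a, v, b} := by
  rintro ⟨v, a, b, c, d, hcard4, hvn, he1, he2, he3, he4, hn12, hn23, hn34, hn41⟩
  obtain ⟨hav, hab, hvb⟩ := distinct3 (h3 _ he1)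
  obtain ⟨hbv, hbc, hvc⟩ := distinct3 (h3 _ he2)
  obtain ⟨hcv, hcd, hvd⟩ := distinct3 (h3 _ he3)
  obtain ⟨hdv, hda, hva⟩ := distinct3 (h3 _ he4)
  -- bound on the "non-neighbourhood" of each pair
  have hB : ∀ p q : V, p ≠ q →
      ((univ.filter fun x => ({p, q, x} : Finset V) ∉ E).card : ℝ) <
        2 * Fintype.card V / 9 := by
    intro p q hpq
    have hd := hδ p q hpq
    have hsub : (univ.filter fun x => ({p, q, x} : Finset V) ∈ E) ⊆ univ :=
      filter_subset _ _
    have hle := Finset.card_le_card hsub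
    rw [Finset.card_univ] at hle
    have hcompl : (univ.filter fun x => ({p, q, x} : Finset V) ∉ E)
        = univ \ (univ.filter fun x => ({p, q, x} : Finset V) ∈ E) :=
      Finset.filter_not _ _
    rw [hcompl, Finset.card_sdiff_of_subset hsub, Finset.card_univ, Nat.cast_sub hle]
    linarith
  -- the two key sets
  have hcover12 : (univ : Finset V) ⊆
      (univ.filter fun x => ({b, v, x} : Finset V) ∈ E ∧ ({c, v, x} : Finset V) ∈ E ∧
        ({a, b, x} : Finset V) ∈ E ∧ ({b, c, x} : Finset V) ∈ E)
      ∪ (univ.filter fun x => ({b, v, x} : Finset V) ∉ E)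
      ∪ (univ.filter fun x => ({c, v, x} : Finset V) ∉ E)
      ∪ (univ.filter fun x => ({a, b, x} : Finset V) ∉ E)
      ∪ (univ.filter fun x => ({b, c, x} : Finset V) ∉ E) := by
    intro x _
    simp only [Finset.mem_union, Finset.mem_filter, Finset.mem_univ, true_and]
    tauto
  have hcover34 : (univ : Finset V) ⊆
      (univ.filter fun x => ({c, v, x} : Finset V) ∈ E ∧ ({d, v, x} : Finset V) ∈ E ∧
        ({c, d, x} : Finset V) ∈ E ∧ ({d, a, x} : Finset V) ∈ E)
      ∪ (univ.filter fun x => ({c, v, x} : Finset V) ∉ E)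
      ∪ (univ.filter fun x => ({d, v, x} : Finset V) ∉ E)
      ∪ (univ.filter fun x => ({c, d, x} : Finset V) ∉ E)
      ∪ (univ.filter fun x => ({d, a, x} : Finset V) ∉ E) := by
    intro x _
    simp only [Finset.mem_union, Finset.mem_filter, Finset.mem_univ, true_and]
    tauto
  have hc12 := four_cover_card hcover12
  have hc34 := four_cover_card hcover34
  -- each key set lies in the non-neighbourhood of {a, v}
  have hW12sub : (univ.filter fun x => ({b, v, x} : Finset V) ∈ E ∧
        ({c, v, x} : Finset V) ∈ E ∧ ({a, b, x} : Finset V) ∈ E ∧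
        ({b, c, x} : Finset V) ∈ E)
      ⊆ (univ.filter fun x => ({a, v, x} : Finset V) ∉ E) := by
    intro x hx
    simp only [Finset.mem_filter, Finset.mem_univ, true_and] at hx ⊢
    obtain ⟨hbvx, hcvx, habx, hbcx⟩ := hx
    intro havx
    have hvbx : ({v, b, x} : Finset V) ∈ E := memE_of_eq hbvx (by ext u; simp only [Finset.mem_insert, Finset.mem_singleton]; tauto)
    have hvbc : ({v, b, c} : Finset V) ∈ E := memE_of_eq he2 (by ext u; simp only [Finset.mem_insert, Finset.mem_singleton]; tauto)
    have hvxc : ({v, x, c} : Finset V) ∈ E := memE_of_eq hcvx (by ext u; simp only [Finset.mem_insert, Finset.mem_singleton]; tauto)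
    have hbxc : ({b, x, c} : Finset V) ∈ E := memE_of_eq hbcx (by ext u; simp only [Finset.mem_insert, Finset.mem_singleton]; tauto)
    have t1 : ({a, v, b, x} : Finset V) ∈ tet E := tet_builder E h3 he1 havx habx hvbx
    have t2 : ({v, b, x, c} : Finset V) ∈ tet E := tet_builder E h3 hvbx hvbc hvxc hbxc
    have hsub1 : ({a, v, b} : Finset V) ⊆ {a, v, b, x} := (by intro u hu; simp only [Finset.mem_insert, Finset.mem_singleton] at hu ⊢; tauto)
    have hsub2 : ({b, v, c} : Finset V) ⊆ {v, b, x, c} := (by intro u hu; simp only [Finset.mem_insert, Finset.mem_singleton] at hu ⊢; tauto)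
    exact hn12 (edge_conn_step E t1 t2 hsub1 hsub2)
  have hW34sub : (univ.filter fun x => ({c, v, x} : Finset V) ∈ E ∧
        ({d, v, x} : Finset V) ∈ E ∧ ({c, d, x} : Finset V) ∈ E ∧
        ({d, a, x} : Finset V) ∈ E)
      ⊆ (univ.filter fun x => ({a, v, x} : Finset V) ∉ E) := by
    intro x hx
    simp only [Finset.mem_filter, Finset.mem_univ, true_and] at hx ⊢
    obtain ⟨hcvx, hdvx, hcdx, hdax⟩ := hx
    intro havx
    have hvdx : ({v, d, x} : Finset V) ∈ E := memE_of_eq hdvx (by ext u; simp only [Finset.mem_insert, Finset.mem_singleton]; tauto)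
    have hvda : ({v, d, a} : Finset V) ∈ E := memE_of_eq he4 (by ext u; simp only [Finset.mem_insert, Finset.mem_singleton]; tauto)
    have hvxa : ({v, x, a} : Finset V) ∈ E := memE_of_eq havx (by ext u; simp only [Finset.mem_insert, Finset.mem_singleton]; tauto)
    have hdxa : ({d, x, a} : Finset V) ∈ E := memE_of_eq hdax (by ext u; simp only [Finset.mem_insert, Finset.mem_singleton]; tauto)
    have t1 : ({c, v, d, x} : Finset V) ∈ tet E := tet_builder E h3 he3 hcvx hcdx hvdx
    have t2 : ({v, d, x, a} : Finset V) ∈ tet E := tet_builder E h3 hvdx hvda hvxa hdxa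
    have hsub1 : ({c, v, d} : Finset V) ⊆ {c, v, d, x} := (by intro u hu; simp only [Finset.mem_insert, Finset.mem_singleton] at hu ⊢; tauto)
    have hsub2 : ({d, v, a} : Finset V) ⊆ {v, d, x, a} := (by intro u hu; simp only [Finset.mem_insert, Finset.mem_singleton] at hu ⊢; tauto)
    exact hn34 (edge_conn_step E t1 t2 hsub1 hsub2)
  -- the two key sets intersect
  have hkey := Finset.card_union_add_card_inter
    (univ.filter fun x => ({b, v, x} : Finset V) ∈ E ∧ ({c, v, x} : Finset V) ∈ E ∧
      ({a, b, x} : Finset V) ∈ E ∧ ({b, c, x} : Finset V) ∈ E)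
    (univ.filter fun x => ({c, v, x} : Finset V) ∈ E ∧ ({d, v, x} : Finset V) ∈ E ∧
      ({c, d, x} : Finset V) ∈ E ∧ ({d, a, x} : Finset V) ∈ E)
  have hUle := Finset.card_le_card (Finset.union_subset hW12sub hW34sub)
  have hb1 := hB b v hbv
  have hb2 := hB c v hcv
  have hb3 := hB a b hab
  have hb4 := hB b c hbc
  have hb5 := hB d v hdv
  have hb6 := hB c d hcd
  have hb7 := hB d a hda
  have hbav := hB a v hav
  have hposR : (0 : ℝ) <
      (((univ.filter fun x => ({b, v, x} : Finset V) ∈ E ∧ ({c, v, x} : Finset V) ∈ E ∧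
          ({a, b, x} : Finset V) ∈ E ∧ ({b, c, x} : Finset V) ∈ E)
        ∩ (univ.filter fun x => ({c, v, x} : Finset V) ∈ E ∧ ({d, v, x} : Finset V) ∈ E ∧
          ({c, d, x} : Finset V) ∈ E ∧ ({d, a, x} : Finset V) ∈ E)).card : ℝ) := by
    have hkey' := congrArg (fun m : ℕ => (m : ℝ)) hkey
    have hc12' := (Nat.cast_le (α := ℝ)).mpr hc12
    have hc34' := (Nat.cast_le (α := ℝ)).mpr hc34
    have hUle' := (Nat.cast_le (α := ℝ)).mpr hUle
    push_cast at hkey' hc12' hc34' hUle'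
    linarith
  obtain ⟨x, hx⟩ := Finset.card_pos.mp (by exact_mod_cast hposR)
  rw [Finset.mem_inter] at hx
  obtain ⟨hx1, hx2⟩ := hx
  simp only [Finset.mem_filter, Finset.mem_univ, true_and] at hx1 hx2
  obtain ⟨hbvx, hcvx, habx, hbcx⟩ := hx1
  obtain ⟨hcvx', hdvx, hcdx, hdax⟩ := hx2
  have hvcx : ({v, c, x} : Finset V) ∈ E := memE_of_eq hcvx (by ext u; simp only [Finset.mem_insert, Finset.mem_singleton]; tauto)
  have hvcd : ({v, c, d} : Finset V) ∈ E := memE_of_eq he3 (by ext u; simp only [Finset.mem_insert, Finset.mem_singleton]; tauto)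
  have hvxd : ({v, x, d} : Finset V) ∈ E := memE_of_eq hdvx (by ext u; simp only [Finset.mem_insert, Finset.mem_singleton]; tauto)
  have hcxd : ({c, x, d} : Finset V) ∈ E := memE_of_eq hcdx (by ext u; simp only [Finset.mem_insert, Finset.mem_singleton]; tauto)
  have t1 : ({b, v, c, x} : Finset V) ∈ tet E := tet_builder E h3 he2 hbvx hbcx hvcx
  have t2 : ({v, c, x, d} : Finset V) ∈ tet E := tet_builder E h3 hvcx hvcd hvxd hcxd
  have hsub1 : ({b, v, c} : Finset V) ⊆ {b, v, c, x} := (by intro u hu; simp only [Finset.mem_insert, Finset.mem_singleton] at hu ⊢; tauto)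
  have hsub2 : ({c, v, d} : Finset V) ⊆ {v, c, x, d} := (by intro u hu; simp only [Finset.mem_insert, Finset.mem_singleton] at hu ⊢; tauto)
  exact hn23 (edge_conn_step E t1 t2 hsub1 hsub2)
end

section
/- Let H be a 3-graph on n vertices with δ₂(H) > 7n/9. Then for every pair of distinct vertices u, v of H, the edges of H containing both u and v lie in at most two tight components of the tetrahedral graph 𝒯(H); i.e. |φ({u,v})| ≤ 2. -/
open Finset

lemma card3_ne {V : Type*} [DecidableEq V] {a b c : V}
    (h : ({a, b, c} : Finset V).card = 3) : a ≠ b ∧ a ≠ c ∧ b ≠ c := by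
  refine ⟨?_, ?_, ?_⟩
  · rintro rfl
    have he : ({a, a, c} : Finset V) = {a, c} := by ext y; simp
    rw [he] at h
    have := Finset.card_le_two (a := a) (b := c)
    omega
  · rintro rfl
    have he : ({a, b, a} : Finset V) = {a, b} := by ext y; simp; tauto
    rw [he] at h
    have := Finset.card_le_two (a := a) (b := b)
    omega
  · rintro rfl
    have he : ({a, b, b} : Finset V) = {a, b} := by ext y; simp
    rw [he] at h
    have := Finset.card_le_two (a := a) (b := b)
    omega

lemma tet_mem {V : Type*} [Fintype V] [DecidableEq V] {E : Finset (Finset V)}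
    {a b c d : V} (hab : a ≠ b) (hac : a ≠ c) (had : a ≠ d) (hbc : b ≠ c)
    (hbd : b ≠ d) (hcd : c ≠ d)
    (h1 : ({b, c, d} : Finset V) ∈ E) (h2 : ({a, c, d} : Finset V) ∈ E)
    (h3 : ({a, b, d} : Finset V) ∈ E) (h4 : ({a, b, c} : Finset V) ∈ E) :
    ({a, b, c, d} : Finset V) ∈ tet E := by
  have hcard : ({a, b, c, d} : Finset V).card = 4 := by
    rw [Finset.card_insert_of_notMem (by simp [hab, hac, had]),
      Finset.card_insert_of_notMem (by simp [hbc, hbd]),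
      Finset.card_insert_of_notMem (by simp [hcd]), Finset.card_singleton]
  rw [tet, Finset.mem_filter, Finset.mem_powersetCard]
  refine ⟨⟨Finset.subset_univ _, hcard⟩, ?_⟩
  intro t ht
  rw [Finset.mem_powersetCard] at ht
  obtain ⟨hsub, htc⟩ := ht
  by_cases ha : a ∈ t
  · by_cases hb : b ∈ t
    · by_cases hc : c ∈ t
      · have h1 : ({a, b, c} : Finset V) ⊆ t := by
          simp [Finset.insert_subset_iff, ha, hb, hc]
        have h2 : ({a, b, c} : Finset V).card = 3 := by
          rw [Finset.card_insert_of_notMem (by simp [hab, hac]),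
            Finset.card_insert_of_notMem (by simp [hbc]), Finset.card_singleton]
        have : t = ({a, b, c} : Finset V) :=
          (Finset.eq_of_subset_of_card_le h1 (by omega)).symm
        rwa [this]
      · have hsub' : t ⊆ ({a, b, d} : Finset V) := by
          intro x hx
          have := hsub hx
          simp only [Finset.mem_insert, Finset.mem_singleton] at this ⊢
          rcases this with h | h | h | h
          · tauto
          · tauto
          · exact absurd (h ▸ hx) hc
          · tauto
        have h2 : ({a, b, d} : Finset V).card = 3 := by
          rw [Finset.card_insert_of_notMem (by simp [hab, had]),
            Finset.card_insert_of_notMem (by simp [hbd]), Finset.card_singleton]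
        have : t = ({a, b, d} : Finset V) :=
          Finset.eq_of_subset_of_card_le hsub' (by omega)
        rwa [this]
    · have hsub' : t ⊆ ({a, c, d} : Finset V) := by
        intro x hx
        have := hsub hx
        simp only [Finset.mem_insert, Finset.mem_singleton] at this ⊢
        rcases this with h | h | h | h
        · tauto
        · exact absurd (h ▸ hx) hb
        · tauto
        · tauto
      have h2 : ({a, c, d} : Finset V).card = 3 := by
        rw [Finset.card_insert_of_notMem (by simp [hac, had]),
          Finset.card_insert_of_notMem (by simp [hcd]), Finset.card_singleton]
      have : t = ({a, c, d} : Finset V) :=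
        Finset.eq_of_subset_of_card_le hsub' (by omega)
      rwa [this]
  · have hsub' : t ⊆ ({b, c, d} : Finset V) := by
      intro x hx
      have := hsub hx
      simp only [Finset.mem_insert, Finset.mem_singleton] at this ⊢
      rcases this with h | h | h | h
      · exact absurd (h ▸ hx) ha
      · tauto
      · tauto
      · tauto
    have h2 : ({b, c, d} : Finset V).card = 3 := by
      rw [Finset.card_insert_of_notMem (by simp [hbc, hbd]),
        Finset.card_insert_of_notMem (by simp [hcd]), Finset.card_singleton]
    have : t = ({b, c, d} : Finset V) :=
      Finset.eq_of_subset_of_card_le hsub' (by omega)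
    rwa [this]

lemma conn_aux {V : Type*} [Fintype V] [DecidableEq V] {E : Finset (Finset V)}
    (h3 : ∀ e ∈ E, e.card = 3) {u v w₁ w₂ x : V}
    (h1 : ({u, v, w₁} : Finset V) ∈ E) (h2 : ({u, v, w₂} : Finset V) ∈ E)
    (hx1 : ({u, v, x} : Finset V) ∈ E)
    (hx2 : ({u, w₁, x} : Finset V) ∈ E) (hx3 : ({v, w₁, x} : Finset V) ∈ E)
    (hx4 : ({u, w₂, x} : Finset V) ∈ E) (hx5 : ({v, w₂, x} : Finset V) ∈ E) :
    EdgeConn E {u, v, w₁} {u, v, w₂} := by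
  obtain ⟨huv, huw₁, hvw₁⟩ := card3_ne (h3 _ h1)
  obtain ⟨-, huw₂, hvw₂⟩ := card3_ne (h3 _ h2)
  obtain ⟨-, hux, hvx⟩ := card3_ne (h3 _ hx1)
  obtain ⟨-, -, hw₁x⟩ := card3_ne (h3 _ hx2)
  obtain ⟨-, -, hw₂x⟩ := card3_ne (h3 _ hx4)
  -- membership permutations
  have p1 : ({w₁, v, x} : Finset V) = {v, w₁, x} := by ext y; simp; tauto
  have p2 : ({w₁, u, x} : Finset V) = {u, w₁, x} := by ext y; simp; tauto
  have p3 : ({w₁, u, v} : Finset V) = {u, v, w₁} := by ext y; simp; tauto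
  have p4 : ({v, x, w₂} : Finset V) = {v, w₂, x} := by ext y; simp; tauto
  have p5 : ({u, x, w₂} : Finset V) = {u, w₂, x} := by ext y; simp; tauto
  have p6 : ({u, v, w₂} : Finset V) = {u, v, w₂} := rfl
  have hK : ({w₁, u, v, x} : Finset V) ∈ tet E :=
    tet_mem huw₁.symm hvw₁.symm hw₁x huv hux hvx hx1 (p1 ▸ hx3) (p2 ▸ hx2) (p3 ▸ h1)
  have hK' : ({u, v, x, w₂} : Finset V) ∈ tet E :=
    tet_mem huv hux huw₂ hvx hvw₂ (fun h => hw₂x h.symm)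
      (p4 ▸ hx5) (p5 ▸ hx4) h2 hx1
  refine ⟨{w₁, u, v, x}, {u, v, x, w₂}, hK, hK', ?_, ?_, ?_⟩
  · intro y hy; simp only [Finset.mem_insert, Finset.mem_singleton] at hy ⊢; tauto
  · intro y hy; simp only [Finset.mem_insert, Finset.mem_singleton] at hy ⊢; tauto
  · refine ⟨[w₁, u, v, x, w₂], by simp, by simp, by simp, ?_⟩
    intro i hi
    simp only [List.length_cons, List.length_nil] at hi
    have hi' : i = 0 ∨ i = 1 := by omega
    rcases hi' with rfl | rfl
    · simpa using hK
    · simpa using hK'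

lemma pigeon {V : Type*} [DecidableEq V] (A₁ A₂ A₃ B : Finset V)
    (h : B.card < (A₁ ∩ B).card + (A₂ ∩ B).card + (A₃ ∩ B).card) :
    ∃ x ∈ B, (x ∈ A₁ ∧ x ∈ A₂) ∨ (x ∈ A₁ ∧ x ∈ A₃) ∨ (x ∈ A₂ ∧ x ∈ A₃) := by
  by_contra hc
  push_neg at hc
  have d12 : Disjoint (A₁ ∩ B) (A₂ ∩ B) := by
    rw [Finset.disjoint_left]
    intro x h1 h2
    rw [Finset.mem_inter] at h1 h2
    exact ((hc x h1.2).1 h1.1) h2.1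
  have d3 : Disjoint ((A₁ ∩ B) ∪ (A₂ ∩ B)) (A₃ ∩ B) := by
    rw [Finset.disjoint_left]
    intro x h1 h2
    rw [Finset.mem_inter] at h2
    rw [Finset.mem_union, Finset.mem_inter, Finset.mem_inter] at h1
    rcases h1 with h1 | h1
    · exact ((hc x h1.2).2.1 h1.1) h2.1
    · exact ((hc x h1.2).2.2 h1.1) h2.1
  have hcard : ((A₁ ∩ B) ∪ (A₂ ∩ B) ∪ (A₃ ∩ B)).card
      = (A₁ ∩ B).card + (A₂ ∩ B).card + (A₃ ∩ B).card := by
    rw [Finset.card_union_of_disjoint d3, Finset.card_union_of_disjoint d12]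
  have hsub : (A₁ ∩ B) ∪ (A₂ ∩ B) ∪ (A₃ ∩ B) ⊆ B := by
    intro x hx
    simp only [Finset.mem_union, Finset.mem_inter] at hx
    tauto
  have := Finset.card_le_card hsub
  omega

lemma inter_lb {V : Type*} [Fintype V] [DecidableEq V] (A B : Finset V) :
    A.card + B.card ≤ Fintype.card V + (A ∩ B).card := by
  have h1 := Finset.card_union_add_card_inter A B
  have h2 : (A ∪ B).card ≤ Fintype.card V := Finset.card_le_univ _
  omega

def nbr {V : Type*} [Fintype V] [DecidableEq V] (E : Finset (Finset V)) (a b : V) :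
    Finset V :=
  Finset.univ.filter fun w => ({a, b, w} : Finset V) ∈ E

lemma mem_nbr {V : Type*} [Fintype V] [DecidableEq V] {E : Finset (Finset V)}
    {a b x : V} (h : x ∈ nbr E a b) : ({a, b, x} : Finset V) ∈ E := by
  simpa [nbr] using h

/-- If `δ₂(H) > 7n/9`, then for every pair of distinct vertices `u, v`, the
edges of `H` containing both `u` and `v` lie in at most two tight components of
`𝒯(H)`: among any three such edges, two lie in the same tight component. -/
theorem pair_in_two_components {V : Type*} [Fintype V] [DecidableEq V]
    (E : Finset (Finset V)) (h3 : ∀ e ∈ E, e.card = 3)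
    (hδ : ∀ u v : V, u ≠ v →
      (7 : ℝ) * Fintype.card V / 9 <
        ((Finset.univ.filter fun w => ({u, v, w} : Finset V) ∈ E).card : ℝ)) :
    ∀ u v : V, u ≠ v → ∀ e₁ e₂ e₃ : Finset V, e₁ ∈ E → e₂ ∈ E → e₃ ∈ E →
      ({u, v} : Finset V) ⊆ e₁ → ({u, v} : Finset V) ⊆ e₂ → ({u, v} : Finset V) ⊆ e₃ →
      EdgeConn E e₁ e₂ ∨ EdgeConn E e₁ e₃ ∨ EdgeConn E e₂ e₃ := by
  intro u v huv e₁ e₂ e₃ he₁ he₂ he₃ hs₁ hs₂ hs₃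
  have getw : ∀ e ∈ E, ({u, v} : Finset V) ⊆ e → ∃ w, e = {u, v, w} := by
    intro e he hs
    have hc := h3 e he
    have huv2 : ({u, v} : Finset V).card = 2 := by
      rw [Finset.card_insert_of_notMem (by simp [huv]), Finset.card_singleton]
    have hsd : (e \ {u, v}).card = 1 := by rw [Finset.card_sdiff_of_subset hs]; omega
    obtain ⟨w, hw⟩ := Finset.card_eq_one.mp hsd
    refine ⟨w, ?_⟩
    have hun := Finset.union_sdiff_of_subset hs
    rw [hw] at hun
    rw [← hun]; ext y; simp
  obtain ⟨w₁, hw₁⟩ := getw e₁ he₁ hs₁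
  obtain ⟨w₂, hw₂⟩ := getw e₂ he₂ hs₂
  obtain ⟨w₃, hw₃⟩ := getw e₃ he₃ hs₃
  subst hw₁ hw₂ hw₃
  obtain ⟨-, huw₁, hvw₁⟩ := card3_ne (h3 _ he₁)
  obtain ⟨-, huw₂, hvw₂⟩ := card3_ne (h3 _ he₂)
  obtain ⟨-, huw₃, hvw₃⟩ := card3_ne (h3 _ he₃)
  set n := Fintype.card V with hn
  have key : ∀ w : V, u ≠ w → v ≠ w →
      (n : ℝ) / 3 < (((nbr E u w ∩ nbr E v w) ∩ nbr E u v).card : ℝ) := by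
    intro w hw1 hw2
    have l1 := inter_lb (nbr E u w) (nbr E v w)
    have l2 := inter_lb (nbr E u w ∩ nbr E v w) (nbr E u v)
    have a1 : (7 : ℝ) * n / 9 < ((nbr E u w).card : ℝ) := hδ u w hw1
    have a2 : (7 : ℝ) * n / 9 < ((nbr E v w).card : ℝ) := hδ v w hw2
    have a3 : (7 : ℝ) * n / 9 < ((nbr E u v).card : ℝ) := hδ u v huv
    have l1' : ((nbr E u w).card : ℝ) + ((nbr E v w).card : ℝ)
        ≤ (n : ℝ) + ((nbr E u w ∩ nbr E v w).card : ℝ) := by exact_mod_cast l1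
    have l2' : ((nbr E u w ∩ nbr E v w).card : ℝ) + ((nbr E u v).card : ℝ)
        ≤ (n : ℝ) + (((nbr E u w ∩ nbr E v w) ∩ nbr E u v).card : ℝ) := by
      exact_mod_cast l2
    linarith
  have hBn : ((nbr E u v).card : ℝ) ≤ (n : ℝ) := by
    exact_mod_cast Finset.card_le_univ (nbr E u v)
  have hsum : ((nbr E u v).card : ℝ)
      < (((nbr E u w₁ ∩ nbr E v w₁) ∩ nbr E u v).card : ℝ)
      + (((nbr E u w₂ ∩ nbr E v w₂) ∩ nbr E u v).card : ℝ)
      + (((nbr E u w₃ ∩ nbr E v w₃) ∩ nbr E u v).card : ℝ) := by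
    linarith [key w₁ huw₁ hvw₁, key w₂ huw₂ hvw₂, key w₃ huw₃ hvw₃]
  have hnat : (nbr E u v).card
      < ((nbr E u w₁ ∩ nbr E v w₁) ∩ nbr E u v).card
      + ((nbr E u w₂ ∩ nbr E v w₂) ∩ nbr E u v).card
      + ((nbr E u w₃ ∩ nbr E v w₃) ∩ nbr E u v).card := by exact_mod_cast hsum
  obtain ⟨x, hxB, hcase⟩ := pigeon (nbr E u w₁ ∩ nbr E v w₁)
    (nbr E u w₂ ∩ nbr E v w₂) (nbr E u w₃ ∩ nbr E v w₃) (nbr E u v) hnat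
  have hxuv : ({u, v, x} : Finset V) ∈ E := mem_nbr hxB
  rcases hcase with ⟨h1, h2⟩ | ⟨h1, h2⟩ | ⟨h1, h2⟩ <;>
    rw [Finset.mem_inter] at h1 h2
  · exact Or.inl (conn_aux h3 he₁ he₂ hxuv (mem_nbr h1.1) (mem_nbr h1.2)
      (mem_nbr h2.1) (mem_nbr h2.2))
  · exact Or.inr (Or.inl (conn_aux h3 he₁ he₃ hxuv (mem_nbr h1.1) (mem_nbr h1.2)
      (mem_nbr h2.1) (mem_nbr h2.2)))
  · exact Or.inr (Or.inr (conn_aux h3 he₂ he₃ hxuv (mem_nbr h1.1) (mem_nbr h1.2)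
      (mem_nbr h2.1) (mem_nbr h2.2)))
end

section
/- Let H be a 3-graph on n vertices with δ₂(H) > 7n/9 and suppose T₁, T₂, T₃ are three distinct tight components of the tetrahedral graph 𝒯(H). Then there do not exist vertices v₁, v₂, v₃ of H such that φ(vᵢ) = {T₁,T₂,T₃} \ {Tᵢ} for each i ∈ {1,2,3}. -/
open Finset

section walkstuff
variable {V : Type*} [DecidableEq V]

/-- walk with explicitly tracked end list -/
def WE (T : Finset (Finset V)) (X : Finset V) (l : List V) (e : List V) : Prop :=
  4 ≤ l.length ∧ (l.take 4).toFinset = X ∧ l.drop (l.length - 4) = e ∧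
    ∀ i, i + 4 ≤ l.length → ((l.drop i).take 4).toFinset ∈ T

lemma list_len4 {l : List V} (h : l.length = 4) : ∃ a b c d : V, l = [a, b, c, d] := by
  match l, h with
  | [a, b, c, d], _ => exact ⟨a, b, c, d, rfl⟩

lemma WE.append {T : Finset (Finset V)} {X : Finset V} {l : List V} {p q r s v : V}
    (h : WE T X l [p, q, r, s]) (hv : ({q, r, s, v} : Finset V) ∈ T) :
    WE T X (l ++ [v]) [q, r, s, v] := by
  obtain ⟨hlen, htake, hdrop, hwin⟩ := h
  have hlen' : (l ++ [v]).length = l.length + 1 := by simp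
  have hd : (l ++ [v]).drop ((l ++ [v]).length - 4) = [q, r, s, v] := by
    rw [hlen']
    have h1 : l.length + 1 - 4 = l.length - 3 := by omega
    rw [h1, List.drop_append_of_le_length (by omega)]
    have h2 : l.drop (l.length - 3) = (l.drop (l.length - 4)).drop 1 := by
      rw [List.drop_drop]; congr 1; omega
    rw [h2, hdrop]
    rfl
  refine ⟨by omega, ?_, hd, ?_⟩
  · rw [List.take_append_of_le_length (by omega), htake]
  · intro i hi
    rw [hlen'] at hi
    rcases Nat.lt_or_ge i (l.length - 3) with hlt | hge
    · rw [List.drop_append_of_le_length (by omega),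
        List.take_append_of_le_length (by simpa using by omega)]
      exact hwin i (by omega)
    · have : i = l.length - 3 := by omega
      subst this
      have hd2 : (l ++ [v]).drop (l.length - 3) = [q, r, s, v] := by
        have h4 : (l ++ [v]).length - 4 = l.length - 3 := by rw [hlen']; omega
        rwa [h4] at hd
      rw [hd2]
      simpa using hv

set_option linter.unusedSectionVars false

lemma WE.tconn {T : Finset (Finset V)} {X : Finset V} {l e : List V} (h : WE T X l e) :
    TightConn T X e.toFinset :=
  ⟨l, h.1, h.2.1, by rw [h.2.2.1], h.2.2.2⟩

lemma card_triple_le (x y z : V) : ({x, y, z} : Finset V).card ≤ 3 := by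
  apply (Finset.card_insert_le _ _).trans
  apply Nat.succ_le_succ
  apply (Finset.card_insert_le _ _).trans
  simp

lemma quad_nodup {a b c d : V} (h : ({a, b, c, d} : Finset V).card = 4) :
    a ≠ b ∧ a ≠ c ∧ a ≠ d ∧ b ≠ c ∧ b ≠ d ∧ c ≠ d := by
  refine ⟨?_, ?_, ?_, ?_, ?_, ?_⟩ <;> intro hEq <;> subst hEq
  · have h2 : ({a, a, c, d} : Finset V) = {a, c, d} := by ext x; simp
    rw [h2] at h; have := card_triple_le a c d; omega
  · have h2 : ({a, b, a, d} : Finset V) = {a, b, d} := by ext x; simp; tauto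
    rw [h2] at h; have := card_triple_le a b d; omega
  · have h2 : ({a, b, c, a} : Finset V) = {a, b, c} := by ext x; simp; tauto
    rw [h2] at h; have := card_triple_le a b c; omega
  · have h2 : ({a, b, b, d} : Finset V) = {a, b, d} := by ext x; simp
    rw [h2] at h; have := card_triple_le a b d; omega
  · have h2 : ({a, b, c, b} : Finset V) = {a, b, c} := by ext x; simp; tauto
    rw [h2] at h; have := card_triple_le a b c; omega
  · have h2 : ({a, b, c, c} : Finset V) = {a, b, c} := by ext x; simp
    rw [h2] at h; have := card_triple_le a b c; omega

end walkstuff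

section tetstuff
variable {V : Type*} [Fintype V] [DecidableEq V] {E : Finset (Finset V)}

lemma card_eq_four' {K : Finset V} (h : K.card = 4) : ∃ a b c d : V, K = {a, b, c, d} := by
  obtain ⟨a, t, ha, rfl, ht⟩ := Finset.card_eq_succ.mp h
  obtain ⟨b, c, d, h1, h2, h3, rfl⟩ := Finset.card_eq_three.mp ht
  exact ⟨a, b, c, d, rfl⟩

lemma tet_card {K : Finset V} (h : K ∈ tet E) : K.card = 4 := by
  rw [tet, Finset.mem_filter, Finset.mem_powersetCard] at h
  exact h.1.2

lemma tet_triple {K t : Finset V} (h : K ∈ tet E) (ht : t ⊆ K) (h3 : t.card = 3) : t ∈ E := by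
  rw [tet, Finset.mem_filter] at h
  exact h.2 t (Finset.mem_powersetCard.mpr ⟨ht, h3⟩)

/-- base: a tetrahedron is tightly connected to itself -/
lemma tconn_refl {K : Finset V} (hK : K ∈ tet E) : TightConn (tet E) K K := by
  obtain ⟨a, b, c, d, hKe⟩ := card_eq_four' (tet_card hK)
  subst hKe
  have hwe : WE (tet E) {a, b, c, d} [a, b, c, d] [a, b, c, d] := by
    refine ⟨by simp, by simp, by simp, ?_⟩
    intro i hi
    simp only [List.length_cons, List.length_nil] at hi
    have hi0 : i = 0 := by omega
    subst hi0
    simpa using hK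
  have := hwe.tconn
  simpa using this

def Adj (E : Finset (Finset V)) (A B : Finset V) : Prop :=
  A ∈ tet E ∧ B ∈ tet E ∧ 3 ≤ (A ∩ B).card

lemma adj_symm : Symmetric (Adj E) := by
  rintro A B ⟨h1, h2, h3⟩
  exact ⟨h2, h1, by rwa [Finset.inter_comm]⟩

end tetstuff

section stepstuff
variable {V : Type*} [Fintype V] [DecidableEq V] {E : Finset (Finset V)}

set_option maxHeartbeats 1600000 in
lemma tconn_step {X B C : Finset V}
    (h : TightConn (tet E) X B) (hB : B ∈ tet E) (hC : C ∈ tet E)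
    (hBC : 3 ≤ (B ∩ C).card) : TightConn (tet E) X C := by
  by_cases hEq : B = C
  · rwa [hEq] at h
  obtain ⟨l, hlen, htake, hdrop, hwin⟩ := h
  obtain ⟨p, q, r, s, he⟩ := list_len4 (l := l.drop (l.length - 4))
    (by rw [List.length_drop]; omega)
  have hwe : WE (tet E) X l [p, q, r, s] := ⟨hlen, htake, he, hwin⟩
  have hBpq : ({p, q, r, s} : Finset V) = B := by rw [← hdrop, he]; simp
  have hB4 : B.card = 4 := tet_card hB
  have hC4 : C.card = 4 := tet_card hC
  have hIC : (B ∩ C).card = 3 := by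
    rcases Nat.lt_or_ge (B ∩ C).card 4 with h4 | h4
    · omega
    · exfalso; apply hEq
      have h1 : B ∩ C = B :=
        Finset.eq_of_subset_of_card_le Finset.inter_subset_left (by omega)
      have h2 : B ∩ C = C :=
        Finset.eq_of_subset_of_card_le Finset.inter_subset_right (by omega)
      rw [← h1, h2]
  obtain ⟨y, hy⟩ : ∃ y, C \ B = {y} := Finset.card_eq_one.mp (by
    have := Finset.card_sdiff_add_card_inter C B
    rw [Finset.inter_comm] at this; omega)
  obtain ⟨m, hm⟩ : ∃ m, B \ C = {m} := Finset.card_eq_one.mp (by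
    have := Finset.card_sdiff_add_card_inter B C; omega)
  have hyCB : y ∈ C ∧ y ∉ B := by
    have : y ∈ C \ B := by rw [hy]; exact Finset.mem_singleton_self y
    exact Finset.mem_sdiff.mp this
  have hmBC : m ∈ B ∧ m ∉ C := by
    have : m ∈ B \ C := by rw [hm]; exact Finset.mem_singleton_self m
    exact Finset.mem_sdiff.mp this
  have hBsub : ∀ x ∈ B, x ≠ m → x ∈ C := by
    intro x hx hxm
    by_contra hxc
    have : x ∈ B \ C := Finset.mem_sdiff.mpr ⟨hx, hxc⟩
    rw [hm] at this
    exact hxm (Finset.mem_singleton.mp this)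
  have hCsub : ∀ x ∈ C, x = y ∨ x ∈ B := by
    intro x hx
    by_cases hxB : x ∈ B
    · exact Or.inr hxB
    · left
      have : x ∈ C \ B := Finset.mem_sdiff.mpr ⟨hx, hxB⟩
      rw [hy] at this
      exact Finset.mem_singleton.mp this
  -- finishing move from an end-list whose head is `m`
  have key : ∀ (α β γ : V) (l' : List V), WE (tet E) X l' [m, α, β, γ] →
      ({m, α, β, γ} : Finset V) = B → TightConn (tet E) X C := by
    intro α β γ l' hwe' hset
    obtain ⟨hmα, hmβ, hmγ, hαβ, hαγ, hβγ⟩ := quad_nodup (hset ▸ hB4)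
    have hαB : α ∈ B := by rw [← hset]; simp
    have hβB : β ∈ B := by rw [← hset]; simp
    have hγB : γ ∈ B := by rw [← hset]; simp
    have hCeq : ({α, β, γ, y} : Finset V) = C := by
      ext x
      simp only [Finset.mem_insert, Finset.mem_singleton]
      constructor
      · rintro (rfl | rfl | rfl | rfl)
        · exact hBsub _ hαB (Ne.symm hmα)
        · exact hBsub _ hβB (Ne.symm hmβ)
        · exact hBsub _ hγB (Ne.symm hmγ)
        · exact hyCB.1
      · intro hx
        rcases hCsub x hx with rfl | hxB
        · tauto
        · rw [← hset] at hxB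
          simp only [Finset.mem_insert, Finset.mem_singleton] at hxB
          rcases hxB with rfl | h' | h' | h'
          · exact absurd hx hmBC.2
          · tauto
          · tauto
          · tauto
    have hfin := (hwe'.append (v := y) (by rw [hCeq]; exact hC)).tconn
    have : ([α, β, γ, y] : List V).toFinset = C := by
      rw [← hCeq]; simp
    rwa [this] at hfin
  have hrot : ∀ (a b c d : V) (l' : List V), WE (tet E) X l' [a, b, c, d] →
      ({a, b, c, d} : Finset V) = B → WE (tet E) X (l' ++ [a]) [b, c, d, a] := by
    intro a b c d l' hwe' hset
    apply hwe'.append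
    have : ({b, c, d, a} : Finset V) = B := by
      rw [← hset]; ext x; simp; tauto
    rw [this]; exact hB
  have hmmem : m = p ∨ m = q ∨ m = r ∨ m = s := by
    have := hmBC.1
    rw [← hBpq] at this
    simpa using this
  have hset2 : ({q, r, s, p} : Finset V) = B := by rw [← hBpq]; ext x; simp; tauto
  have hset3 : ({r, s, p, q} : Finset V) = B := by rw [← hBpq]; ext x; simp; tauto
  have hset4 : ({s, p, q, r} : Finset V) = B := by rw [← hBpq]; ext x; simp; tauto
  rcases hmmem with rfl | rfl | rfl | rfl
  · exact key q r s l hwe hBpq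
  · exact key r s p _ (hrot _ _ _ _ _ hwe hBpq) hset2
  · exact key s p q _ (hrot _ _ _ _ _ (hrot _ _ _ _ _ hwe hBpq) hset2) hset3
  · exact key p q r _
      (hrot _ _ _ _ _ (hrot _ _ _ _ _ (hrot _ _ _ _ _ hwe hBpq) hset2) hset3) hset4

end stepstuff

section reachstuff
variable {V : Type*} [Fintype V] [DecidableEq V] {E : Finset (Finset V)}

lemma tight_of_reach {A B : Finset V} (hA : A ∈ tet E)
    (h : Relation.ReflTransGen (Adj E) A B) : TightConn (tet E) A B := by
  induction h with
  | refl => exact tconn_refl hA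
  | tail hR hAdj ih => exact tconn_step ih hAdj.1 hAdj.2.1 hAdj.2.2

lemma reach_of_wk : ∀ l : List V, 4 ≤ l.length →
    (∀ i, i + 4 ≤ l.length → ((l.drop i).take 4).toFinset ∈ tet E) →
    Relation.ReflTransGen (Adj E) ((l.take 4).toFinset) ((l.drop (l.length - 4)).toFinset) := by
  intro l
  induction l with
  | nil => intro h; simp at h
  | cons x l' ih =>
    intro hlen hwin
    rcases Nat.lt_or_ge l'.length 4 with hsm | hge
    · have hz : (x :: l').length - 4 = 0 := by simp at hlen ⊢; omega
      rw [hz, List.drop_zero]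
      have h4 : (x :: l').take 4 = x :: l' :=
        List.take_of_length_le (by simp at hlen ⊢; omega)
      rw [h4]
    · have hwin' : ∀ i, i + 4 ≤ l'.length → ((l'.drop i).take 4).toFinset ∈ tet E := by
        intro i hi
        have := hwin (i + 1) (by simp; omega)
        simpa [List.drop_succ_cons] using this
      have hrest := ih hge hwin'
      have hend : (x :: l').drop ((x :: l').length - 4) = l'.drop (l'.length - 4) := by
        have h1 : (x :: l').length - 4 = (l'.length - 4) + 1 := by simp; omega
        rw [h1, List.drop_succ_cons]
      rw [hend]
      refine Relation.ReflTransGen.head ?_ hrest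
      have hA : ((x :: l').take 4).toFinset ∈ tet E := by
        have := hwin 0 (by simp; omega)
        simpa using this
      have hB : (l'.take 4).toFinset ∈ tet E := by
        have := hwin 1 (by simp; omega)
        simpa [List.drop_succ_cons] using this
      refine ⟨hA, hB, ?_⟩
      have hred : (x :: l').take 4 = x :: l'.take 3 := rfl
      have hsub1 : (l'.take 3).toFinset ⊆ ((x :: l').take 4).toFinset := by
        rw [hred]
        intro z hz
        rw [List.mem_toFinset] at hz ⊢
        exact List.mem_cons_of_mem x hz
      have hsub2 : (l'.take 3).toFinset ⊆ (l'.take 4).toFinset := by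
        intro z hz
        rw [List.mem_toFinset] at hz ⊢
        have h33 : l'.take 3 = (l'.take 4).take 3 := by
          rw [List.take_take]; norm_num
        rw [h33] at hz
        exact List.take_subset _ _ hz
      have hcard : 3 ≤ (l'.take 3).toFinset.card := by
        have hA4 : ((x :: l').take 4).toFinset.card = 4 := tet_card hA
        rw [hred] at hA4
        have hins : (x :: l'.take 3).toFinset = insert x (l'.take 3).toFinset :=
          List.toFinset_cons
        rw [hins] at hA4
        have := Finset.card_insert_le x (l'.take 3).toFinset
        omega
      calc (3 : ℕ) ≤ (l'.take 3).toFinset.card := hcard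
        _ ≤ _ := Finset.card_le_card (Finset.subset_inter hsub1 hsub2)

lemma reach_of_tight {A B : Finset V} (h : TightConn (tet E) A B) :
    Relation.ReflTransGen (Adj E) A B := by
  obtain ⟨l, hlen, htake, hdrop, hwin⟩ := h
  rw [← htake, ← hdrop]
  exact reach_of_wk l hlen hwin

lemma reach_symm {A B : Finset V} (h : Relation.ReflTransGen (Adj E) A B) :
    Relation.ReflTransGen (Adj E) B A :=
  haveI : Std.Symm (Adj E) := ⟨fun _ _ hab => adj_symm hab⟩
  Std.Symm.symm _ _ h

end reachstuff

section mainstuff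
variable {V : Type*} [Fintype V] [DecidableEq V] {E : Finset (Finset V)}

lemma clash {X Y A B e f : Finset V} (hX : X ∈ tet E)
    (he : EdgeInComp E e X) (hf : EdgeInComp E f Y)
    (hA : A ∈ tet E) (hB : B ∈ tet E) (heA : e ⊆ A) (hfB : f ⊆ B)
    (he3 : 3 ≤ e.card) (hf3 : 3 ≤ f.card) (hAB : 3 ≤ (A ∩ B).card) :
    TightConn (tet E) X Y := by
  obtain ⟨L, hL, heL, hLX⟩ := he
  obtain ⟨M, hM, hfM, hMY⟩ := hf
  have r1 : Relation.ReflTransGen (Adj E) X L := reach_symm (reach_of_tight hLX)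
  have r2 : Relation.ReflTransGen (Adj E) L A :=
    Relation.ReflTransGen.single ⟨hL, hA, le_trans he3
      (Finset.card_le_card (Finset.subset_inter heL heA))⟩
  have r3 : Relation.ReflTransGen (Adj E) A B := Relation.ReflTransGen.single ⟨hA, hB, hAB⟩
  have r4 : Relation.ReflTransGen (Adj E) B M :=
    Relation.ReflTransGen.single ⟨hB, hM, le_trans hf3
      (Finset.card_le_card (Finset.subset_inter hfB hfM))⟩
  have r5 : Relation.ReflTransGen (Adj E) M Y := reach_of_tight hMY
  exact tight_of_reach hX ((((r1.trans r2).trans r3).trans r4).trans r5)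

lemma triple_ne (h3 : ∀ e ∈ E, e.card = 3) {a b c : V}
    (h : ({a, b, c} : Finset V) ∈ E) : a ≠ b ∧ a ≠ c ∧ b ≠ c := by
  have hc := h3 _ h
  refine ⟨?_, ?_, ?_⟩ <;> intro hEq <;> subst hEq
  · have h2 : ({a, a, c} : Finset V) = {a, c} := by ext z; simp
    rw [h2] at hc
    have h4 := Finset.card_insert_le a ({c} : Finset V)
    simp at h4; omega
  · have h2 : ({a, b, a} : Finset V) = {a, b} := by ext z; simp; tauto
    rw [h2] at hc
    have h4 := Finset.card_insert_le a ({b} : Finset V)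
    simp at h4; omega
  · have h2 : ({a, b, b} : Finset V) = {a, b} := by ext z; simp
    rw [h2] at hc
    have h4 := Finset.card_insert_le a ({b} : Finset V)
    simp at h4; omega

lemma quad_card {a b c d : V} (hab : a ≠ b) (hac : a ≠ c) (had : a ≠ d)
    (hbc : b ≠ c) (hbd : b ≠ d) (hcd : c ≠ d) : ({a, b, c, d} : Finset V).card = 4 := by
  rw [Finset.card_insert_of_notMem (by simp [hab, hac, had]),
    Finset.card_insert_of_notMem (by simp [hbc, hbd]),
    Finset.card_insert_of_notMem (by simp [hcd]), Finset.card_singleton]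

lemma mem_tet_quad {a b c d : V} (hab : a ≠ b) (hac : a ≠ c) (had : a ≠ d)
    (hbc : b ≠ c) (hbd : b ≠ d) (hcd : c ≠ d)
    (h1 : ({a, b, c} : Finset V) ∈ E) (h2 : ({a, b, d} : Finset V) ∈ E)
    (h3 : ({a, c, d} : Finset V) ∈ E) (h4 : ({b, c, d} : Finset V) ∈ E) :
    ({a, b, c, d} : Finset V) ∈ tet E := by
  have hc4 : ({a, b, c, d} : Finset V).card = 4 := quad_card hab hac had hbc hbd hcd
  rw [tet, Finset.mem_filter, Finset.mem_powersetCard]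
  refine ⟨⟨Finset.subset_univ _, hc4⟩, ?_⟩
  intro t ht
  rw [Finset.mem_powersetCard] at ht
  obtain ⟨hsub, hc3⟩ := ht
  obtain ⟨x, hxmem, hxt⟩ : ∃ x ∈ ({a, b, c, d} : Finset V), x ∉ t := by
    apply Finset.not_subset.mp
    intro hsub'
    have := Finset.card_le_card hsub'
    omega
  have htr : ∀ (u v w : V), u ≠ v → u ≠ w → v ≠ w → t ⊆ {u, v, w} → t = {u, v, w} := by
    intro u v w huv huw hvw hsub'
    apply Finset.eq_of_subset_of_card_le hsub'
    have : ({u, v, w} : Finset V).card = 3 := by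
      rw [Finset.card_insert_of_notMem (by simp [huv, huw]),
        Finset.card_insert_of_notMem (by simp [hvw]), Finset.card_singleton]
    omega
  simp only [Finset.mem_insert, Finset.mem_singleton] at hxmem
  rcases hxmem with rfl | rfl | rfl | rfl
  · have : t = {b, c, d} := htr b c d hbc hbd hcd (by
      intro z hz
      have hz2 := hsub hz
      simp only [Finset.mem_insert, Finset.mem_singleton] at hz2 ⊢
      rcases hz2 with rfl | h | h | h
      · exact absurd hz hxt
      all_goals tauto)
    rwa [this]
  · have : t = {a, c, d} := htr a c d hac had hcd (by
      intro z hz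
      have hz2 := hsub hz
      simp only [Finset.mem_insert, Finset.mem_singleton] at hz2 ⊢
      rcases hz2 with rfl | h | h | h
      · tauto
      · exact absurd hz (h ▸ hxt)
      all_goals tauto)
    rwa [this]
  · have : t = {a, b, d} := htr a b d hab had hbd (by
      intro z hz
      have hz2 := hsub hz
      simp only [Finset.mem_insert, Finset.mem_singleton] at hz2 ⊢
      rcases hz2 with rfl | h | h | h
      · tauto
      · tauto
      · exact absurd hz (h ▸ hxt)
      · tauto)
    rwa [this]
  · have : t = {a, b, c} := htr a b c hab hac hbc (by
      intro z hz
      have hz2 := hsub hz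
      simp only [Finset.mem_insert, Finset.mem_singleton] at hz2 ⊢
      rcases hz2 with rfl | h | h | h
      · tauto
      · tauto
      · tauto
      · exact absurd hz (h ▸ hxt))
    rwa [this]

end mainstuff

section endgame
variable {V : Type*} [Fintype V] [DecidableEq V] {E : Finset (Finset V)}

lemma tswap (a b c : V) : ({a, b, c} : Finset V) = {b, a, c} := by
  ext z; simp; tauto

lemma five_clash (h3 : ∀ e ∈ E, e.card = 3) {K2 K1 : Finset V} {v0 v1 v2 w z : V}
    (hw01 : ({v0, v1, w} : Finset V) ∈ E) (hw02 : ({v0, v2, w} : Finset V) ∈ E)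
    (hA2 : EdgeInComp E {v0, v1, w} K2) (hA1 : EdgeInComp E {v0, v2, w} K1)
    (hK2 : K2 ∈ tet E)
    (hS0 : ({v0, w, z} : Finset V) ∈ E) (hS1 : ({v1, w, z} : Finset V) ∈ E)
    (hS2 : ({v2, w, z} : Finset V) ∈ E)
    (hP : ({v0, v1, z} : Finset V) ∈ E) (hQ : ({v0, v2, z} : Finset V) ∈ E) :
    TightConn (tet E) K2 K1 := by
  obtain ⟨h01, h0w, h1w⟩ := triple_ne h3 hw01
  obtain ⟨h02, _, h2w⟩ := triple_ne h3 hw02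
  obtain ⟨_, h0z, hwz⟩ := triple_ne h3 hS0
  obtain ⟨_, _, h1z⟩ := triple_ne h3 hP
  obtain ⟨_, _, h2z⟩ := triple_ne h3 hQ
  have hK' : ({v0, v1, w, z} : Finset V) ∈ tet E :=
    mem_tet_quad h01 h0w h0z h1w h1z hwz hw01 hP hS0 hS1
  have hK'' : ({v0, v2, w, z} : Finset V) ∈ tet E :=
    mem_tet_quad h02 h0w h0z h2w h2z hwz hw02 hQ hS0 hS2
  have hsub1 : ({v0, v1, w} : Finset V) ⊆ {v0, v1, w, z} := by
    intro x hx; simp at hx ⊢; tauto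
  have hsub2 : ({v0, v2, w} : Finset V) ⊆ {v0, v2, w, z} := by
    intro x hx; simp at hx ⊢; tauto
  have hinter : 3 ≤ (({v0, v1, w, z} : Finset V) ∩ ({v0, v2, w, z} : Finset V)).card := by
    have hsub : ({v0, w, z} : Finset V) ⊆
        ({v0, v1, w, z} : Finset V) ∩ ({v0, v2, w, z} : Finset V) := by
      intro x hx; simp at hx ⊢; tauto
    calc (3 : ℕ) = ({v0, w, z} : Finset V).card := (h3 _ hS0).symm
      _ ≤ _ := Finset.card_le_card hsub
  exact clash hK2 hA2 hA1 hK' hK'' hsub1 hsub2 (by rw [h3 _ hw01]) (by rw [h3 _ hw02]) hinter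

end endgame

/-- If `δ₂(H) > 7n/9` and `K 0, K 1, K 2` are tetrahedra lying in three pairwise
distinct tight components of `𝒯(H)`, then there do not exist vertices
`v 0, v 1, v 2` such that, for each `i`, the set of tight components of edges
through `v i` is exactly the two components of `K j` for `j ≠ i`. -/
theorem no_alternating_triangle {V : Type*} [Fintype V] [DecidableEq V]
    (E : Finset (Finset V)) (h3 : ∀ e ∈ E, e.card = 3)
    (hδ : ∀ u v : V, u ≠ v →
      (7 : ℝ) * Fintype.card V / 9 <
        ((Finset.univ.filter fun w => ({u, v, w} : Finset V) ∈ E).card : ℝ))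
    (K : Fin 3 → Finset V) (hK : ∀ i, K i ∈ tet E)
    (hdist : ∀ i j, i ≠ j → ¬ TightConn (tet E) (K i) (K j)) :
    ¬ ∃ v : Fin 3 → V, ∀ i,
        (∀ e ∈ E, v i ∈ e → ∃ j, j ≠ i ∧ EdgeInComp E e (K j)) ∧
        (∀ j, j ≠ i → ∃ e ∈ E, v i ∈ e ∧ EdgeInComp E e (K j)) := by
  rintro ⟨v, hv⟩
  have hbad : ∀ u u' : V, u ≠ u' →
      ((Finset.univ.filter fun z => ¬ (({u, u', z} : Finset V) ∈ E)).card : ℝ) <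
        2 * (Fintype.card V : ℝ) / 9 := by
    intro u u' huu
    have h1 : (Finset.univ.filter fun z => (({u, u', z} : Finset V) ∈ E)).card
        + (Finset.univ.filter fun z => ¬ (({u, u', z} : Finset V) ∈ E)).card
        = Fintype.card V := by
      rw [Finset.card_filter_add_card_filter_not, Finset.card_univ]
    have h2 := hδ u u' huu
    have h1' : ((Finset.univ.filter fun z => (({u, u', z} : Finset V) ∈ E)).card : ℝ)
        + ((Finset.univ.filter fun z => ¬ (({u, u', z} : Finset V) ∈ E)).card : ℝ)
        = (Fintype.card V : ℝ) := by exact_mod_cast congrArg (Nat.cast : ℕ → ℝ) h1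
    linarith
  have hcard4 : (4 : ℕ) ≤ Fintype.card V := by
    rw [← tet_card (hK 0)]; exact Finset.card_le_univ _
  have huniq : ∀ e : Finset V, e ∈ E → ∀ i j : Fin 3, i ≠ j →
      EdgeInComp E e (K i) → EdgeInComp E e (K j) → False := by
    intro e heE i j hij hi hj
    obtain ⟨L, hL, heL, hLc⟩ := hi
    refine hdist i j hij (clash (hK i) ⟨L, hL, heL, hLc⟩ hj hL hL heL heL ?_ ?_ ?_)
    · rw [h3 e heE]
    · rw [h3 e heE]
    · rw [Finset.inter_self, tet_card hL]; omega
  have hfin3 : ∀ a i j k : Fin 3, a ≠ i → a ≠ j → i ≠ j → j ≠ k → i ≠ k → a = k := by decide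
  have hcomp2 : ∀ i j k : Fin 3, i ≠ j → j ≠ k → i ≠ k → ∀ e : Finset V, e ∈ E →
      v i ∈ e → v j ∈ e → EdgeInComp E e (K k) := by
    intro i j k hij hjk hik e heE hvi hvj
    obtain ⟨a, ha, hca⟩ := (hv i).1 e heE hvi
    obtain ⟨b, hb, hcb⟩ := (hv j).1 e heE hvj
    have hab : a = b := by
      by_contra hne
      exact huniq e heE a b hne hca hcb
    subst hab
    have hak : a = k := hfin3 a i j k ha hb hij hjk hik
    exact hak ▸ hca
  have hvne : ∀ i j : Fin 3, i ≠ j → v i ≠ v j := by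
    intro i j hij hEq
    obtain ⟨e, heE, hvi, hcomp⟩ := (hv i).2 j (Ne.symm hij)
    obtain ⟨m, hm, hcm⟩ := (hv j).1 e heE (hEq ▸ hvi)
    exact huniq e heE m j hm hcm hcomp
  have hnotri : ({v 0, v 1, v 2} : Finset V) ∉ E := by
    intro heE
    have h01 : EdgeInComp E {v 0, v 1, v 2} (K 2) :=
      hcomp2 0 1 2 (by decide) (by decide) (by decide) _ heE (by simp) (by simp)
    obtain ⟨m, hm, hcm⟩ := (hv 2).1 _ heE (by simp)
    exact huniq _ heE m 2 hm hcm h01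
  have hv01 := hvne 0 1 (by decide)
  have hv02 := hvne 0 2 (by decide)
  have hv12 := hvne 1 2 (by decide)
  obtain ⟨w, hw01, hw02, hw12⟩ : ∃ w, ({v 0, v 1, w} : Finset V) ∈ E ∧
      ({v 0, v 2, w} : Finset V) ∈ E ∧ ({v 1, v 2, w} : Finset V) ∈ E := by
    have hcover : (Finset.univ.filter (fun z => ¬ (({v 0, v 1, z} : Finset V) ∈ E ∧
        ({v 0, v 2, z} : Finset V) ∈ E ∧ ({v 1, v 2, z} : Finset V) ∈ E)))
        ⊆ (Finset.univ.filter fun z => ¬ (({v 0, v 1, z} : Finset V) ∈ E))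
          ∪ (Finset.univ.filter fun z => ¬ (({v 0, v 2, z} : Finset V) ∈ E))
          ∪ (Finset.univ.filter fun z => ¬ (({v 1, v 2, z} : Finset V) ∈ E)) := by
      intro x hx
      simp only [Finset.mem_filter, Finset.mem_union, Finset.mem_univ, true_and] at hx ⊢
      tauto
    have hsplit : (Finset.univ.filter (fun z => (({v 0, v 1, z} : Finset V) ∈ E ∧
        ({v 0, v 2, z} : Finset V) ∈ E ∧ ({v 1, v 2, z} : Finset V) ∈ E))).card
        + (Finset.univ.filter (fun z => ¬ (({v 0, v 1, z} : Finset V) ∈ E ∧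
        ({v 0, v 2, z} : Finset V) ∈ E ∧ ({v 1, v 2, z} : Finset V) ∈ E))).card
        = Fintype.card V := by
      rw [Finset.card_filter_add_card_filter_not, Finset.card_univ]
    have hcb := Finset.card_le_card hcover
    have hun : ((Finset.univ.filter fun z => ¬ (({v 0, v 1, z} : Finset V) ∈ E))
          ∪ (Finset.univ.filter fun z => ¬ (({v 0, v 2, z} : Finset V) ∈ E))
          ∪ (Finset.univ.filter fun z => ¬ (({v 1, v 2, z} : Finset V) ∈ E))).card
        ≤ (Finset.univ.filter fun z => ¬ (({v 0, v 1, z} : Finset V) ∈ E)).card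
          + (Finset.univ.filter fun z => ¬ (({v 0, v 2, z} : Finset V) ∈ E)).card
          + (Finset.univ.filter fun z => ¬ (({v 1, v 2, z} : Finset V) ∈ E)).card := by
      refine le_trans (Finset.card_union_le _ _) ?_
      have := Finset.card_union_le (Finset.univ.filter fun z => ¬ (({v 0, v 1, z} : Finset V) ∈ E))
        (Finset.univ.filter fun z => ¬ (({v 0, v 2, z} : Finset V) ∈ E))
      omega
    have b1 := hbad (v 0) (v 1) hv01
    have b2 := hbad (v 0) (v 2) hv02
    have b3 := hbad (v 1) (v 2) hv12
    have hWpos : 0 < (Finset.univ.filter (fun z => (({v 0, v 1, z} : Finset V) ∈ E ∧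
        ({v 0, v 2, z} : Finset V) ∈ E ∧ ({v 1, v 2, z} : Finset V) ∈ E))).card := by
      have hc4 : (4 : ℝ) ≤ (Fintype.card V : ℝ) := by exact_mod_cast hcard4
      by_contra hzero
      push_neg at hzero
      have h0 : (Finset.univ.filter (fun z => (({v 0, v 1, z} : Finset V) ∈ E ∧
        ({v 0, v 2, z} : Finset V) ∈ E ∧ ({v 1, v 2, z} : Finset V) ∈ E))).card = 0 := by omega
      rw [h0, zero_add] at hsplit
      have hcb2 := le_trans hcb hun
      rw [hsplit] at hcb2
      have hcb' := (Nat.cast_le (α := ℝ)).mpr hcb2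
      push_cast at hcb'
      linarith
    obtain ⟨w, hwmem⟩ := Finset.card_pos.mp hWpos
    rw [Finset.mem_filter] at hwmem
    exact ⟨w, hwmem.2⟩
  -- components of the three edges through w
  have hA2 : EdgeInComp E {v 0, v 1, w} (K 2) :=
    hcomp2 0 1 2 (by decide) (by decide) (by decide) _ hw01 (by simp) (by simp)
  have hA1 : EdgeInComp E {v 0, v 2, w} (K 1) :=
    hcomp2 0 2 1 (by decide) (by decide) (by decide) _ hw02 (by simp) (by simp)
  have hA0 : EdgeInComp E {v 1, v 2, w} (K 0) :=
    hcomp2 1 2 0 (by decide) (by decide) (by decide) _ hw12 (by simp) (by simp)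
  have hsw10 : ({v 1, v 0, w} : Finset V) ∈ E := by rw [tswap]; exact hw01
  have hsw20 : ({v 2, v 0, w} : Finset V) ∈ E := by rw [tswap]; exact hw02
  have hsw21 : ({v 2, v 1, w} : Finset V) ∈ E := by rw [tswap]; exact hw12
  have hA2s : EdgeInComp E {v 1, v 0, w} (K 2) := by rw [tswap]; exact hA2
  have hA1s : EdgeInComp E {v 2, v 0, w} (K 1) := by rw [tswap]; exact hA1
  have hA0s : EdgeInComp E {v 2, v 1, w} (K 0) := by rw [tswap]; exact hA0
  -- emptiness of triple intersections
  have hPQ : ∀ z : V, ({v 0, w, z} : Finset V) ∈ E → ({v 1, w, z} : Finset V) ∈ E →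
      ({v 2, w, z} : Finset V) ∈ E → ({v 0, v 1, z} : Finset V) ∈ E →
      ({v 0, v 2, z} : Finset V) ∈ E → False := by
    intro z hS0 hS1 hS2 hP hQ
    exact hdist 2 1 (by decide) (five_clash h3 hw01 hw02 hA2 hA1 (hK 2) hS0 hS1 hS2 hP hQ)
  have hPR : ∀ z : V, ({v 0, w, z} : Finset V) ∈ E → ({v 1, w, z} : Finset V) ∈ E →
      ({v 2, w, z} : Finset V) ∈ E → ({v 0, v 1, z} : Finset V) ∈ E →
      ({v 1, v 2, z} : Finset V) ∈ E → False := by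
    intro z hS0 hS1 hS2 hP hR
    have hPs : ({v 1, v 0, z} : Finset V) ∈ E := by rw [tswap]; exact hP
    exact hdist 2 0 (by decide) (five_clash h3 hsw10 hw12 hA2s hA0 (hK 2) hS1 hS0 hS2 hPs hR)
  have hQR : ∀ z : V, ({v 0, w, z} : Finset V) ∈ E → ({v 1, w, z} : Finset V) ∈ E →
      ({v 2, w, z} : Finset V) ∈ E → ({v 0, v 2, z} : Finset V) ∈ E →
      ({v 1, v 2, z} : Finset V) ∈ E → False := by
    intro z hS0 hS1 hS2 hQ hR
    have hQs : ({v 2, v 0, z} : Finset V) ∈ E := by rw [tswap]; exact hQ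
    have hRs : ({v 2, v 1, z} : Finset V) ∈ E := by rw [tswap]; exact hR
    exact hdist 1 0 (by decide) (five_clash h3 hsw20 hsw21 hA1s hA0s (hK 1) hS2 hS0 hS1 hQs hRs)
  -- the counting contradiction
  set S := Finset.univ.filter (fun z : V => ({v 0, w, z} : Finset V) ∈ E ∧
    ({v 1, w, z} : Finset V) ∈ E ∧ ({v 2, w, z} : Finset V) ∈ E) with hSdef
  set SP := S.filter (fun z : V => ({v 0, v 1, z} : Finset V) ∈ E) with hSPdef
  set SQ := S.filter (fun z : V => ({v 0, v 2, z} : Finset V) ∈ E) with hSQdef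
  set SR := S.filter (fun z : V => ({v 1, v 2, z} : Finset V) ∈ E) with hSRdef
  have hmemS : ∀ z ∈ S, ({v 0, w, z} : Finset V) ∈ E ∧
      ({v 1, w, z} : Finset V) ∈ E ∧ ({v 2, w, z} : Finset V) ∈ E := by
    intro z hz
    rw [hSdef, Finset.mem_filter] at hz
    exact hz.2
  have hdisjPQ : Disjoint SP SQ := by
    rw [Finset.disjoint_left]
    intro z hz1 hz2
    rw [hSPdef, Finset.mem_filter] at hz1
    rw [hSQdef, Finset.mem_filter] at hz2
    obtain ⟨hS0, hS1, hS2⟩ := hmemS z hz1.1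
    exact hPQ z hS0 hS1 hS2 hz1.2 hz2.2
  have hdisjPR : Disjoint SP SR := by
    rw [Finset.disjoint_left]
    intro z hz1 hz2
    rw [hSPdef, Finset.mem_filter] at hz1
    rw [hSRdef, Finset.mem_filter] at hz2
    obtain ⟨hS0, hS1, hS2⟩ := hmemS z hz1.1
    exact hPR z hS0 hS1 hS2 hz1.2 hz2.2
  have hdisjQR : Disjoint SQ SR := by
    rw [Finset.disjoint_left]
    intro z hz1 hz2
    rw [hSQdef, Finset.mem_filter] at hz1
    rw [hSRdef, Finset.mem_filter] at hz2
    obtain ⟨hS0, hS1, hS2⟩ := hmemS z hz1.1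
    exact hQR z hS0 hS1 hS2 hz1.2 hz2.2
  have hsum : SP.card + SQ.card + SR.card ≤ S.card := by
    have hsub : SP ∪ SQ ∪ SR ⊆ S := by
      intro z hz
      simp only [Finset.mem_union] at hz
      rcases hz with (h | h) | h <;> exact Finset.filter_subset _ _ h
    have hc1 : (SP ∪ SQ).card = SP.card + SQ.card := Finset.card_union_of_disjoint hdisjPQ
    have hc2 : (SP ∪ SQ ∪ SR).card = (SP ∪ SQ).card + SR.card :=
      Finset.card_union_of_disjoint (Finset.disjoint_union_left.mpr ⟨hdisjPR, hdisjQR⟩)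
    calc SP.card + SQ.card + SR.card = (SP ∪ SQ ∪ SR).card := by rw [hc2, hc1]
      _ ≤ S.card := Finset.card_le_card hsub
  -- lower bound for S
  have hw0 : v 0 ≠ w := (triple_ne h3 hw01).2.1
  have hw1 : v 1 ≠ w := (triple_ne h3 hw01).2.2
  have hw2 : v 2 ≠ w := (triple_ne h3 hw02).2.2
  have bS0 := hbad (v 0) w hw0
  have bS1 := hbad (v 1) w hw1
  have bS2 := hbad (v 2) w hw2
  have bP := hbad (v 0) (v 1) hv01
  have bQ := hbad (v 0) (v 2) hv02
  have bR := hbad (v 1) (v 2) hv12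
  have hSsplit : S.card + (Finset.univ.filter (fun z : V => ¬(({v 0, w, z} : Finset V) ∈ E ∧
      ({v 1, w, z} : Finset V) ∈ E ∧ ({v 2, w, z} : Finset V) ∈ E))).card = Fintype.card V := by
    rw [hSdef, Finset.card_filter_add_card_filter_not, Finset.card_univ]
  have hScover : (Finset.univ.filter (fun z : V => ¬(({v 0, w, z} : Finset V) ∈ E ∧
      ({v 1, w, z} : Finset V) ∈ E ∧ ({v 2, w, z} : Finset V) ∈ E))).card
      ≤ (Finset.univ.filter fun z : V => ¬ (({v 0, w, z} : Finset V) ∈ E)).card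
        + (Finset.univ.filter fun z : V => ¬ (({v 1, w, z} : Finset V) ∈ E)).card
        + (Finset.univ.filter fun z : V => ¬ (({v 2, w, z} : Finset V) ∈ E)).card := by
    have hsub : (Finset.univ.filter (fun z : V => ¬(({v 0, w, z} : Finset V) ∈ E ∧
        ({v 1, w, z} : Finset V) ∈ E ∧ ({v 2, w, z} : Finset V) ∈ E)))
        ⊆ (Finset.univ.filter fun z : V => ¬ (({v 0, w, z} : Finset V) ∈ E))
          ∪ (Finset.univ.filter fun z : V => ¬ (({v 1, w, z} : Finset V) ∈ E))
          ∪ (Finset.univ.filter fun z : V => ¬ (({v 2, w, z} : Finset V) ∈ E)) := by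
      intro x hx
      simp only [Finset.mem_filter, Finset.mem_union, Finset.mem_univ, true_and] at hx ⊢
      tauto
    refine le_trans (Finset.card_le_card hsub) ?_
    refine le_trans (Finset.card_union_le _ _) ?_
    have := Finset.card_union_le (Finset.univ.filter fun z : V => ¬ (({v 0, w, z} : Finset V) ∈ E))
      (Finset.univ.filter fun z : V => ¬ (({v 1, w, z} : Finset V) ∈ E))
    omega
  -- lower bounds for SP, SQ, SR
  have hSPsplit : SP.card + (S.filter (fun z : V => ¬ (({v 0, v 1, z} : Finset V) ∈ E))).card
      = S.card := by
    rw [hSPdef, Finset.card_filter_add_card_filter_not]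
  have hSQsplit : SQ.card + (S.filter (fun z : V => ¬ (({v 0, v 2, z} : Finset V) ∈ E))).card
      = S.card := by
    rw [hSQdef, Finset.card_filter_add_card_filter_not]
  have hSRsplit : SR.card + (S.filter (fun z : V => ¬ (({v 1, v 2, z} : Finset V) ∈ E))).card
      = S.card := by
    rw [hSRdef, Finset.card_filter_add_card_filter_not]
  have hSPb : (S.filter (fun z : V => ¬ (({v 0, v 1, z} : Finset V) ∈ E))).card
      ≤ (Finset.univ.filter (fun z : V => ¬ (({v 0, v 1, z} : Finset V) ∈ E))).card :=
    Finset.card_le_card (Finset.filter_subset_filter _ (Finset.subset_univ S))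
  have hSQb : (S.filter (fun z : V => ¬ (({v 0, v 2, z} : Finset V) ∈ E))).card
      ≤ (Finset.univ.filter (fun z : V => ¬ (({v 0, v 2, z} : Finset V) ∈ E))).card :=
    Finset.card_le_card (Finset.filter_subset_filter _ (Finset.subset_univ S))
  have hSRb : (S.filter (fun z : V => ¬ (({v 1, v 2, z} : Finset V) ∈ E))).card
      ≤ (Finset.univ.filter (fun z : V => ¬ (({v 1, v 2, z} : Finset V) ∈ E))).card :=
    Finset.card_le_card (Finset.filter_subset_filter _ (Finset.subset_univ S))
  -- cast everything to the reals and finish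
  have c1 := congrArg (Nat.cast : ℕ → ℝ) hSsplit
  have c2 := (Nat.cast_le (α := ℝ)).mpr hScover
  have c3 := congrArg (Nat.cast : ℕ → ℝ) hSPsplit
  have c4 := congrArg (Nat.cast : ℕ → ℝ) hSQsplit
  have c5 := congrArg (Nat.cast : ℕ → ℝ) hSRsplit
  have c6 := (Nat.cast_le (α := ℝ)).mpr hSPb
  have c7 := (Nat.cast_le (α := ℝ)).mpr hSQb
  have c8 := (Nat.cast_le (α := ℝ)).mpr hSRb
  have c9 := (Nat.cast_le (α := ℝ)).mpr hsum
  push_cast at c1 c2 c3 c4 c5 c6 c7 c8 c9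
  linarith
end

section
/- Let H be a 3-graph on n vertices with δ₂(H) > 7n/9 such that the tetrahedral graph 𝒯(H) has at least two tight components. Then there exists a pair {x,y} of distinct vertices of H and two distinct tight components T₁, T₂ such that some edge containing {x,y} lies in T₁ and some edge containing {x,y} lies in T₂. -/
open Finset

set_option maxHeartbeats 1000000
set_option linter.unusedSectionVars false

section
variable {V : Type*} [DecidableEq V]

def TAdj (T : Finset (Finset V)) (A B : Finset V) : Prop :=
  A ∈ T ∧ B ∈ T ∧ 3 ≤ (A ∩ B).card

lemma take3_subset_take4 (l : List V) : l.take 3 ⊆ l.take 4 := by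
  rw [show l.take 3 = (l.take 4).take 3 by rw [List.take_take]; norm_num]
  exact List.take_subset _ _

lemma list_nodup_of_card {l : List V} (h : l.toFinset.card = l.length) : l.Nodup := by
  rw [List.card_toFinset] at h
  exact List.dedup_eq_self.mp ((l.dedup_sublist).eq_of_length h)

lemma quad_rot (p q r s : V) : ({p,q,r,s} : Finset V) = {q,r,s,p} := by
  ext y; simp; tauto

lemma last4_cons {l : List V} (hlen : 4 ≤ l.length) (x : V) :
    (x :: l).drop ((x :: l).length - 4) = l.drop (l.length - 4) := by
  have h : (x :: l).length - 4 = (l.length - 4) + 1 := by simp; omega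
  rw [h, List.drop_succ_cons]

lemma cons_window {T : Finset (Finset V)} {l : List V}
    (hw : ∀ i, i + 4 ≤ l.length → ((l.drop i).take 4).toFinset ∈ T)
    {x : V} (h0 : (((x :: l).drop 0).take 4).toFinset ∈ T) :
    ∀ i, i + 4 ≤ (x :: l).length → (((x :: l).drop i).take 4).toFinset ∈ T := by
  intro i hi
  cases i with
  | zero => exact h0
  | succ j => simp only [List.drop_succ_cons]; exact hw j (by simp at hi; omega)
end

section
variable {V : Type*} [DecidableEq V]

lemma walk_to_path (T : Finset (Finset V)) (hT4 : ∀ A ∈ T, A.card = 4) :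
    ∀ l : List V, 4 ≤ l.length →
      (∀ i, i + 4 ≤ l.length → ((l.drop i).take 4).toFinset ∈ T) →
      Relation.ReflTransGen (TAdj T) (l.take 4).toFinset
        ((l.drop (l.length - 4)).toFinset) := by
  intro l
  induction l with
  | nil => intro h; simp at h
  | cons x l ih =>
    intro h4 hw
    rcases Nat.lt_or_ge l.length 4 with hlt | hge
    · have hlen : (x :: l).length = 4 := by simp at h4 ⊢; omega
      have h0 : (x :: l).length - 4 = 0 := by omega
      rw [h0, List.drop_zero, List.take_of_length_le (le_of_eq hlen)]
    · have hw' : ∀ i, i + 4 ≤ l.length → ((l.drop i).take 4).toFinset ∈ T := by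
        intro i hi
        have := hw (i + 1) (by simp; omega)
        simpa [List.drop_succ_cons] using this
      have hrec := ih hge hw'
      rw [last4_cons hge x]
      refine Relation.ReflTransGen.head ?_ hrec
      have h0 : ((x :: l).take 4).toFinset ∈ T := by
        have := hw 0 (by simpa using h4)
        simpa using this
      have h1 : (l.take 4).toFinset ∈ T := by
        have := hw 1 (by simp; omega)
        simpa [List.drop_succ_cons] using this
      refine ⟨h0, h1, ?_⟩
      have htake : (x :: l).take 4 = x :: l.take 3 := rfl
      have hsub : (l.take 3).toFinset ⊆ ((x :: l).take 4).toFinset ∩ (l.take 4).toFinset := by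
        apply Finset.subset_inter
        · intro y hy
          simp only [List.mem_toFinset] at hy ⊢
          rw [htake]
          exact List.mem_cons_of_mem _ hy
        · intro y hy
          simp only [List.mem_toFinset] at hy ⊢
          exact take3_subset_take4 l hy
      refine le_trans ?_ (Finset.card_le_card hsub)
      have hc4 : ((x :: l).take 4).toFinset.card = 4 := hT4 _ h0
      rw [htake, List.toFinset_cons] at hc4
      have := Finset.card_insert_le x (l.take 3).toFinset
      omega
end

section
variable {V : Type*} [DecidableEq V]

lemma tight_head (T : Finset (Finset V)) (hT4 : ∀ A ∈ T, A.card = 4)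
    {a c L : Finset V} (ha : a ∈ T) (hc : c ∈ T) (hi3 : 3 ≤ (a ∩ c).card)
    (htc : TightConn T c L) : TightConn T a L := by
  by_cases hac : a = c
  · rwa [hac]
  obtain ⟨l, hlen, hfirst, hlast, hwin⟩ := htc
  obtain ⟨p, q, r, s, rest, rfl⟩ : ∃ p q r s rest, l = p::q::r::s::rest := by
    rcases l with _|⟨p,_|⟨q,_|⟨r,_|⟨s,rest⟩⟩⟩⟩ <;> simp at hlen
    exact ⟨p, q, r, s, rest, rfl⟩
  set l : List V := p::q::r::s::rest with hl
  have hfirst' : ([p,q,r,s] : List V).toFinset = c := hfirst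
  have hfirstS : ({p,q,r,s} : Finset V) = c := by simpa using hfirst'
  have ha4 : a.card = 4 := hT4 a ha
  have hc4 : c.card = 4 := hT4 c hc
  -- nodup of p q r s
  have hnd : ([p,q,r,s] : List V).Nodup :=
    list_nodup_of_card (by rw [hfirst', hc4]; rfl)
  simp only [List.nodup_cons, List.mem_cons, List.not_mem_nil, or_false,
    List.mem_singleton, not_or, List.nodup_nil, and_true] at hnd
  obtain ⟨⟨hpq, hpr, hps⟩, ⟨hqr, hqs⟩, hrs, -⟩ := hnd
  -- intersection has card exactly 3
  have hle : (a ∩ c).card ≤ 4 := le_trans (Finset.card_le_card Finset.inter_subset_left) (le_of_eq ha4)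
  have hne4 : (a ∩ c).card ≠ 4 := by
    intro h4'
    have h1 : a ∩ c = a := Finset.eq_of_subset_of_card_le Finset.inter_subset_left (by omega)
    have h2 : a ⊆ c := by rw [← h1]; exact Finset.inter_subset_right
    exact hac (Finset.eq_of_subset_of_card_le h2 (by omega))
  have hic : (a ∩ c).card = 3 := by omega
  obtain ⟨w, hw⟩ : (a \ c).Nonempty := by
    rw [← Finset.card_pos]
    have := Finset.card_sdiff_add_card_inter a c
    omega
  obtain ⟨z, hz⟩ : (c \ a).Nonempty := by
    rw [← Finset.card_pos]
    have := Finset.card_sdiff_add_card_inter c a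
    rw [Finset.inter_comm] at this
    omega
  rw [Finset.mem_sdiff] at hw hz
  have ha_eq : a = insert w (a ∩ c) := by
    have hsub : insert w (a ∩ c) ⊆ a := by
      intro y hy
      rcases Finset.mem_insert.mp hy with rfl | hy
      · exact hw.1
      · exact Finset.mem_of_mem_inter_left hy
    have hcard : a.card ≤ (insert w (a ∩ c)).card := by
      rw [Finset.card_insert_of_notMem (fun hmem => hw.2 (Finset.mem_of_mem_inter_right hmem))]
      omega
    exact (Finset.eq_of_subset_of_card_le hsub hcard).symm
  have hinter : a ∩ c = c.erase z := by
    have hsub2 : a ∩ c ⊆ c.erase z := by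
      intro y hy
      refine Finset.mem_erase.mpr ⟨?_, Finset.mem_of_mem_inter_right hy⟩
      rintro rfl
      exact hz.2 (Finset.mem_of_mem_inter_left hy)
    exact Finset.eq_of_subset_of_card_le hsub2
      (by rw [Finset.card_erase_of_mem hz.1]; omega)
  -- rotated window sets equal c
  have e1 : ([s,p,q,r] : List V).toFinset = c := by
    have h' : ([s,p,q,r] : List V).toFinset = ({s,p,q,r} : Finset V) := by simp
    rw [h', ← quad_rot r s p q, ← quad_rot q r s p, ← quad_rot p q r s, hfirstS]
  have e2 : ([r,s,p,q] : List V).toFinset = c := by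
    have h' : ([r,s,p,q] : List V).toFinset = ({r,s,p,q} : Finset V) := by simp
    rw [h', ← quad_rot q r s p, ← quad_rot p q r s, hfirstS]
  have e3 : ([q,r,s,p] : List V).toFinset = c := by
    have h' : ([q,r,s,p] : List V).toFinset = ({q,r,s,p} : Finset V) := by simp
    rw [h', ← quad_rot p q r s, hfirstS]
  -- erase computations
  have heq_p : ({p,q,r,s} : Finset V).erase p = {q,r,s} := by
    have hsh : ({p,q,r,s} : Finset V) = insert p {q,r,s} := rfl
    rw [hsh, Finset.erase_insert ?_]
    simp only [Finset.mem_insert, Finset.mem_singleton]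
    push_neg
    exact ⟨hpq, hpr, hps⟩
  have heq_q : ({p,q,r,s} : Finset V).erase q = {r,s,p} := by
    have hsh : ({p,q,r,s} : Finset V) = insert q {r,s,p} := quad_rot p q r s
    rw [hsh, Finset.erase_insert ?_]
    simp only [Finset.mem_insert, Finset.mem_singleton]
    push_neg
    exact ⟨hqr, hqs, fun h => hpq h.symm⟩
  have heq_r : ({p,q,r,s} : Finset V).erase r = {s,p,q} := by
    have hsh : ({p,q,r,s} : Finset V) = insert r {s,p,q} := (quad_rot p q r s).trans (quad_rot q r s p)
    rw [hsh, Finset.erase_insert ?_]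
    simp only [Finset.mem_insert, Finset.mem_singleton]
    push_neg
    exact ⟨hrs, fun h => hpr h.symm, fun h => hqr h.symm⟩
  have heq_s : ({p,q,r,s} : Finset V).erase s = {p,q,r} := by
    have hsh : ({p,q,r,s} : Finset V) = insert s {p,q,r} := ((quad_rot p q r s).trans (quad_rot q r s p)).trans (quad_rot r s p q)
    rw [hsh, Finset.erase_insert ?_]
    simp only [Finset.mem_insert, Finset.mem_singleton]
    push_neg
    exact ⟨fun h => hps h.symm, fun h => hqs h.symm, fun h => hrs h.symm⟩
  -- iterated window extensions (rotations, all windows = c)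
  have hw1 : ∀ i, i + 4 ≤ (s::l).length → (((s::l).drop i).take 4).toFinset ∈ T :=
    cons_window hwin (by rw [show (((s::l).drop 0).take 4) = [s,p,q,r] from rfl, e1]; exact hc)
  have hw2 : ∀ i, i + 4 ≤ (r::s::l).length → (((r::s::l).drop i).take 4).toFinset ∈ T :=
    cons_window hw1 (by rw [show (((r::s::l).drop 0).take 4) = [r,s,p,q] from rfl, e2]; exact hc)
  have hw3 : ∀ i, i + 4 ≤ (q::r::s::l).length → (((q::r::s::l).drop i).take 4).toFinset ∈ T :=
    cons_window hw2 (by rw [show (((q::r::s::l).drop 0).take 4) = [q,r,s,p] from rfl, e3]; exact hc)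
  have hlen' : 4 ≤ l.length := hlen
  -- case on z
  have hzc : z = p ∨ z = q ∨ z = r ∨ z = s := by
    have := hz.1
    rw [← hfirstS] at this
    simpa using this
  rcases hzc with rfl | rfl | rfl | rfl
  · -- z = p : new list w::q::r::s::l
    refine ⟨w::q::r::s::l, by simp only [List.length_cons]; omega, ?_, ?_, ?_⟩
    · show ([w,q,r,s] : List V).toFinset = a
      rw [ha_eq, hinter, ← hfirstS, heq_p]; simp
    · rw [last4_cons (by simp; omega) w, last4_cons (by simp; omega) q, last4_cons (by simp; omega) r,
        last4_cons hlen' s]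
      exact hlast
    · exact cons_window hw3
        (by rw [show (((w::q::r::s::l).drop 0).take 4) = [w,q,r,s] from rfl,
              show ([w,q,r,s] : List V).toFinset = a by rw [ha_eq, hinter, ← hfirstS, heq_p]; simp]
            exact ha)
  · -- z = q : new list w::r::s::l
    refine ⟨w::r::s::l, by simp only [List.length_cons]; omega, ?_, ?_, ?_⟩
    · show ([w,r,s,p] : List V).toFinset = a
      rw [ha_eq, hinter, ← hfirstS, heq_q]; simp
    · rw [last4_cons (by simp; omega) w, last4_cons (by simp; omega) r, last4_cons hlen' s]
      exact hlast
    · exact cons_window hw2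
        (by rw [show (((w::r::s::l).drop 0).take 4) = [w,r,s,p] from rfl,
              show ([w,r,s,p] : List V).toFinset = a by rw [ha_eq, hinter, ← hfirstS, heq_q]; simp]
            exact ha)
  · -- z = r : new list w::s::l
    refine ⟨w::s::l, by simp only [List.length_cons]; omega, ?_, ?_, ?_⟩
    · show ([w,s,p,q] : List V).toFinset = a
      rw [ha_eq, hinter, ← hfirstS, heq_r]; simp
    · rw [last4_cons (by simp; omega) w, last4_cons hlen' s]
      exact hlast
    · exact cons_window hw1
        (by rw [show (((w::s::l).drop 0).take 4) = [w,s,p,q] from rfl,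
              show ([w,s,p,q] : List V).toFinset = a by rw [ha_eq, hinter, ← hfirstS, heq_r]; simp]
            exact ha)
  · -- z = s : new list w::l
    refine ⟨w::l, by simp only [List.length_cons]; omega, ?_, ?_, ?_⟩
    · show ([w,p,q,r] : List V).toFinset = a
      rw [ha_eq, hinter, ← hfirstS, heq_s]; simp
    · rw [last4_cons hlen' w]
      exact hlast
    · exact cons_window hwin
        (by rw [show (((w::l).drop 0).take 4) = [w,p,q,r] from rfl,
              show ([w,p,q,r] : List V).toFinset = a by rw [ha_eq, hinter, ← hfirstS, heq_s]; simp]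
            exact ha)
end

section
variable {V : Type*} [DecidableEq V]

lemma tight_refl (T : Finset (Finset V)) (hT4 : ∀ A ∈ T, A.card = 4)
    {K : Finset V} (hK : K ∈ T) : TightConn T K K := by
  have hcard : K.toList.length = 4 := by rw [Finset.length_toList, hT4 K hK]
  have htake : K.toList.take 4 = K.toList := List.take_of_length_le (le_of_eq hcard)
  refine ⟨K.toList, le_of_eq hcard.symm, ?_, ?_, ?_⟩
  · rw [htake, Finset.toList_toFinset]
  · rw [hcard]
    simp only [Nat.sub_self, List.drop_zero, Finset.toList_toFinset]
  · intro i hi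
    rw [hcard] at hi
    have : i = 0 := by omega
    subst this
    simp only [List.drop_zero]
    rw [htake, Finset.toList_toFinset]
    exact hK

lemma path_to_walk (T : Finset (Finset V)) (hT4 : ∀ A ∈ T, A.card = 4)
    {K L : Finset V} (h : Relation.ReflTransGen (TAdj T) K L) :
    K ∈ T → TightConn T K L := by
  induction h using Relation.ReflTransGen.head_induction_on with
  | refl => intro hL; exact tight_refl T hT4 hL
  | head hadj _ ih =>
    intro _
    exact tight_head T hT4 hadj.1 hadj.2.1 hadj.2.2 (ih hadj.2.1)

lemma tightconn_to_path (T : Finset (Finset V)) (hT4 : ∀ A ∈ T, A.card = 4)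
    {A B : Finset V} (h : TightConn T A B) :
    Relation.ReflTransGen (TAdj T) A B := by
  obtain ⟨l, hlen, hf, hl, hw⟩ := h
  have := walk_to_path T hT4 l hlen hw
  rwa [hf, hl] at this

lemma tadj_of_common (T : Finset (Finset V)) {A B g : Finset V}
    (hA : A ∈ T) (hB : B ∈ T) (hgA : g ⊆ A) (hgB : g ⊆ B) (hg : g.card = 3) :
    TAdj T A B :=
  ⟨hA, hB, by
    calc 3 = g.card := hg.symm
    _ ≤ (A ∩ B).card := Finset.card_le_card (Finset.subset_inter hgA hgB)⟩
end

section
variable {V : Type*} [Fintype V] [DecidableEq V]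

lemma card3_ne_s12 {E : Finset (Finset V)} (h3 : ∀ e ∈ E, e.card = 3)
    {x y z : V} (h : ({x, y, z} : Finset V) ∈ E) : x ≠ y ∧ x ≠ z ∧ y ≠ z := by
  have hc : ({x, y, z} : Finset V).card = 3 := h3 _ h
  have hnd : ([x, y, z] : List V).Nodup := by
    apply list_nodup_of_card
    have : ([x, y, z] : List V).toFinset = ({x, y, z} : Finset V) := by simp
    rw [this, hc]; rfl
  simp only [List.nodup_cons, List.mem_cons, List.not_mem_nil, or_false,
    List.mem_singleton, not_or, List.nodup_nil, and_true] at hnd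
  exact ⟨hnd.1.1, hnd.1.2, hnd.2.1⟩


end

/-- If `δ₂(H) > 7n/9` and `𝒯(H)` has at least two tight components, then there
is a pair `{x, y}` of distinct vertices and two edges containing `{x, y}` lying
in distinct tight components of `𝒯(H)`. -/
theorem pair_in_two_distinct_components {V : Type*} [Fintype V] [DecidableEq V]
    (E : Finset (Finset V)) (h3 : ∀ e ∈ E, e.card = 3)
    (hδ : ∀ u v : V, u ≠ v →
      (7 : ℝ) * Fintype.card V / 9 <
        ((Finset.univ.filter fun w => ({u, v, w} : Finset V) ∈ E).card : ℝ))
    (hcomp : ∃ K₁ K₂ : Finset V, K₁ ∈ tet E ∧ K₂ ∈ tet E ∧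
      ¬ TightConn (tet E) K₁ K₂) :
    ∃ x y : V, x ≠ y ∧ ∃ e f : Finset V, e ∈ E ∧ f ∈ E ∧
      ({x, y} : Finset V) ⊆ e ∧ ({x, y} : Finset V) ⊆ f ∧ ¬ EdgeConn E e f := by
  obtain ⟨K₁, K₂, hK₁, hK₂, hnc⟩ := hcomp
  by_contra hgoal
  push_neg at hgoal
  -- basic facts about tet
  have hT4 : ∀ A ∈ tet E, A.card = 4 := fun A hA =>
    (Finset.mem_powersetCard.mp (Finset.mem_filter.mp hA).1).2
  have htetE : ∀ A ∈ tet E, ∀ t ⊆ A, t.card = 3 → t ∈ E := by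
    intro A hA t ht hc
    exact (Finset.mem_filter.mp hA).2 t (Finset.mem_powersetCard.mpr ⟨ht, hc⟩)
  -- counting: common cherry-neighbour of two pairs
  have key : ∀ u v u' v' : V, u ≠ v → u' ≠ v' →
      ∃ w : V, ({u, v, w} : Finset V) ∈ E ∧ ({u', v', w} : Finset V) ∈ E := by
    intro u v u' v' huv huv'
    set A := Finset.univ.filter fun w => ({u, v, w} : Finset V) ∈ E with hA
    set B := Finset.univ.filter fun w => ({u', v', w} : Finset V) ∈ E with hB
    have hcard : (A ∪ B).card + (A ∩ B).card = A.card + B.card :=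
      Finset.card_union_add_card_inter A B
    have hun : (A ∪ B).card ≤ Fintype.card V := by
      rw [← Finset.card_univ]
      exact Finset.card_le_card (Finset.subset_univ _)
    have h1 := hδ u v huv
    have h2 := hδ u' v' huv'
    have hpos : 0 < (A ∩ B).card := by
      by_contra hz
      push_neg at hz
      have hz0 : (A ∩ B).card = 0 := by omega
      have : (A.card : ℝ) + (B.card : ℝ) ≤ (Fintype.card V : ℝ) := by
        have : A.card + B.card ≤ Fintype.card V := by omega
        exact_mod_cast this
      have hn : (0 : ℝ) ≤ (Fintype.card V : ℝ) := by positivity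
      linarith
    obtain ⟨w, hw⟩ := Finset.card_pos.mp hpos
    rw [Finset.mem_inter, hA, hB, Finset.mem_filter, Finset.mem_filter] at hw
    exact ⟨w, hw.1.2, hw.2.2⟩
  -- the reflexive transitive closure relation
  set R := Relation.ReflTransGen (TAdj (tet E)) with hR
  -- each EdgeConn gives tetrahedra and an R-path
  have ec_to_R : ∀ e f : Finset V, EdgeConn E e f →
      ∃ A B, A ∈ tet E ∧ B ∈ tet E ∧ e ⊆ A ∧ f ⊆ B ∧ R A B := by
    intro e f hef
    obtain ⟨A, B, hA, hB, heA, hfB, htc⟩ := hef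
    exact ⟨A, B, hA, hB, heA, hfB, tightconn_to_path _ hT4 htc⟩
  -- pick triples inside K₁ and K₂
  obtain ⟨e₁, he₁K, he₁c⟩ := Finset.exists_subset_card_eq (show 3 ≤ K₁.card by rw [hT4 K₁ hK₁]; norm_num)
  obtain ⟨e₂, he₂K, he₂c⟩ := Finset.exists_subset_card_eq (show 3 ≤ K₂.card by rw [hT4 K₂ hK₂]; norm_num)
  have he₁E : e₁ ∈ E := htetE K₁ hK₁ e₁ he₁K he₁c
  have he₂E : e₂ ∈ E := htetE K₂ hK₂ e₂ he₂K he₂c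
  obtain ⟨a, b, c, hab, hac, hbc, rfl⟩ := Finset.card_eq_three.mp he₁c
  obtain ⟨a', b', c', hab', hac', hbc', rfl⟩ := Finset.card_eq_three.mp he₂c
  -- build the chain of edges
  obtain ⟨w, hg₁, hg₄⟩ := key a b a' b' hab hab'
  have haw : a ≠ w := (card3_ne_s12 h3 hg₁).2.1
  have ha'w : a' ≠ w := (card3_ne_s12 h3 hg₄).2.1
  obtain ⟨z, hg₂, hg₃⟩ := key a w a' w haw ha'w
  have hwz : w ≠ z := (card3_ne_s12 h3 hg₂).2.2
  -- the five EdgeConn instances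
  have EC1 := hgoal a b hab {a,b,c} {a,b,w} he₁E hg₁
    (by intro t ht; simp at ht ⊢; tauto) (by intro t ht; simp at ht ⊢; tauto)
  have EC2 := hgoal a w haw {a,b,w} {a,w,z} hg₁ hg₂
    (by intro t ht; simp at ht ⊢; tauto) (by intro t ht; simp at ht ⊢; tauto)
  have EC3 := hgoal w z hwz {a,w,z} {a',w,z} hg₂ hg₃
    (by intro t ht; simp at ht ⊢; tauto) (by intro t ht; simp at ht ⊢; tauto)
  have EC4 := hgoal a' w ha'w {a',w,z} {a',b',w} hg₃ hg₄
    (by intro t ht; simp at ht ⊢; tauto) (by intro t ht; simp at ht ⊢; tauto)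
  have EC5 := hgoal a' b' hab' {a',b',w} {a',b',c'} hg₄ he₂E
    (by intro t ht; simp at ht ⊢; tauto) (by intro t ht; simp at ht ⊢; tauto)
  obtain ⟨A₁, B₁, hA₁, hB₁, h₁A, h₁B, hR₁⟩ := ec_to_R _ _ EC1
  obtain ⟨A₂, B₂, hA₂, hB₂, h₂A, h₂B, hR₂⟩ := ec_to_R _ _ EC2
  obtain ⟨A₃, B₃, hA₃, hB₃, h₃A, h₃B, hR₃⟩ := ec_to_R _ _ EC3
  obtain ⟨A₄, B₄, hA₄, hB₄, h₄A, h₄B, hR₄⟩ := ec_to_R _ _ EC4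
  obtain ⟨A₅, B₅, hA₅, hB₅, h₅A, h₅B, hR₅⟩ := ec_to_R _ _ EC5
  -- glue everything into R K₁ K₂
  have hRK : R K₁ K₂ := by
    have s0 : R K₁ A₁ := Relation.ReflTransGen.single
      (tadj_of_common _ hK₁ hA₁ he₁K h₁A he₁c)
    have s1 : R B₁ A₂ := Relation.ReflTransGen.single
      (tadj_of_common _ hB₁ hA₂ h₁B h₂A (h3 _ hg₁))
    have s2 : R B₂ A₃ := Relation.ReflTransGen.single
      (tadj_of_common _ hB₂ hA₃ h₂B h₃A (h3 _ hg₂))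
    have s3 : R B₃ A₄ := Relation.ReflTransGen.single
      (tadj_of_common _ hB₃ hA₄ h₃B h₄A (h3 _ hg₃))
    have s4 : R B₄ A₅ := Relation.ReflTransGen.single
      (tadj_of_common _ hB₄ hA₅ h₄B h₅A (h3 _ hg₄))
    have s5 : R B₅ K₂ := Relation.ReflTransGen.single
      (tadj_of_common _ hB₅ hK₂ h₅B he₂K he₂c)
    exact ((((((((((s0.trans hR₁).trans s1).trans hR₂).trans s2).trans hR₃).trans
      s3).trans hR₄).trans s4).trans hR₅).trans s5)
  exact hnc (path_to_walk _ hT4 hRK hK₁)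
end

section
/- Let G be a k-graph on n vertices such that at most δ·(n choose ℓ) of the ℓ-element vertex sets X satisfy deg_G(X) < (μ+η)·(n−ℓ choose k−ℓ). Let Q ≥ 2ℓ and choose a uniformly random set S ⊆ V(G) with |S| = Q. Then with probability at least 1 − (Q choose ℓ)·(δ + e^{−η²Q/(4k²)}), the induced subgraph G[S] satisfies δ_ℓ(G[S]) ≥ (μ + η/2)·(Q−ℓ choose k−ℓ). -/
open Finset

open scoped Classical

section AuxiliaryLemmas

variable {α : Type*} [DecidableEq α]

/-- number of q-subsets of W containing A -/
lemma card_superset_filter (W A : Finset α) (hA : A ⊆ W) {q : ℕ} (hq : A.card ≤ q) :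
    ((powersetCard q W).filter fun T => A ⊆ T).card = (W.card - A.card).choose (q - A.card) := by
  have : (W.card - A.card).choose (q - A.card) = (powersetCard (q - A.card) (W \ A)).card := by
    rw [Finset.card_powersetCard, card_sdiff_of_subset hA]
  rw [this]
  apply Finset.card_nbij' (fun T => T \ A) (fun U => U ∪ A)
  · intro T hT
    simp only [mem_coe, mem_filter, mem_powersetCard] at hT ⊢
    obtain ⟨⟨hTW, hTc⟩, hAT⟩ := hT
    exact ⟨sdiff_subset_sdiff hTW (by rfl), by rw [card_sdiff_of_subset hAT, hTc]⟩
  · intro U hU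
    simp only [mem_coe, mem_filter, mem_powersetCard] at hU ⊢
    obtain ⟨hUW, hUc⟩ := hU
    have hUA : Disjoint U A := disjoint_of_subset_left hUW sdiff_disjoint
    constructor
    · constructor
      · exact union_subset (hUW.trans sdiff_subset) hA
      · rw [card_union_of_disjoint hUA, hUc]
        omega
    · exact subset_union_right
  · intro T hT
    simp only [mem_coe, mem_filter, mem_powersetCard] at hT
    exact sdiff_union_of_subset hT.2
  · intro U hU
    simp only [mem_coe, mem_powersetCard] at hU
    have hUA : Disjoint U A := disjoint_of_subset_left hU.1 sdiff_disjoint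
    dsimp only
    rw [union_sdiff_right, sdiff_eq_self_of_disjoint hUA]

lemma sum_ext_insert (W : Finset α) (Q' : ℕ) (A : Finset α) (h : Finset α → ℝ) :
    ∑ v ∈ W \ A, ∑ T ∈ (powersetCard Q' W).filter (fun T => insert v A ⊆ T), h T
      = ((Q' - A.card : ℕ) : ℝ) * ∑ T ∈ (powersetCard Q' W).filter (fun T => A ⊆ T), h T := by
  have key : ∀ v ∈ W \ A,
      (powersetCard Q' W).filter (fun T => insert v A ⊆ T)
        = ((powersetCard Q' W).filter (fun T => A ⊆ T)).filter (fun T => v ∈ T) := by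
    intro v _
    ext T
    simp only [mem_filter, insert_subset_iff]
    tauto
  rw [Finset.sum_congr rfl (fun v hv => by rw [key v hv, sum_filter])]
  rw [Finset.sum_comm]
  rw [Finset.mul_sum]
  apply Finset.sum_congr rfl
  intro T hT
  simp only [mem_filter, mem_powersetCard] at hT
  obtain ⟨⟨hTW, hTc⟩, hAT⟩ := hT
  rw [← Finset.sum_filter]
  have : (W \ A).filter (fun v => v ∈ T) = T \ A := by
    ext v
    simp only [mem_filter, mem_sdiff]
    exact ⟨fun ⟨⟨_, hvA⟩, hvT⟩ => ⟨hvT, hvA⟩, fun ⟨hvT, hvA⟩ => ⟨⟨hTW hvT, hvA⟩, hvT⟩⟩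
  rw [this, Finset.sum_const, card_sdiff_of_subset hAT, hTc, nsmul_eq_mul]

/-- degree of a vertex: number of r-sets in F through v inside T -/
lemma card_filter_mem_le (F : Finset (Finset α)) (r : ℕ) (hF : ∀ e ∈ F, e.card = r)
    (T : Finset α) (v : α) (hv : v ∈ T) :
    (F.filter fun e => e ⊆ T ∧ v ∈ e).card ≤ (T.card - 1).choose (r - 1) := by
  have h1 : ((powersetCard (r-1) (T.erase v)).card) = (T.card - 1).choose (r-1) := by
    rw [Finset.card_powersetCard, card_erase_of_mem hv]
  rw [← h1]
  apply Finset.card_le_card_of_injOn (fun e => e.erase v)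
  · intro e he
    simp only [mem_coe, mem_filter, mem_powersetCard] at he ⊢
    obtain ⟨heF, heT, hve⟩ := he
    exact ⟨erase_subset_erase v heT, by rw [card_erase_of_mem hve, hF e heF]⟩
  · intro e he e' he' hee
    simp only [coe_filter, Set.mem_setOf_eq] at he he'
    have := congrArg (insert v) hee
    rwa [insert_erase he.2.2, insert_erase he'.2.2] at this

lemma deg_swap_le (F : Finset (Finset α)) (r : ℕ) (hF : ∀ e ∈ F, e.card = r)
    (T : Finset α) (v w : α) (hv : v ∈ T) (hw : w ∉ T) :
    |((F.filter fun e => e ⊆ T).card : ℝ) -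
      ((F.filter fun e => e ⊆ insert w (T.erase v)).card : ℝ)|
      ≤ ((T.card - 1).choose (r - 1) : ℝ) := by
  set T' := insert w (T.erase v) with hT'
  have hvw : v ≠ w := fun h => hw (h ▸ hv)
  have hwT' : w ∈ T' := mem_insert_self _ _
  have hT'c : T'.card = T.card := by
    rw [hT', card_insert_of_notMem (fun h => hw (erase_subset _ _ h)), card_erase_of_mem hv]
    have : 0 < T.card := card_pos.2 ⟨v, hv⟩
    omega
  have hTe : T'.erase w = T.erase v := by
    rw [hT', erase_insert (fun h => hw (erase_subset _ _ h))]
  have key : ∀ (S S' : Finset α) (u : α), S.erase u ⊆ S' →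
      (F.filter fun e => e ⊆ S).card ≤
        (F.filter fun e => e ⊆ S').card + (F.filter fun e => e ⊆ S ∧ u ∈ e).card := by
    intro S S' u hSS
    have : (F.filter fun e => e ⊆ S) ⊆
        (F.filter fun e => e ⊆ S') ∪ (F.filter fun e => e ⊆ S ∧ u ∈ e) := by
      intro e he
      simp only [mem_filter, mem_union] at he ⊢
      by_cases hu : u ∈ e
      · exact Or.inr ⟨he.1, he.2, hu⟩
      · refine Or.inl ⟨he.1, fun x hx => hSS (mem_erase.2 ⟨fun hxu => hu (hxu ▸ hx), he.2 hx⟩)⟩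
    calc (F.filter fun e => e ⊆ S).card ≤ _ := Finset.card_le_card this
      _ ≤ _ := Finset.card_union_le _ _
  have h1 : (F.filter fun e => e ⊆ T).card ≤
      (F.filter fun e => e ⊆ T').card + (T.card - 1).choose (r - 1) := by
    refine (key T T' v (by rw [hT']; exact (erase_subset_erase v (subset_insert w T)).trans (by rw [erase_insert_of_ne hvw.symm] <;> exact fun x hx => hx))).trans ?_
    gcongr
    exact card_filter_mem_le F r hF T v hv
  have h2 : (F.filter fun e => e ⊆ T').card ≤
      (F.filter fun e => e ⊆ T).card + (T.card - 1).choose (r - 1) := by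
    have := key T' T w (by rw [hTe]; exact erase_subset _ _)
    refine this.trans ?_
    gcongr
    calc (F.filter fun e => e ⊆ T' ∧ w ∈ e).card ≤ (T'.card - 1).choose (r-1) :=
          card_filter_mem_le F r hF T' w hwT'
      _ = _ := by rw [hT'c]
  rw [abs_sub_le_iff]
  constructor
  · rw [sub_le_iff_le_add]
    exact_mod_cast h1.trans (by omega)
  · rw [sub_le_iff_le_add]
    exact_mod_cast h2.trans (by omega)

lemma pairwise_avg_bound (W : Finset α) (F : Finset (Finset α)) (r Q' : ℕ)
    (hF : ∀ e ∈ F, e.card = r) (A : Finset α) (hA : A ⊆ W) (hAQ : A.card < Q')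
    (hQW : Q' ≤ W.card) (v w : α) (hv : v ∈ W \ A) (hw : w ∈ W \ A) :
    |(∑ T ∈ (powersetCard Q' W).filter (fun T => insert v A ⊆ T),
          ((F.filter fun e => e ⊆ T).card : ℝ)) /
        (((powersetCard Q' W).filter (fun T => insert v A ⊆ T)).card) -
      (∑ T ∈ (powersetCard Q' W).filter (fun T => insert w A ⊆ T),
          ((F.filter fun e => e ⊆ T).card : ℝ)) /
        (((powersetCard Q' W).filter (fun T => insert w A ⊆ T)).card)|
      ≤ ((Q' - 1).choose (r - 1) : ℝ) := by
  rcases eq_or_ne v w with rfl | hvw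
  · simp
  simp only [mem_sdiff] at hv hw
  have hins : ∀ u : α, u ∈ W → u ∉ A → insert u A ⊆ W ∧ (insert u A).card = A.card + 1 := by
    intro u hu hua
    exact ⟨insert_subset hu hA, card_insert_of_notMem hua⟩
  obtain ⟨hvW, hvc⟩ := hins v hv.1 hv.2
  obtain ⟨hwW, hwc⟩ := hins w hw.1 hw.2
  set extv := (powersetCard Q' W).filter (fun T => insert v A ⊆ T) with hextv
  set extw := (powersetCard Q' W).filter (fun T => insert w A ⊆ T) with hextw
  have cardv : extv.card = (W.card - (A.card + 1)).choose (Q' - (A.card + 1)) := by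
    rw [hextv, card_superset_filter W _ hvW (by omega), hvc]
  have cardw : extw.card = (W.card - (A.card + 1)).choose (Q' - (A.card + 1)) := by
    rw [hextw, card_superset_filter W _ hwW (by omega), hwc]
  have cardpos : 0 < extv.card := by
    rw [cardv]; exact Nat.choose_pos (by omega)
  -- the swap map
  set φ : Finset α → Finset α := fun T => if w ∈ T then T else insert w (T.erase v) with hφ
  set ψ : Finset α → Finset α := fun T => if v ∈ T then T else insert v (T.erase w) with hψ
  have hmem : ∀ (a b : α), a ∈ W → a ∉ A → b ∈ W → b ∉ A → a ≠ b →
      ∀ T ∈ (powersetCard Q' W).filter (fun T => insert a A ⊆ T),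
      (if b ∈ T then T else insert b (T.erase a)) ∈
        (powersetCard Q' W).filter (fun T => insert b A ⊆ T) := by
    intro a b haW haA hbW hbA hab T hT
    simp only [mem_filter, mem_powersetCard, insert_subset_iff] at hT ⊢
    obtain ⟨⟨hTW, hTc⟩, haT, hAT⟩ := hT
    by_cases hbT : b ∈ T
    · simp only [if_pos hbT]
      exact ⟨⟨hTW, hTc⟩, hbT, hAT⟩
    · simp only [if_neg hbT]
      have hbe : b ∉ T.erase a := fun h => hbT (erase_subset _ _ h)
      refine ⟨⟨insert_subset hbW ((erase_subset _ _).trans hTW), ?_⟩, mem_insert_self _ _, ?_⟩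
      · rw [card_insert_of_notMem hbe, card_erase_of_mem haT, hTc]
        omega
      · intro x hx
        exact mem_insert_of_mem (mem_erase.2 ⟨fun hxa => haA (hxa ▸ hx), hAT hx⟩)
  have hinv : ∀ (a b : α), a ≠ b → ∀ T, a ∈ T → insert a A ⊆ T →
      (if a ∈ (if b ∈ T then T else insert b (T.erase a)) then (if b ∈ T then T else insert b (T.erase a)) else insert a ((if b ∈ T then T else insert b (T.erase a)).erase b)) = T := by
    intro a b hab T haT _
    by_cases hbT : b ∈ T
    · simp only [if_pos hbT, if_pos haT]
    · simp only [if_neg hbT]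
      have hanotin : a ∉ insert b (T.erase a) := by
        simp only [mem_insert, mem_erase]
        push_neg
        exact ⟨hab, fun h _ => h rfl⟩
      rw [if_neg hanotin, erase_insert (fun h => hbT (erase_subset _ _ h)), insert_erase haT]
  -- rewrite sum over extw as sum over extv of φ
  have hsum : ∑ T ∈ extw, ((F.filter fun e => e ⊆ T).card : ℝ)
      = ∑ T ∈ extv, ((F.filter fun e => e ⊆ φ T).card : ℝ) := by
    rw [hextv, hextw]
    refine Finset.sum_nbij' ψ φ ?_ ?_ ?_ ?_ ?_
    · exact fun T hT => hmem w v hw.1 hw.2 hv.1 hv.2 hvw.symm T hT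
    · exact fun T hT => hmem v w hv.1 hv.2 hw.1 hw.2 hvw T hT
    · intro T hT
      simp only [mem_filter, insert_subset_iff] at hT
      exact hinv w v hvw.symm T hT.2.1 (insert_subset hT.2.1 hT.2.2)
    · intro T hT
      simp only [mem_filter, insert_subset_iff] at hT
      exact hinv v w hvw T hT.2.1 (insert_subset hT.2.1 hT.2.2)
    · intro T hT
      have : φ (ψ T) = T := by
        simp only [mem_filter, insert_subset_iff] at hT
        exact hinv w v hvw.symm T hT.2.1 (insert_subset hT.2.1 hT.2.2)
      rw [this]
  have heq : ((extw.card : ℝ)) = extv.card := by rw [cardv, cardw]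
  rw [hsum, heq, div_sub_div_same, ← Finset.sum_sub_distrib, abs_div]
  have hMpos : (0:ℝ) < extv.card := by exact_mod_cast cardpos
  rw [abs_of_pos hMpos, div_le_iff₀ hMpos]
  calc |∑ T ∈ extv, (((F.filter fun e => e ⊆ T).card : ℝ) - ((F.filter fun e => e ⊆ φ T).card : ℝ))|
      ≤ ∑ T ∈ extv, |(((F.filter fun e => e ⊆ T).card : ℝ) - ((F.filter fun e => e ⊆ φ T).card : ℝ))| :=
        Finset.abs_sum_le_sum_abs _ _
    _ ≤ ∑ _T ∈ extv, ((Q' - 1).choose (r - 1) : ℝ) := by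
        apply Finset.sum_le_sum
        intro T hT
        simp only [hextv, mem_filter, mem_powersetCard, insert_subset_iff] at hT
        obtain ⟨⟨hTW, hTc⟩, hvT, hAT⟩ := hT
        by_cases hwT : w ∈ T
        · simp only [hφ, if_pos hwT, sub_self, abs_zero]
          positivity
        · simp only [hφ, if_neg hwT]
          have := deg_swap_le F r hF T v w hvT hwT
          rwa [hTc] at this
    _ = extv.card * ((Q' - 1).choose (r - 1) : ℝ) := by rw [Finset.sum_const, nsmul_eq_mul]
    _ = ((Q' - 1).choose (r - 1) : ℝ) * extv.card := mul_comm _ _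

lemma exp_quad_bound {z : ℝ} (hz : |z| ≤ 1) : Real.exp z ≤ 1 + z + (3/4) * z^2 := by
  have h := Real.exp_bound hz (n := 2) (by norm_num)
  have hs : ∑ m ∈ Finset.range 2, z ^ m / m.factorial = 1 + z := by
    simp [Finset.sum_range_succ]
  rw [hs] at h
  have h2 := (abs_le.1 h).2
  have hzz : |z|^2 = z^2 := sq_abs z
  rw [hzz] at h2
  norm_num [Nat.factorial] at h2
  linarith

lemma hoeffding_lite {β : Type*} (B : Finset β) (hB : B.Nonempty) (x : β → ℝ) (c lam : ℝ)
    (hc : 0 ≤ c) (hlam : 0 ≤ lam) (hlc : lam * c ≤ 1)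
    (hpair : ∀ v ∈ B, ∀ w ∈ B, |x v - x w| ≤ c) :
    ∑ v ∈ B, Real.exp (-(lam * x v)) ≤
      B.card * Real.exp (-(lam * ((∑ v ∈ B, x v) / B.card)) + (3/16) * lam^2 * c^2) := by
  have hBpos : (0:ℝ) < B.card := by exact_mod_cast card_pos.2 hB
  set m : ℝ := (∑ v ∈ B, x v) / B.card with hm
  obtain ⟨v0, hv0, hmax⟩ := B.exists_max_image x hB
  obtain ⟨w0, hw0, hmin⟩ := B.exists_min_image x hB
  set b := x v0
  set a := x w0
  have hab : ∀ v ∈ B, a ≤ x v ∧ x v ≤ b := fun v hv => ⟨hmin v hv, hmax v hv⟩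
  have hba : b - a ≤ c := by
    have := hpair v0 hv0 w0 hw0
    have hab' : a ≤ b := (hab v0 hv0).1
    rw [abs_of_nonneg (by linarith)] at this
    exact this
  have ham : a ≤ m := by
    rw [hm, le_div_iff₀ hBpos]
    calc a * B.card = ∑ _v ∈ B, a := by rw [Finset.sum_const, nsmul_eq_mul, mul_comm]
      _ ≤ ∑ v ∈ B, x v := Finset.sum_le_sum (fun v hv => (hab v hv).1)
  have hmb : m ≤ b := by
    rw [hm, div_le_iff₀ hBpos]
    calc ∑ v ∈ B, x v ≤ ∑ _v ∈ B, b := Finset.sum_le_sum (fun v hv => (hab v hv).2)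
      _ = b * B.card := by rw [Finset.sum_const, nsmul_eq_mul, mul_comm]
  have hsum0 : ∑ v ∈ B, (x v - m) = 0 := by
    rw [Finset.sum_sub_distrib, Finset.sum_const, nsmul_eq_mul, hm]
    field_simp
    ring
  have hquad : ∑ v ∈ B, (x v - m)^2 ≤ (m - a) * (b - m) * B.card := by
    have : ∀ v ∈ B, (x v - m)^2 ≤ (a + b - 2*m) * (x v - m) + (m - a) * (b - m) := by
      intro v hv
      have h1 := (hab v hv).1
      have h2 := (hab v hv).2
      nlinarith
    calc ∑ v ∈ B, (x v - m)^2 ≤ ∑ v ∈ B, ((a + b - 2*m) * (x v - m) + (m - a) * (b - m)) :=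
          Finset.sum_le_sum this
      _ = (a + b - 2*m) * ∑ v ∈ B, (x v - m) + (m-a)*(b-m) * B.card := by
          rw [Finset.sum_add_distrib, ← Finset.mul_sum, Finset.sum_const, nsmul_eq_mul, mul_comm ((B.card : ℝ)) _]
      _ = (m - a) * (b - m) * B.card := by rw [hsum0]; ring
  have hquad2 : (m - a) * (b - m) ≤ c^2 / 4 := by
    nlinarith [sq_nonneg ((m-a)-(b-m)), hba, ham, hmb, hc, sq_nonneg c]
  have hpt : ∀ v ∈ B, Real.exp (-(lam * (x v - m))) ≤
      1 + (-(lam * (x v - m))) + (3/4) * (lam * (x v - m))^2 := by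
    intro v hv
    have habs : |(-(lam * (x v - m)))| ≤ 1 := by
      rw [abs_neg, abs_mul, abs_of_nonneg hlam]
      have h1 := (hab v hv).1
      have h2 := (hab v hv).2
      have : |x v - m| ≤ c := by
        rw [abs_le]; constructor <;> nlinarith
      nlinarith [mul_le_mul_of_nonneg_left this hlam]
    have := exp_quad_bound habs
    calc Real.exp (-(lam * (x v - m))) ≤ 1 + (-(lam * (x v - m))) + (3/4) * (-(lam * (x v - m)))^2 := this
      _ = 1 + (-(lam * (x v - m))) + (3/4) * (lam * (x v - m))^2 := by ring
  have hkey : ∑ v ∈ B, Real.exp (-(lam * (x v - m))) ≤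
      B.card * (1 + (3/16) * lam^2 * c^2) := by
    have e1 : ∑ v ∈ B, (-(lam * (x v - m))) = (-lam) * ∑ v ∈ B, (x v - m) := by
      rw [Finset.mul_sum]; exact Finset.sum_congr rfl (fun v _ => by ring)
    have e2 : ∑ v ∈ B, (3/4) * (lam * (x v - m))^2 = ((3/4)*lam^2) * ∑ v ∈ B, (x v - m)^2 := by
      rw [Finset.mul_sum]; exact Finset.sum_congr rfl (fun v _ => by ring)
    have hq : ∑ v ∈ B, (x v - m)^2 ≤ c^2/4 * B.card := by
      calc ∑ v ∈ B, (x v - m)^2 ≤ (m - a) * (b - m) * B.card := hquad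
        _ ≤ c^2/4 * B.card := mul_le_mul_of_nonneg_right hquad2 (le_of_lt hBpos)
    calc ∑ v ∈ B, Real.exp (-(lam * (x v - m)))
        ≤ ∑ v ∈ B, (1 + (-(lam * (x v - m))) + (3/4) * (lam * (x v - m))^2) :=
          Finset.sum_le_sum hpt
      _ = B.card + (-lam) * ∑ v ∈ B, (x v - m) + ((3/4)*lam^2) * ∑ v ∈ B, (x v - m)^2 := by
          rw [Finset.sum_add_distrib, Finset.sum_add_distrib, e1, e2, Finset.sum_const, nsmul_eq_mul, mul_one]
      _ = B.card + ((3/4)*lam^2) * ∑ v ∈ B, (x v - m)^2 := by rw [hsum0]; ring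
      _ ≤ B.card * (1 + (3/16) * lam^2 * c^2) := by nlinarith [hq, sq_nonneg lam]
  have hfinal : ∀ v ∈ B, Real.exp (-(lam * x v)) =
      Real.exp (-(lam * m)) * Real.exp (-(lam * (x v - m))) := by
    intro v hv
    rw [← Real.exp_add]
    congr 1
    ring
  calc ∑ v ∈ B, Real.exp (-(lam * x v))
      = Real.exp (-(lam * m)) * ∑ v ∈ B, Real.exp (-(lam * (x v - m))) := by
        rw [Finset.mul_sum]; exact Finset.sum_congr rfl hfinal
    _ ≤ Real.exp (-(lam * m)) * (B.card * (1 + (3/16) * lam^2 * c^2)) := by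
        apply mul_le_mul_of_nonneg_left hkey (Real.exp_nonneg _)
    _ ≤ Real.exp (-(lam * m)) * (B.card * Real.exp ((3/16) * lam^2 * c^2)) := by
        have h1 : 1 + (3/16) * lam^2 * c^2 ≤ Real.exp ((3/16) * lam^2 * c^2) := by
          linarith [Real.add_one_le_exp ((3/16) * lam^2 * c^2)]
        gcongr
    _ = B.card * Real.exp (-(lam * m) + (3/16) * lam^2 * c^2) := by
        rw [Real.exp_add]; ring

lemma main_induction (W : Finset α) (F : Finset (Finset α)) (r Q' : ℕ)
    (hF : ∀ e ∈ F, e.card = r) (hr : 1 ≤ r)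
    (hQW : Q' ≤ W.card) (lam : ℝ) (hlam : 0 ≤ lam)
    (hlc : lam * ((Q'-1).choose (r-1) : ℝ) ≤ 1) :
    ∀ (j : ℕ) (A : Finset α), A ⊆ W → A.card + j = Q' →
    (∑ T ∈ (powersetCard Q' W).filter (fun T => A ⊆ T),
        Real.exp (-(lam * ((F.filter fun e => e ⊆ T).card : ℝ)))) /
      (((powersetCard Q' W).filter (fun T => A ⊆ T)).card : ℝ)
      ≤ Real.exp (-(lam * ((∑ T ∈ (powersetCard Q' W).filter (fun T => A ⊆ T),
            ((F.filter fun e => e ⊆ T).card : ℝ)) /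
          (((powersetCard Q' W).filter (fun T => A ⊆ T)).card : ℝ)))
          + j * ((3/16) * lam^2 * ((Q'-1).choose (r-1) : ℝ)^2)) := by
  intro j
  induction j with
  | zero =>
    intro A hA hAc
    rw [Nat.add_zero] at hAc
    have hsingle : (powersetCard Q' W).filter (fun T => A ⊆ T) = {A} := by
      ext T
      simp only [mem_filter, mem_powersetCard, mem_singleton]
      constructor
      · rintro ⟨⟨hTW, hTc⟩, hAT⟩
        exact (Finset.eq_of_subset_of_card_le hAT (by omega)).symm
      · rintro rfl
        exact ⟨⟨hA, hAc⟩, subset_rfl⟩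
    rw [hsingle]
    simp
  | succ j ih =>
    intro A hA hAc
    have hAQ : A.card < Q' := by omega
    set c := ((Q'-1).choose (r-1) : ℝ) with hc
    set K := (3/16) * lam^2 * c^2 with hK
    have hcpos : (0:ℝ) ≤ c := by positivity
    have hBcard : (W \ A).card = W.card - A.card := card_sdiff_of_subset hA
    have hBne : (W \ A).Nonempty := by
      rw [← card_pos, hBcard]; omega
    have hBpos : (0:ℝ) < ((W \ A).card : ℝ) := by
      exact_mod_cast card_pos.2 hBne
    set M' := (W.card - (A.card+1)).choose (Q' - (A.card+1)) with hM'
    have hsv : ∀ v ∈ W \ A,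
        (((powersetCard Q' W).filter (fun T => insert v A ⊆ T)).card) = M' := by
      intro v hv
      rw [mem_sdiff] at hv
      rw [card_superset_filter W _ (insert_subset hv.1 hA)
        (by rw [card_insert_of_notMem hv.2]; omega), card_insert_of_notMem hv.2]
    have hMa : ((powersetCard Q' W).filter (fun T => A ⊆ T)).card
        = (W.card - A.card).choose (Q' - A.card) := card_superset_filter W A hA (by omega)
    have hM'pos : 0 < M' := Nat.choose_pos (by omega)
    have hM'posR : (0:ℝ) < (M' : ℝ) := by exact_mod_cast hM'pos
    have hMapos : (0:ℝ) < (((powersetCard Q' W).filter (fun T => A ⊆ T)).card : ℝ) := by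
      rw [hMa]
      exact_mod_cast Nat.choose_pos (by omega)
    have hcardid : (W.card - A.card) * M' = (Q' - A.card) * ((powersetCard Q' W).filter (fun T => A ⊆ T)).card := by
      rw [hMa, hM']
      have h1 : W.card - A.card = (W.card - (A.card+1)) + 1 := by omega
      have h2 : Q' - A.card = (Q' - (A.card+1)) + 1 := by omega
      rw [h1, h2]
      simpa [Nat.succ_eq_add_one, mul_comm] using
        Nat.add_one_mul_choose_eq (W.card - (A.card+1)) (Q' - (A.card+1))
    have hcardidR : ((W.card - A.card : ℕ) : ℝ) * (M' : ℝ)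
        = ((Q' - A.card : ℕ) : ℝ) * (((powersetCard Q' W).filter (fun T => A ⊆ T)).card : ℝ) := by
      exact_mod_cast hcardid
    have hE := sum_ext_insert W Q' A
      (fun T => Real.exp (-(lam * ((F.filter fun e => e ⊆ T).card : ℝ))))
    have hD := sum_ext_insert W Q' A (fun T => ((F.filter fun e => e ⊆ T).card : ℝ))
    -- average identities
    have havg : ∀ (h : Finset α → ℝ),
        (∑ v ∈ W \ A, ∑ T ∈ (powersetCard Q' W).filter (fun T => insert v A ⊆ T), h T)
          = ((Q' - A.card : ℕ) : ℝ) * ∑ T ∈ (powersetCard Q' W).filter (fun T => A ⊆ T), h T :=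
      fun h => sum_ext_insert W Q' A h
    have key : ∀ (h : Finset α → ℝ),
        (∑ T ∈ (powersetCard Q' W).filter (fun T => A ⊆ T), h T) /
            (((powersetCard Q' W).filter (fun T => A ⊆ T)).card : ℝ)
          = (∑ v ∈ W \ A, (∑ T ∈ (powersetCard Q' W).filter (fun T => insert v A ⊆ T), h T) / (M' : ℝ))
              / ((W \ A).card : ℝ) := by
      intro h
      rw [← Finset.sum_div, havg h]
      rw [div_div]
      rw [div_eq_div_iff (ne_of_gt hMapos) (by positivity)]
      have hBR : ((W \ A).card : ℝ) = ((W.card - A.card : ℕ) : ℝ) := by rw [hBcard]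
      rw [hBR]
      linear_combination (∑ T ∈ (powersetCard Q' W).filter (fun T => A ⊆ T), h T) * hcardidR
    have hpoint : ∀ v ∈ W \ A,
        (∑ T ∈ (powersetCard Q' W).filter (fun T => insert v A ⊆ T),
            Real.exp (-(lam * ((F.filter fun e => e ⊆ T).card : ℝ)))) / (M' : ℝ)
          ≤ Real.exp (-(lam * ((∑ T ∈ (powersetCard Q' W).filter (fun T => insert v A ⊆ T),
              ((F.filter fun e => e ⊆ T).card : ℝ)) / (M' : ℝ))) + j * K) := by
      intro v hv
      have hv' := hv
      rw [mem_sdiff] at hv'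
      have h := ih (insert v A) (insert_subset hv'.1 hA)
        (by rw [card_insert_of_notMem hv'.2]; omega)
      rwa [hsv v hv] at h
    have hpair : ∀ v ∈ W \ A, ∀ w ∈ W \ A,
        |(∑ T ∈ (powersetCard Q' W).filter (fun T => insert v A ⊆ T),
            ((F.filter fun e => e ⊆ T).card : ℝ)) / (M' : ℝ) -
          (∑ T ∈ (powersetCard Q' W).filter (fun T => insert w A ⊆ T),
            ((F.filter fun e => e ⊆ T).card : ℝ)) / (M' : ℝ)| ≤ c := by
      intro v hv w hw
      have h := pairwise_avg_bound W F r Q' hF A hA hAQ hQW v w hv hw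
      rwa [hsv v hv, hsv w hw] at h
    have hhoef := hoeffding_lite (W \ A) hBne
      (fun v => (∑ T ∈ (powersetCard Q' W).filter (fun T => insert v A ⊆ T),
        ((F.filter fun e => e ⊆ T).card : ℝ)) / (M' : ℝ)) c lam hcpos hlam hlc hpair
    rw [key (fun T => Real.exp (-(lam * ((F.filter fun e => e ⊆ T).card : ℝ)))),
      key (fun T => ((F.filter fun e => e ⊆ T).card : ℝ))]
    have step1 : (∑ v ∈ W \ A, (∑ T ∈ (powersetCard Q' W).filter (fun T => insert v A ⊆ T),
          Real.exp (-(lam * ((F.filter fun e => e ⊆ T).card : ℝ)))) / (M' : ℝ))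
        ≤ ∑ v ∈ W \ A, Real.exp (-(lam * ((∑ T ∈ (powersetCard Q' W).filter
            (fun T => insert v A ⊆ T), ((F.filter fun e => e ⊆ T).card : ℝ)) / (M' : ℝ))) + j * K) :=
      Finset.sum_le_sum hpoint
    have step2 : ∑ v ∈ W \ A, Real.exp (-(lam * ((∑ T ∈ (powersetCard Q' W).filter
          (fun T => insert v A ⊆ T), ((F.filter fun e => e ⊆ T).card : ℝ)) / (M' : ℝ))) + j * K)
        = Real.exp (j * K) * ∑ v ∈ W \ A, Real.exp (-(lam * ((∑ T ∈ (powersetCard Q' W).filter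
            (fun T => insert v A ⊆ T), ((F.filter fun e => e ⊆ T).card : ℝ)) / (M' : ℝ)))) := by
      rw [Finset.mul_sum]
      refine Finset.sum_congr rfl (fun v _ => ?_)
      rw [← Real.exp_add]
      ring_nf
    have step3 : Real.exp (j * K) * ∑ v ∈ W \ A, Real.exp (-(lam * ((∑ T ∈ (powersetCard Q' W).filter
          (fun T => insert v A ⊆ T), ((F.filter fun e => e ⊆ T).card : ℝ)) / (M' : ℝ))))
        ≤ Real.exp (j * K) * (((W \ A).card : ℝ) * Real.exp (-(lam * ((∑ v ∈ W \ A,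
            (∑ T ∈ (powersetCard Q' W).filter (fun T => insert v A ⊆ T),
              ((F.filter fun e => e ⊆ T).card : ℝ)) / (M' : ℝ)) / ((W \ A).card : ℝ)))
            + (3/16) * lam^2 * c^2)) :=
      mul_le_mul_of_nonneg_left hhoef (Real.exp_nonneg _)
    have htot := step1.trans (step2.trans_le step3)
    rw [div_le_iff₀ hBpos]
    refine htot.trans (le_of_eq ?_)
    rw [mul_comm (((W \ A).card : ℝ)) _, ← mul_assoc, ← Real.exp_add]
    congr 2
    push_cast
    ring

lemma sum_deg_powersetCard (W : Finset α) (F : Finset (Finset α)) (r Q' : ℕ)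
    (hF : ∀ e ∈ F, e ⊆ W ∧ e.card = r) (hrQ : r ≤ Q') :
    ∑ T ∈ powersetCard Q' W, (((F.filter fun e => e ⊆ T).card : ℕ))
      = F.card * ((W.card - r).choose (Q' - r)) := by
  have h1 : ∀ T, (F.filter fun e => e ⊆ T).card = ∑ e ∈ F, if e ⊆ T then 1 else 0 := by
    intro T
    rw [Finset.card_filter]
  simp_rw [h1]
  rw [Finset.sum_comm]
  have h2 : ∀ e ∈ F, ∑ T ∈ powersetCard Q' W, (if e ⊆ T then 1 else 0)
      = (W.card - r).choose (Q' - r) := by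
    intro e he
    rw [← Finset.card_filter]
    rw [card_superset_filter W e (hF e he).1 (by rw [(hF e he).2]; exact hrQ), (hF e he).2]
  rw [Finset.sum_congr rfl h2, Finset.sum_const, smul_eq_mul]

lemma tail_bound (W : Finset α) (F : Finset (Finset α)) (r Q' : ℕ) (μ η : ℝ)
    (hr : 1 ≤ r) (hrQ : r ≤ Q') (hQW : Q' ≤ W.card)
    (hF : ∀ e ∈ F, e ⊆ W ∧ e.card = r)
    (hμ : 0 ≤ μ) (hη : 0 < η) (hη1 : η ≤ 1)
    (hdeg : (μ + η) * ((W.card).choose r : ℝ) ≤ (F.card : ℝ)) :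
    (((powersetCard Q' W).filter fun T =>
        ((F.filter fun e => e ⊆ T).card : ℝ) < (μ + η/2) * (Q'.choose r : ℝ)).card : ℝ)
      ≤ Real.exp (-(5/16) * η^2 * Q' / r^2) * ((W.card).choose Q' : ℝ) := by
  set C : ℝ := (Q'.choose r : ℝ) with hC
  set c : ℝ := ((Q'-1).choose (r-1) : ℝ) with hc
  have hCpos : (0:ℝ) < C := by rw [hC]; exact_mod_cast Nat.choose_pos hrQ
  have hrpos : (0:ℝ) < (r:ℝ) := by exact_mod_cast hr
  have hQpos : (0:ℝ) < (Q':ℝ) := by exact_mod_cast lt_of_lt_of_le hr hrQ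
  set lam : ℝ := η * Q' / (r^2 * C) with hlam
  have hlampos : 0 < lam := by
    rw [hlam]
    exact div_pos (mul_pos hη hQpos) (by positivity)
  have hid : (r:ℝ) * C = (Q':ℝ) * c := by
    have h1 : Q' - 1 + 1 = Q' := by omega
    have h2 : r - 1 + 1 = r := by omega
    have h3 := Nat.add_one_mul_choose_eq (Q'-1) (r-1)
    rw [h1, h2] at h3
    have h4 := congrArg (Nat.cast : ℕ → ℝ) h3
    push_cast at h4
    rw [hC, hc]
    linarith
  have hlamc : lam * c = η / r := by
    rw [hlam]
    rw [div_mul_eq_mul_div, div_eq_div_iff (by positivity) (ne_of_gt hrpos)]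
    linear_combination η * r * hid.symm
  have hlamC : lam * C = η * Q' / r^2 := by
    rw [hlam, div_mul_eq_mul_div, div_eq_div_iff (by positivity) (by positivity)]
    ring
  have hr1 : (1:ℝ) ≤ (r:ℝ) := by exact_mod_cast hr
  have hlc1 : lam * c ≤ 1 := by
    rw [hlamc, div_le_one hrpos]
    linarith
  have Hmi := main_induction W F r Q' (fun e he => (hF e he).2) hr hQW lam hlampos.le
    (by rw [← hc]; exact hlc1) Q' ∅ (empty_subset W) (by simp)
  rw [Finset.filter_true_of_mem (fun T _ => empty_subset T)] at Hmi
  have hPcard : ((powersetCard Q' W).card : ℝ) = ((W.card).choose Q' : ℝ) := by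
    rw [card_powersetCard]
  have hPpos : (0:ℝ) < ((powersetCard Q' W).card : ℝ) := by
    rw [hPcard]
    exact_mod_cast Nat.choose_pos hQW
  have hsumdeg : ∑ T ∈ powersetCard Q' W, ((F.filter fun e => e ⊆ T).card : ℝ)
      = (F.card : ℝ) * (((W.card - r).choose (Q' - r) : ℕ) : ℝ) := by
    exact_mod_cast congrArg (Nat.cast : ℕ → ℝ) (sum_deg_powersetCard W F r Q' hF hrQ)
  have hflag : ((W.card).choose Q' : ℝ) * C = ((W.card).choose r : ℝ) * (((W.card - r).choose (Q' - r) : ℕ) : ℝ) := by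
    rw [hC]
    exact_mod_cast congrArg (Nat.cast : ℕ → ℝ) (Nat.choose_mul hrQ)
  have havg : (μ+η) * C ≤ (∑ T ∈ powersetCard Q' W, ((F.filter fun e => e ⊆ T).card : ℝ))
      / ((powersetCard Q' W).card : ℝ) := by
    rw [le_div_iff₀ hPpos, hsumdeg, hPcard]
    calc (μ+η) * C * ((W.card).choose Q' : ℝ)
        = (μ+η) * (((W.card).choose Q' : ℝ) * C) := by ring
      _ = (μ+η) * (((W.card).choose r : ℝ) * (((W.card - r).choose (Q' - r) : ℕ) : ℝ)) := by
          rw [hflag]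
      _ = ((μ+η) * ((W.card).choose r : ℝ)) * (((W.card - r).choose (Q' - r) : ℕ) : ℝ) := by ring
      _ ≤ (F.card : ℝ) * (((W.card - r).choose (Q' - r) : ℕ) : ℝ) := by
          apply mul_le_mul_of_nonneg_right hdeg
          positivity
  set θ : ℝ := (μ + η/2) * C with hθ
  have hBadle : ((((powersetCard Q' W).filter fun T =>
        ((F.filter fun e => e ⊆ T).card : ℝ) < θ).card : ℝ)) * Real.exp (-(lam * θ))
      ≤ ∑ T ∈ powersetCard Q' W, Real.exp (-(lam * ((F.filter fun e => e ⊆ T).card : ℝ))) := by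
    calc ((((powersetCard Q' W).filter fun T =>
          ((F.filter fun e => e ⊆ T).card : ℝ) < θ).card : ℝ)) * Real.exp (-(lam * θ))
        = ∑ _T ∈ (powersetCard Q' W).filter (fun T =>
            ((F.filter fun e => e ⊆ T).card : ℝ) < θ), Real.exp (-(lam * θ)) := by
          rw [Finset.sum_const, nsmul_eq_mul]
      _ ≤ ∑ T ∈ (powersetCard Q' W).filter (fun T =>
            ((F.filter fun e => e ⊆ T).card : ℝ) < θ),
            Real.exp (-(lam * ((F.filter fun e => e ⊆ T).card : ℝ))) := by
          apply Finset.sum_le_sum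
          intro T hT
          rw [mem_filter] at hT
          apply Real.exp_le_exp.2
          have := mul_le_mul_of_nonneg_left hT.2.le hlampos.le
          linarith
      _ ≤ ∑ T ∈ powersetCard Q' W,
            Real.exp (-(lam * ((F.filter fun e => e ⊆ T).card : ℝ))) := by
          apply Finset.sum_le_sum_of_subset_of_nonneg (filter_subset _ _)
          intros
          exact Real.exp_nonneg _
  have hMGF : ∑ T ∈ powersetCard Q' W,
        Real.exp (-(lam * ((F.filter fun e => e ⊆ T).card : ℝ)))
      ≤ ((powersetCard Q' W).card : ℝ) *
        Real.exp (-(lam * ((μ+η) * C)) + Q' * ((3/16) * lam^2 * c^2)) := by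
    rw [div_le_iff₀ hPpos] at Hmi
    refine Hmi.trans ?_
    rw [mul_comm]
    apply mul_le_mul_of_nonneg_left _ hPpos.le
    apply Real.exp_le_exp.2
    have := mul_le_mul_of_nonneg_left havg hlampos.le
    linarith
  have hcomb := hBadle.trans hMGF
  have hnum : -(lam * ((μ+η) * C)) + Q' * ((3/16) * lam^2 * c^2) + lam * θ
      = -(5/16) * η^2 * Q' / r^2 := by
    rw [hθ]
    linear_combination ((3/16 : ℝ) * Q' * (lam * c + η / r)) * hlamc - (η/2) * hlamC
  rw [← hPcard, mul_comm]
  calc ((((powersetCard Q' W).filter fun T =>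
        ((F.filter fun e => e ⊆ T).card : ℝ) < θ).card : ℝ))
      = ((((powersetCard Q' W).filter fun T =>
        ((F.filter fun e => e ⊆ T).card : ℝ) < θ).card : ℝ)) * Real.exp (-(lam * θ))
          * Real.exp (lam * θ) := by
        rw [mul_assoc, ← Real.exp_add]
        simp
    _ ≤ (((powersetCard Q' W).card : ℝ) *
        Real.exp (-(lam * ((μ+η) * C)) + Q' * ((3/16) * lam^2 * c^2))) * Real.exp (lam * θ) := by
        apply mul_le_mul_of_nonneg_right hcomb (Real.exp_nonneg _)
    _ = ((powersetCard Q' W).card : ℝ) * Real.exp (-(5/16) * η^2 * Q' / r^2) := by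
        rw [mul_assoc, ← Real.exp_add, ← hnum]

section Link
variable {V : Type*} [Fintype V] [DecidableEq V]

lemma link_injOn (G : Finset (Finset V)) (X : Finset V) :
    Set.InjOn (fun e => e \ X) (G.filter fun e => X ⊆ e) := by
  intro e he e' he' h
  simp only [coe_filter, Set.mem_setOf_eq] at he he'
  have h1 := congrArg (fun t => t ∪ X) h
  simpa [sdiff_union_of_subset he.2, sdiff_union_of_subset he'.2] using h1

lemma link_card (G : Finset (Finset V)) (X : Finset V) :
    ((G.filter fun e => X ⊆ e).image (fun e => e \ X)).card
      = (G.filter fun e => X ⊆ e).card :=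
  Finset.card_image_of_injOn (link_injOn G X)

lemma link_mem (G : Finset (Finset V)) (k ℓ : ℕ) (hG : ∀ e ∈ G, e.card = k)
    (X : Finset V) (hX : X.card = ℓ) :
    ∀ f ∈ (G.filter fun e => X ⊆ e).image (fun e => e \ X),
      f ⊆ univ \ X ∧ f.card = k - ℓ := by
  intro f hf
  rw [mem_image] at hf
  obtain ⟨e, he, rfl⟩ := hf
  rw [mem_filter] at he
  constructor
  · exact sdiff_subset_sdiff (subset_univ e) Subset.rfl
  · rw [card_sdiff_of_subset he.2, hG e he.1, hX]

lemma link_deg_eq (G : Finset (Finset V)) (X S : Finset V) (hXS : X ⊆ S) :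
    (G.filter fun e => X ⊆ e ∧ e ⊆ S).card
      = (((G.filter fun e => X ⊆ e).image (fun e => e \ X)).filter
          fun f => f ⊆ S \ X).card := by
  rw [Finset.filter_image]
  rw [Finset.card_image_of_injOn ((link_injOn G X).mono
    (Finset.coe_subset.2 (Finset.filter_subset _ _)))]
  rw [filter_filter]
  apply Finset.card_nbij' id id
  · intro e he
    simp only [mem_coe, mem_filter, Function.comp] at he ⊢
    refine ⟨he.1, he.2.1, ?_⟩
    exact sdiff_subset_sdiff he.2.2 Subset.rfl
  · intro e he
    simp only [mem_coe, mem_filter, Function.comp] at he ⊢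
    refine ⟨he.1, he.2.1, ?_⟩
    calc e = e \ X ∪ X := (sdiff_union_of_subset he.2.1).symm
      _ ⊆ S \ X ∪ X := union_subset_union he.2.2 Subset.rfl
      _ = S := sdiff_union_of_subset hXS
  · intro _ _; rfl
  · intro _ _; rfl

lemma deg_card_le (G : Finset (Finset V)) (k ℓ : ℕ) (hG : ∀ e ∈ G, e.card = k)
    (X : Finset V) (hX : X.card = ℓ) :
    (G.filter fun e => X ⊆ e).card ≤ (Fintype.card V - ℓ).choose (k - ℓ) := by
  have h1 : ((powersetCard (k-ℓ) ((univ : Finset V) \ X)).card)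
      = (Fintype.card V - ℓ).choose (k-ℓ) := by
    rw [card_powersetCard, card_sdiff_of_subset (subset_univ X), card_univ, hX]
  rw [← h1]
  apply Finset.card_le_card_of_injOn (fun e => e \ X)
  · intro e he
    rw [mem_coe, mem_filter] at he
    rw [mem_coe, mem_powersetCard]
    exact ⟨sdiff_subset_sdiff (subset_univ e) Subset.rfl, by rw [card_sdiff_of_subset he.2, hG e he.1, hX]⟩
  · exact link_injOn G X

lemma card_slice (X : Finset V) (ℓ Q : ℕ) (hX : X.card = ℓ) (hℓQ : ℓ ≤ Q)
    (p : Finset V → Prop) :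
    (((powersetCard Q (univ : Finset V)).filter fun S => X ⊆ S ∧ p (S \ X)).card)
      = ((powersetCard (Q - ℓ) ((univ : Finset V) \ X)).filter fun T => p T).card := by
  apply Finset.card_nbij' (fun S => S \ X) (fun T => T ∪ X)
  · intro S hS
    simp only [mem_coe, mem_filter, mem_powersetCard] at hS ⊢
    obtain ⟨⟨hSu, hSc⟩, hXS, hp⟩ := hS
    exact ⟨⟨sdiff_subset_sdiff (subset_univ S) Subset.rfl, by rw [card_sdiff_of_subset hXS, hSc, hX]⟩, hp⟩
  · intro T hT
    simp only [mem_coe, mem_filter, mem_powersetCard] at hT ⊢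
    obtain ⟨⟨hTu, hTc⟩, hp⟩ := hT
    have hdisj : Disjoint T X := disjoint_of_subset_left hTu sdiff_disjoint
    have hTX : (T ∪ X) \ X = T := by
      rw [union_sdiff_right, sdiff_eq_self_of_disjoint hdisj]
    refine ⟨⟨subset_univ _, ?_⟩, subset_union_right, by rwa [hTX]⟩
    rw [card_union_of_disjoint hdisj, hTc, hX]
    omega
  · intro S hS
    simp only [mem_coe, mem_filter, mem_powersetCard] at hS
    exact sdiff_union_of_subset hS.2.1
  · intro T hT
    simp only [mem_coe, mem_filter, mem_powersetCard] at hT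
    have hdisj : Disjoint T X := disjoint_of_subset_left hT.1.1 sdiff_disjoint
    dsimp only
    rw [union_sdiff_right, sdiff_eq_self_of_disjoint hdisj]

end Link


lemma exp_compare (k ℓ Q : ℕ) (η : ℝ) (hℓk : ℓ < k) (hkQ : k ≤ Q) :
    Real.exp (-(5/16) * η^2 * ((Q - ℓ : ℕ):ℝ) / ((k - ℓ : ℕ):ℝ)^2)
      ≤ Real.exp (-(η ^ 2) * Q / (4 * k ^ 2)) := by
  have hℓQ : ℓ ≤ Q := le_trans hℓk.le hkQ
  have hkR : (0:ℝ) < (k:ℝ) := by exact_mod_cast lt_of_le_of_lt (Nat.zero_le ℓ) hℓk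
  have hkℓR : (0:ℝ) < (k:ℝ) - (ℓ:ℝ) := by
    have : (ℓ:ℝ) < (k:ℝ) := by exact_mod_cast hℓk
    linarith
  apply Real.exp_le_exp.2
  have hQc : ((Q - ℓ : ℕ):ℝ) = (Q:ℝ) - ℓ := by rw [Nat.cast_sub hℓQ]
  have hkc : ((k - ℓ : ℕ):ℝ) = (k:ℝ) - ℓ := by rw [Nat.cast_sub hℓk.le]
  rw [hQc, hkc]
  have hbase : ((k:ℝ) - ℓ)^2 * Q ≤ (k:ℝ)^2 * ((Q:ℝ) - ℓ) := by
    have hQk : (k:ℝ) ≤ (Q:ℝ) := by exact_mod_cast hkQ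
    have hl0 : (0:ℝ) ≤ (ℓ:ℝ) := by positivity
    nlinarith [mul_nonneg (mul_nonneg hl0 hkR.le) (sub_nonneg.2 hQk),
      mul_nonneg (mul_nonneg hl0 (by positivity : (0:ℝ) ≤ (Q:ℝ))) hkℓR.le]
  rw [div_le_div_iff₀ (by positivity) (by positivity)]
  have h5 := mul_le_mul_of_nonneg_left hbase (sq_nonneg η)
  have hQl0 : (0:ℝ) ≤ (Q:ℝ) - ℓ := by
    have : (ℓ:ℝ) ≤ (Q:ℝ) := by exact_mod_cast hℓQ
    linarith
  have h6 : (0:ℝ) ≤ η^2 * ((k:ℝ)^2 * ((Q:ℝ)-ℓ)) := by positivity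
  nlinarith [h5, h6]

end AuxiliaryLemmas

open scoped Classical in
/-- If at most `δ·(n choose ℓ)` of the `ℓ`-sets of vertices of a `k`-graph `G`
have degree less than `(μ + η)·((n-ℓ) choose (k-ℓ))`, and `Q ≥ 2ℓ`, then the
number of `Q`-subsets `S` of vertices for which the induced subgraph `G[S]` has
minimum `ℓ`-degree at least `(μ + η/2)·((Q-ℓ) choose (k-ℓ))` is at least a
`1 − (Q choose ℓ)·(δ + e^{−η²Q/(4k²)})` proportion of all `Q`-subsets. -/
theorem random_subset_codegree {V : Type*} [Fintype V] [DecidableEq V]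
    (k ℓ Q n : ℕ) (hn : n = Fintype.card V)
    (G : Finset (Finset V)) (hG : ∀ e ∈ G, e.card = k)
    (δ μ η : ℝ) (hδ : 0 < δ) (hμ : 0 < μ) (hη : 0 < η)
    (hℓk : ℓ < k) (hkQ : k ≤ Q) (hQ : 2 * ℓ ≤ Q)
    (hbad : (((Finset.powersetCard ℓ (Finset.univ : Finset V)).filter fun X =>
        ((G.filter fun e => X ⊆ e).card : ℝ) <
          (μ + η) * ((n - ℓ).choose (k - ℓ))).card : ℝ) ≤ δ * n.choose ℓ) :
    (1 - (Q.choose ℓ : ℝ) * (δ + Real.exp (-(η ^ 2) * Q / (4 * k ^ 2)))) *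
        n.choose Q ≤
      (((Finset.powersetCard Q (Finset.univ : Finset V)).filter fun S =>
        ∀ X ∈ Finset.powersetCard ℓ S,
          (μ + η / 2) * ((Q - ℓ).choose (k - ℓ)) ≤
            ((G.filter fun e => X ⊆ e ∧ e ⊆ S).card : ℝ)).card : ℝ) := by
  have hℓQ : ℓ ≤ Q := by omega
  set ε := Real.exp (-(η ^ 2) * Q / (4 * k ^ 2)) with hε
  have hεpos : (0:ℝ) < ε := Real.exp_pos _
  by_cases hQn : Q ≤ n
  swap
  · have h0 : (n.choose Q : ℝ) = 0 := by
      have : n.choose Q = 0 := Nat.choose_eq_zero_of_lt (by omega)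
      exact_mod_cast this
    rw [h0, mul_zero]
    positivity
  have hkn : k ≤ n := hkQ.trans hQn
  have hℓn : ℓ ≤ n := hℓQ.trans hQn
  have hCQl1 : (1:ℝ) ≤ (Q.choose ℓ : ℝ) := by exact_mod_cast Nat.choose_pos hℓQ
  have hcard_univ : (univ : Finset V).card = n := by rw [card_univ, ← hn]
  have hNQ : ((powersetCard Q (univ : Finset V)).card) = n.choose Q := by
    rw [card_powersetCard, hcard_univ]
  by_cases hμη : μ + η ≤ 1
  swap
  · -- trivial case μ + η > 1 : all ℓ-sets are bad, δ ≥ 1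
    have hC0 : (0:ℝ) < (((n-ℓ).choose (k-ℓ) : ℕ) : ℝ) := by
      exact_mod_cast Nat.choose_pos (by omega : k - ℓ ≤ n - ℓ)
    have hall : ((powersetCard ℓ (univ : Finset V)).filter fun X =>
        ((G.filter fun e => X ⊆ e).card : ℝ) < (μ + η) * ((n - ℓ).choose (k - ℓ)))
          = powersetCard ℓ (univ : Finset V) := by
      apply filter_true_of_mem
      intro X hX
      rw [mem_powersetCard] at hX
      have h1 : (G.filter fun e => X ⊆ e).card ≤ (n-ℓ).choose (k-ℓ) := by
        have := deg_card_le G k ℓ hG X hX.2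
        rwa [← hn] at this
      have h2 : ((G.filter fun e => X ⊆ e).card : ℝ) ≤ (((n-ℓ).choose (k-ℓ) : ℕ) : ℝ) := by
        exact_mod_cast h1
      nlinarith
    rw [hall, card_powersetCard, hcard_univ] at hbad
    have hnl0 : (0:ℝ) < (n.choose ℓ : ℝ) := by exact_mod_cast Nat.choose_pos hℓn
    have hδ1 : (1:ℝ) ≤ δ := by nlinarith
    have hfac : (1 - (Q.choose ℓ : ℝ) * (δ + ε)) ≤ 0 := by nlinarith
    calc (1 - (Q.choose ℓ : ℝ) * (δ + ε)) * n.choose Q ≤ 0 :=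
          mul_nonpos_of_nonpos_of_nonneg hfac (by positivity)
      _ ≤ _ := by positivity
  -- MAIN CASE
  have hη1 : η ≤ 1 := by linarith
  have hsplit : ((powersetCard Q (univ : Finset V)).filter fun S =>
        ∀ X ∈ Finset.powersetCard ℓ S,
          (μ + η / 2) * ((Q - ℓ).choose (k - ℓ)) ≤
            ((G.filter fun e => X ⊆ e ∧ e ⊆ S).card : ℝ)).card
      + ((powersetCard Q (univ : Finset V)).filter fun S =>
        ¬ ∀ X ∈ Finset.powersetCard ℓ S,
          (μ + η / 2) * ((Q - ℓ).choose (k - ℓ)) ≤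
            ((G.filter fun e => X ⊆ e ∧ e ⊆ S).card : ℝ)).card
      = n.choose Q := by
    rw [Finset.card_filter_add_card_filter_not, hNQ]
  suffices hBS : (((powersetCard Q (univ : Finset V)).filter fun S =>
        ¬ ∀ X ∈ Finset.powersetCard ℓ S,
          (μ + η / 2) * ((Q - ℓ).choose (k - ℓ)) ≤
            ((G.filter fun e => X ⊆ e ∧ e ⊆ S).card : ℝ)).card : ℝ)
      ≤ (Q.choose ℓ : ℝ) * (δ + ε) * n.choose Q by
    have hc := congrArg (Nat.cast : ℕ → ℝ) hsplit
    push_cast at hc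
    linarith
  -- covering by the choice of a witness X
  have hcover : ((powersetCard Q (univ : Finset V)).filter fun S =>
        ¬ ∀ X ∈ Finset.powersetCard ℓ S,
          (μ + η / 2) * ((Q - ℓ).choose (k - ℓ)) ≤
            ((G.filter fun e => X ⊆ e ∧ e ⊆ S).card : ℝ))
      ⊆ (powersetCard ℓ (univ : Finset V)).biUnion (fun X =>
          (powersetCard Q (univ : Finset V)).filter (fun S => X ⊆ S ∧
            ((G.filter fun e => X ⊆ e ∧ e ⊆ S).card : ℝ) <
              (μ + η / 2) * ((Q - ℓ).choose (k - ℓ)))) := by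
    intro S hS
    rw [mem_filter] at hS
    obtain ⟨hSP, hnS⟩ := hS
    push_neg at hnS
    obtain ⟨X, hXS, hlt⟩ := hnS
    rw [mem_powersetCard] at hXS
    rw [mem_biUnion]
    refine ⟨X, ?_, ?_⟩
    · rw [mem_powersetCard]; exact ⟨subset_univ X, hXS.2⟩
    · rw [mem_filter]; exact ⟨hSP, hXS.1, hlt⟩
  have hcard1 : (((powersetCard Q (univ : Finset V)).filter fun S =>
        ¬ ∀ X ∈ Finset.powersetCard ℓ S,
          (μ + η / 2) * ((Q - ℓ).choose (k - ℓ)) ≤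
            ((G.filter fun e => X ⊆ e ∧ e ⊆ S).card : ℝ)).card : ℝ)
      ≤ ∑ X ∈ powersetCard ℓ (univ : Finset V),
          (((powersetCard Q (univ : Finset V)).filter (fun S => X ⊆ S ∧
            ((G.filter fun e => X ⊆ e ∧ e ⊆ S).card : ℝ) <
              (μ + η / 2) * ((Q - ℓ).choose (k - ℓ)))).card : ℝ) := by
    have h1 := (Finset.card_le_card hcover).trans (Finset.card_biUnion_le)
    exact_mod_cast h1
  -- uniform bound for any X (used for bad X)
  have hXany : ∀ X ∈ powersetCard ℓ (univ : Finset V),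
      (((powersetCard Q (univ : Finset V)).filter (fun S => X ⊆ S ∧
        ((G.filter fun e => X ⊆ e ∧ e ⊆ S).card : ℝ) <
          (μ + η / 2) * ((Q - ℓ).choose (k - ℓ)))).card : ℝ)
      ≤ (((n-ℓ).choose (Q-ℓ) : ℕ) : ℝ) := by
    intro X hX
    rw [mem_powersetCard] at hX
    have h2 := Finset.card_le_card (Finset.monotone_filter_right
      (powersetCard Q (univ : Finset V))
      (fun S _ (h : X ⊆ S ∧ ((G.filter fun e => X ⊆ e ∧ e ⊆ S).card : ℝ) <
        (μ + η / 2) * ((Q - ℓ).choose (k - ℓ))) => h.1))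
    have h3 : ((powersetCard Q (univ : Finset V)).filter (fun S => X ⊆ S)).card
        = (n-ℓ).choose (Q-ℓ) := by
      rw [card_superset_filter (univ : Finset V) X (subset_univ X) (by rw [hX.2]; exact hℓQ),
        hcard_univ, hX.2]
    calc (((powersetCard Q (univ : Finset V)).filter (fun S => X ⊆ S ∧
          ((G.filter fun e => X ⊆ e ∧ e ⊆ S).card : ℝ) <
            (μ + η / 2) * ((Q - ℓ).choose (k - ℓ)))).card : ℝ)
        ≤ (((powersetCard Q (univ : Finset V)).filter (fun S => X ⊆ S)).card : ℝ) := by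
          exact_mod_cast h2
      _ = (((n-ℓ).choose (Q-ℓ) : ℕ) : ℝ) := by rw [h3]
  have hexp_le : Real.exp (-(5/16) * η^2 * ((Q - ℓ : ℕ):ℝ) / ((k - ℓ : ℕ):ℝ)^2) ≤ ε :=
    exp_compare k ℓ Q η hℓk hkQ
  -- bound for good X via the concentration lemma
  have hXgood : ∀ X ∈ powersetCard ℓ (univ : Finset V),
      ¬ (((G.filter fun e => X ⊆ e).card : ℝ) < (μ + η) * ((n - ℓ).choose (k - ℓ))) →
      (((powersetCard Q (univ : Finset V)).filter (fun S => X ⊆ S ∧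
        ((G.filter fun e => X ⊆ e ∧ e ⊆ S).card : ℝ) <
          (μ + η / 2) * ((Q - ℓ).choose (k - ℓ)))).card : ℝ)
      ≤ ε * (((n-ℓ).choose (Q-ℓ) : ℕ) : ℝ) := by
    intro X hX hgood
    rw [mem_powersetCard] at hX
    rw [not_lt] at hgood
    have hWcard : ((univ : Finset V) \ X).card = n - ℓ := by
      rw [card_sdiff_of_subset (subset_univ X), hcard_univ, hX.2]
    have hpredeq : ((powersetCard Q (univ : Finset V)).filter (fun S => X ⊆ S ∧
          ((G.filter fun e => X ⊆ e ∧ e ⊆ S).card : ℝ) <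
            (μ + η / 2) * ((Q - ℓ).choose (k - ℓ))))
        = ((powersetCard Q (univ : Finset V)).filter (fun S => X ⊆ S ∧
          (((((G.filter fun e => X ⊆ e).image (fun e => e \ X)).filter
              fun f => f ⊆ S \ X).card : ℝ)
             < (μ + η / 2) * ((Q - ℓ).choose (k - ℓ))))) := by
      apply filter_congr
      intro S _
      constructor
      · rintro ⟨h1, h2⟩
        refine ⟨h1, ?_⟩
        have := link_deg_eq G X S h1
        rw [← this]
        exact h2
      · rintro ⟨h1, h2⟩
        refine ⟨h1, ?_⟩
        have := link_deg_eq G X S h1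
        rw [this]
        exact h2
    rw [hpredeq]
    have hslice := card_slice X ℓ Q hX.2 hℓQ (fun T =>
      (((((G.filter fun e => X ⊆ e).image (fun e => e \ X)).filter
        fun f => f ⊆ T).card : ℝ) < (μ + η / 2) * ((Q - ℓ).choose (k - ℓ))))
    rw [hslice]
    have hdeg' : (μ + η) * ((((univ : Finset V) \ X).card).choose (k - ℓ) : ℝ)
        ≤ (((G.filter fun e => X ⊆ e).image (fun e => e \ X)).card : ℝ) := by
      rw [hWcard, link_card]
      exact hgood
    have htb := tail_bound ((univ : Finset V) \ X)
      ((G.filter fun e => X ⊆ e).image (fun e => e \ X)) (k - ℓ) (Q - ℓ) μ η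
      (by omega) (by omega) (by rw [hWcard]; omega)
      (link_mem G k ℓ hG X hX.2) hμ.le hη hη1 hdeg'
    rw [hWcard] at htb
    refine htb.trans ?_
    apply mul_le_mul_of_nonneg_right ?_ (by positivity)
    exact hexp_le
  -- summation over all X
  have hsum : ∑ X ∈ powersetCard ℓ (univ : Finset V),
      (((powersetCard Q (univ : Finset V)).filter (fun S => X ⊆ S ∧
        ((G.filter fun e => X ⊆ e ∧ e ⊆ S).card : ℝ) <
          (μ + η / 2) * ((Q - ℓ).choose (k - ℓ)))).card : ℝ)
      ≤ (δ + ε) * (n.choose ℓ : ℝ) * (((n-ℓ).choose (Q-ℓ) : ℕ) : ℝ) := by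
    rw [← Finset.sum_filter_add_sum_filter_not (powersetCard ℓ (univ : Finset V))
      (fun X => ((G.filter fun e => X ⊆ e).card : ℝ) <
        (μ + η) * ((n - ℓ).choose (k - ℓ)))]
    have hCnn : (0:ℝ) ≤ (((n-ℓ).choose (Q-ℓ) : ℕ) : ℝ) := by positivity
    have hb1 : ∑ X ∈ (powersetCard ℓ (univ : Finset V)).filter
          (fun X => ((G.filter fun e => X ⊆ e).card : ℝ) <
            (μ + η) * ((n - ℓ).choose (k - ℓ))),
        (((powersetCard Q (univ : Finset V)).filter (fun S => X ⊆ S ∧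
          ((G.filter fun e => X ⊆ e ∧ e ⊆ S).card : ℝ) <
            (μ + η / 2) * ((Q - ℓ).choose (k - ℓ)))).card : ℝ)
        ≤ (δ * (n.choose ℓ : ℝ)) * (((n-ℓ).choose (Q-ℓ) : ℕ) : ℝ) := by
      calc _ ≤ ∑ _X ∈ (powersetCard ℓ (univ : Finset V)).filter
            (fun X => ((G.filter fun e => X ⊆ e).card : ℝ) <
              (μ + η) * ((n - ℓ).choose (k - ℓ))), (((n-ℓ).choose (Q-ℓ) : ℕ) : ℝ) :=
            Finset.sum_le_sum (fun X hX => hXany X (Finset.mem_of_mem_filter X hX))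
        _ = (((powersetCard ℓ (univ : Finset V)).filter
            (fun X => ((G.filter fun e => X ⊆ e).card : ℝ) <
              (μ + η) * ((n - ℓ).choose (k - ℓ)))).card : ℝ) *
            (((n-ℓ).choose (Q-ℓ) : ℕ) : ℝ) := by
            rw [Finset.sum_const, nsmul_eq_mul]
        _ ≤ (δ * (n.choose ℓ : ℝ)) * (((n-ℓ).choose (Q-ℓ) : ℕ) : ℝ) :=
            mul_le_mul_of_nonneg_right hbad hCnn
    have hb2 : ∑ X ∈ (powersetCard ℓ (univ : Finset V)).filter
          (fun X => ¬ (((G.filter fun e => X ⊆ e).card : ℝ) <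
            (μ + η) * ((n - ℓ).choose (k - ℓ)))),
        (((powersetCard Q (univ : Finset V)).filter (fun S => X ⊆ S ∧
          ((G.filter fun e => X ⊆ e ∧ e ⊆ S).card : ℝ) <
            (μ + η / 2) * ((Q - ℓ).choose (k - ℓ)))).card : ℝ)
        ≤ (n.choose ℓ : ℝ) * (ε * (((n-ℓ).choose (Q-ℓ) : ℕ) : ℝ)) := by
      calc _ ≤ ∑ _X ∈ (powersetCard ℓ (univ : Finset V)).filter
            (fun X => ¬ (((G.filter fun e => X ⊆ e).card : ℝ) <
              (μ + η) * ((n - ℓ).choose (k - ℓ)))),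
            (ε * (((n-ℓ).choose (Q-ℓ) : ℕ) : ℝ)) := by
            apply Finset.sum_le_sum
            intro X hX
            rw [mem_filter] at hX
            exact hXgood X hX.1 hX.2
        _ = (((powersetCard ℓ (univ : Finset V)).filter
            (fun X => ¬ (((G.filter fun e => X ⊆ e).card : ℝ) <
              (μ + η) * ((n - ℓ).choose (k - ℓ))))).card : ℝ) *
            (ε * (((n-ℓ).choose (Q-ℓ) : ℕ) : ℝ)) := by
            rw [Finset.sum_const, nsmul_eq_mul]
        _ ≤ (n.choose ℓ : ℝ) * (ε * (((n-ℓ).choose (Q-ℓ) : ℕ) : ℝ)) := by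
            apply mul_le_mul_of_nonneg_right ?_ (by positivity)
            have := Finset.card_le_card (Finset.filter_subset
              (fun X => ¬ (((G.filter fun e => X ⊆ e).card : ℝ) <
                (μ + η) * ((n - ℓ).choose (k - ℓ))))
              (powersetCard ℓ (univ : Finset V)))
            rw [card_powersetCard, hcard_univ] at this
            exact_mod_cast this
    linarith
  -- finish
  have hid2 : (n.choose ℓ : ℝ) * (((n-ℓ).choose (Q-ℓ) : ℕ) : ℝ)
      = (n.choose Q : ℝ) * (Q.choose ℓ : ℝ) := by
    exact_mod_cast congrArg (Nat.cast : ℕ → ℝ) (Nat.choose_mul hℓQ).symm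
  refine hcard1.trans (hsum.trans (le_of_eq ?_))
  rw [mul_assoc, hid2]
  ring
end
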